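/- arXiv:2111.01509 — 5 statements merged into one kernel-verified Lean document; each statement's English description precedes it below -/
import Mathlib

section
/- Let $m \geq 1$, $e > 0$ a real number, and $\mathbf{e} = (e_1,\dots,e_m) \in \mathbb{Z}_{\geq 0}^m$. For $B > 3$ and $1 \leq \lambda \leq B$, define $S(B,\lambda) = \sum g_1^{e_1/e - 1}\cdots g_m^{e_m/e - 1}$, where the sum runs over tuples $(g_1,\dots,g_m) \in \mathbb{N}_{\geq 1}^m$ with $\prod_{i=1}^m g_i^{e_i} \leq B/\lambda$ and $\max_i g_i \leq B$. Then there is a constant $C$ depending only on $m, e, \mathbf{e}$ (not on $\lambda$) such that $S(B,\lambda) \leq C \max\big((\log B)^m, (B/\lambda)^{1/e} (\log B)^{m-1}\big)$. -/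
open scoped Classical
open Finset Real

private lemma one_lt_log {B : ℝ} (hB : 3 < B) : 1 < Real.log B := by
  rw [Real.lt_log_iff_exp_lt (by linarith)]
  have := Real.exp_one_lt_d9
  linarith

private lemma sum_inv_le (N : ℕ) : ∑ a ∈ Finset.Icc 1 N, ((a : ℝ))⁻¹ ≤ 1 + Real.log N := by
  have h := harmonic_le_one_add_log N
  have h2 : ((harmonic N : ℚ) : ℝ) = ∑ a ∈ Finset.Icc 1 N, ((a : ℝ))⁻¹ := by
    rw [harmonic_eq_sum_Icc]
    push_cast
    rfl
  rw [h2] at h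
  exact h

private lemma rpow_step {β : ℝ} (hβ0 : 0 < β) (hβ1 : β ≤ 1) {a : ℕ} (ha : 1 ≤ a) :
    (a : ℝ) ^ (β - 1) ≤ ((a : ℝ) ^ β - ((a : ℝ) - 1) ^ β) / β := by
  have hx : (1 : ℝ) ≤ (a : ℝ) := by exact_mod_cast ha
  have hx0 : (0 : ℝ) < a := by linarith
  have hane : (a : ℝ) ≠ 0 := ne_of_gt hx0
  set t : ℝ := ((a : ℝ) - 1) / a with ht
  have ht0 : 0 ≤ t := div_nonneg (by linarith) (by linarith)
  have hgm : t ^ β * (1 : ℝ) ^ (1 - β) ≤ β * t + (1 - β) * 1 :=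
    Real.geom_mean_le_arith_mean2_weighted (le_of_lt hβ0) (by linarith) ht0 zero_le_one
      (by ring)
  rw [Real.one_rpow, mul_one, mul_one] at hgm
  have hat : ((a : ℝ) - 1) = (a : ℝ) * t := by
    rw [ht]
    field_simp
  have h1 : ((a : ℝ) - 1) ^ β = (a : ℝ) ^ β * t ^ β := by
    rw [hat, Real.mul_rpow (le_of_lt hx0) ht0]
  have h2 : (a : ℝ) ^ (β - 1) = (a : ℝ) ^ β / a := by
    rw [Real.rpow_sub hx0, Real.rpow_one]
  have hab : 0 ≤ (a : ℝ) ^ β := Real.rpow_nonneg (le_of_lt hx0) β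
  have h1t : 1 - t = 1 / a := by
    rw [ht]
    field_simp
    ring
  have hkey : β * (1 / (a : ℝ)) ≤ 1 - t ^ β := by
    rw [← h1t]
    nlinarith
  rw [le_div_iff₀ hβ0]
  calc (a : ℝ) ^ (β - 1) * β = (a : ℝ) ^ β * (β * (1 / a)) := by rw [h2]; ring
    _ ≤ (a : ℝ) ^ β * (1 - t ^ β) := mul_le_mul_of_nonneg_left hkey hab
    _ = (a : ℝ) ^ β - ((a : ℝ) - 1) ^ β := by rw [h1]; ring

private lemma sum_rpow_le {β : ℝ} (hβ0 : 0 < β) (hβ1 : β ≤ 1) (M : ℕ) :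
    ∑ a ∈ Finset.Icc 1 M, (a : ℝ) ^ (β - 1) ≤ (M : ℝ) ^ β / β := by
  have htel : ∑ a ∈ Finset.Icc 1 M, (((a : ℝ)) ^ β - ((a : ℝ) - 1) ^ β) = (M : ℝ) ^ β := by
    induction M with
    | zero => simp [Real.zero_rpow (ne_of_gt hβ0)]
    | succ k ih =>
        rw [Finset.sum_Icc_succ_top (by omega : 1 ≤ k + 1), ih]
        have h1 : ((k + 1 : ℕ) : ℝ) - 1 = (k : ℝ) := by push_cast; ring
        rw [h1]
        push_cast
        ring
  calc ∑ a ∈ Finset.Icc 1 M, (a : ℝ) ^ (β - 1)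
      ≤ ∑ a ∈ Finset.Icc 1 M, (((a : ℝ)) ^ β - ((a : ℝ) - 1) ^ β) / β :=
        Finset.sum_le_sum fun a ha => rpow_step hβ0 hβ1 (Finset.mem_Icc.mp ha).1
    _ = (∑ a ∈ Finset.Icc 1 M, (((a : ℝ)) ^ β - ((a : ℝ) - 1) ^ β)) / β :=
        (Finset.sum_div _ _ _).symm
    _ = (M : ℝ) ^ β / β := by rw [htel]

private lemma single_bound (e : ℝ) (he : 0 < e) (e0 : ℕ) :
    ∃ c : ℝ, 0 < c ∧ ∀ (B X : ℝ) (N : ℕ), 3 < B → 1 ≤ X → (N : ℝ) ≤ B →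
      ∑ a ∈ (Finset.Icc 1 N).filter (fun a : ℕ => ((a : ℝ)) ^ e0 ≤ X),
          (a : ℝ) ^ ((e0 : ℝ) / e - 1)
        ≤ c * (Real.log B + X ^ (1 / e)) := by
  rcases Nat.eq_zero_or_pos e0 with h0 | hpos
  · refine ⟨2, by norm_num, fun B X N hB hX hNB => ?_⟩
    subst h0
    have hL := one_lt_log hB
    have hY : (0 : ℝ) ≤ X ^ (1 / e) := Real.rpow_nonneg (by linarith) _
    have hfilter : (Finset.Icc 1 N).filter (fun a : ℕ => ((a : ℝ)) ^ (0 : ℕ) ≤ X) =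
        Finset.Icc 1 N := by
      apply Finset.filter_true_of_mem
      intro a _
      simpa using hX
    rw [hfilter]
    have hlogN : Real.log N ≤ Real.log B := by
      rcases Nat.eq_zero_or_pos N with h | h
      · subst h
        simp only [Nat.cast_zero, Real.log_zero]
        linarith
      · exact Real.log_le_log (by exact_mod_cast h) hNB
    calc ∑ a ∈ Finset.Icc 1 N, (a : ℝ) ^ (((0 : ℕ) : ℝ) / e - 1)
        = ∑ a ∈ Finset.Icc 1 N, ((a : ℝ))⁻¹ := by
          apply Finset.sum_congr rfl
          intro a _
          rw [show ((0 : ℕ) : ℝ) / e - 1 = -1 by simp, Real.rpow_neg_one]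
      _ ≤ 1 + Real.log N := sum_inv_le N
      _ ≤ 2 * (Real.log B + X ^ (1 / e)) := by nlinarith
  · refine ⟨1 + e / e0, by positivity, fun B X N hB hX hNB => ?_⟩
    have he0 : (0 : ℝ) < e0 := by exact_mod_cast hpos
    set β : ℝ := (e0 : ℝ) / e with hβdef
    have hβ : 0 < β := by positivity
    have hX0 : (0 : ℝ) < X := by linarith
    have hL : (1 : ℝ) < Real.log B := one_lt_log hB
    have hY : (0 : ℝ) ≤ X ^ (1 / e) := Real.rpow_nonneg (by linarith) _
    set M := ⌊X ^ (1 / (e0 : ℝ))⌋₊ with hM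
    have hsub : (Finset.Icc 1 N).filter (fun a : ℕ => ((a : ℝ)) ^ e0 ≤ X) ⊆
        Finset.Icc 1 M := by
      intro a ha
      rw [Finset.mem_filter, Finset.mem_Icc] at ha
      obtain ⟨⟨h1a, _⟩, hle⟩ := ha
      rw [Finset.mem_Icc]
      refine ⟨h1a, Nat.le_floor ?_⟩
      have ha0 : (0 : ℝ) ≤ a := Nat.cast_nonneg a
      have h := Real.rpow_le_rpow (by positivity) hle (by positivity : (0:ℝ) ≤ 1 / (e0 : ℝ))
      rwa [← Real.rpow_natCast (a : ℝ) e0, ← Real.rpow_mul ha0, mul_one_div,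
        div_self (ne_of_gt he0), Real.rpow_one] at h
    have hsum : ∑ a ∈ (Finset.Icc 1 N).filter (fun a : ℕ => ((a : ℝ)) ^ e0 ≤ X),
        (a : ℝ) ^ (β - 1) ≤ ∑ a ∈ Finset.Icc 1 M, (a : ℝ) ^ (β - 1) :=
      Finset.sum_le_sum_of_subset_of_nonneg hsub
        (fun a _ _ => Real.rpow_nonneg (Nat.cast_nonneg a) _)
    have hMX : (M : ℝ) ^ β ≤ X ^ (1 / e) := by
      have hMle : (M : ℝ) ≤ X ^ (1 / (e0 : ℝ)) := Nat.floor_le (by positivity)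
      have h := Real.rpow_le_rpow (Nat.cast_nonneg M) hMle (le_of_lt hβ)
      have harith : (1 / (e0 : ℝ)) * β = 1 / e := by
        rw [hβdef]; field_simp
      rwa [← Real.rpow_mul (le_of_lt hX0), harith] at h
    have hfin : (M : ℝ) ^ β ≤ (1 + e / e0) * (Real.log B + X ^ (1 / e)) := by
      nlinarith [div_pos he he0]
    rcases le_or_gt β 1 with hβ1 | hβ1
    · have hsle := sum_rpow_le hβ hβ1 M
      have hinv : (1 : ℝ) / β = e / e0 := by rw [hβdef]; field_simp
      have hstep : (M : ℝ) ^ β / β = (e / e0) * (M : ℝ) ^ β := by rw [← hinv]; ring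
      calc ∑ a ∈ (Finset.Icc 1 N).filter (fun a : ℕ => ((a : ℝ)) ^ e0 ≤ X),
            (a : ℝ) ^ (β - 1) ≤ (M : ℝ) ^ β / β := le_trans hsum hsle
        _ = (e / e0) * (M : ℝ) ^ β := hstep
        _ ≤ (e / e0) * (X ^ (1 / e)) := mul_le_mul_of_nonneg_left hMX (by positivity)
        _ ≤ (1 + e / e0) * (Real.log B + X ^ (1 / e)) := by nlinarith [div_pos he he0]
    · rcases Nat.eq_zero_or_pos M with hM0 | hM0
      · have hempty : Finset.Icc 1 0 = (∅ : Finset ℕ) := Finset.Icc_eq_empty (by omega)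
        rw [hM0, hempty, Finset.sum_empty] at hsum
        have hrhs : (0:ℝ) ≤ (1 + e / e0) * (Real.log B + X ^ (1 / e)) := by
          apply mul_nonneg (by positivity)
          nlinarith
        linarith
      · have hM0R : (0 : ℝ) < M := by exact_mod_cast hM0
        have hterm : ∀ a ∈ Finset.Icc 1 M, (a : ℝ) ^ (β - 1) ≤ (M : ℝ) ^ (β - 1) := by
          intro a ha
          exact Real.rpow_le_rpow (Nat.cast_nonneg a)
            (by exact_mod_cast (Finset.mem_Icc.mp ha).2) (by linarith)
        have hcard : ∑ a ∈ Finset.Icc 1 M, (a : ℝ) ^ (β - 1)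
            ≤ (M : ℝ) * (M : ℝ) ^ (β - 1) := by
          calc ∑ a ∈ Finset.Icc 1 M, (a : ℝ) ^ (β - 1)
              ≤ ∑ _a ∈ Finset.Icc 1 M, (M : ℝ) ^ (β - 1) := Finset.sum_le_sum hterm
            _ = ((Finset.Icc 1 M).card : ℝ) * (M : ℝ) ^ (β - 1) := by
                rw [Finset.sum_const, nsmul_eq_mul]
            _ = (M : ℝ) * (M : ℝ) ^ (β - 1) := by
                rw [Nat.card_Icc]; norm_num
        have hMM : (M : ℝ) * (M : ℝ) ^ (β - 1) = (M : ℝ) ^ β := by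
          nth_rewrite 1 [← Real.rpow_one (M : ℝ)]
          rw [← Real.rpow_add hM0R]
          norm_num
        calc ∑ a ∈ (Finset.Icc 1 N).filter (fun a : ℕ => ((a : ℝ)) ^ e0 ≤ X),
              (a : ℝ) ^ (β - 1) ≤ (M : ℝ) * (M : ℝ) ^ (β - 1) := le_trans hsum hcard
          _ = (M : ℝ) ^ β := hMM
          _ ≤ (1 + e / e0) * (Real.log B + X ^ (1 / e)) := hfin

private lemma split_sum {n : ℕ} (N : ℕ) (P : (Fin (n + 1) → ℕ) → Prop) [DecidablePred P]
    (f : (Fin (n + 1) → ℕ) → ℝ) :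
    ∑ g ∈ (Fintype.piFinset fun _ : Fin (n + 1) => Finset.Icc 1 N).filter P, f g
      = ∑ a ∈ Finset.Icc 1 N,
          ∑ g ∈ (Fintype.piFinset fun _ : Fin n => Finset.Icc 1 N).filter
            (fun g => P (Fin.cons a g)), f (Fin.cons a g) := by
  have hmap : (Fintype.piFinset fun _ : Fin (n + 1) => Finset.Icc 1 N) =
      ((Finset.Icc 1 N) ×ˢ (Fintype.piFinset fun _ : Fin n => Finset.Icc 1 N)).map
        (Fin.consEquiv fun _ => ℕ).toEmbedding := by
    have h := Finset.filter_piFinset_eq_map_consEquiv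
      (S := fun _ : Fin (n + 1) => Finset.Icc 1 N) (fun _ => True)
    simp at h
    exact h
  rw [Finset.sum_filter, hmap, Finset.sum_map, Finset.sum_product]
  refine Finset.sum_congr rfl fun a _ => ?_
  rw [Finset.sum_filter]
  rfl

set_option maxHeartbeats 1000000 in
private lemma key_lemma (e : ℝ) (he : 0 < e) :
    ∀ (n : ℕ), 1 ≤ n → ∀ (ev : Fin n → ℕ), ∃ C : ℝ, 0 < C ∧
      ∀ (B X : ℝ), 3 < B → 1 ≤ X → X ≤ B →
        (∑ g ∈ (Fintype.piFinset fun _ : Fin n => Finset.Icc 1 ⌊B⌋₊).filter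
            (fun g => (∏ i, ((g i : ℝ)) ^ (ev i)) ≤ X),
          ∏ i, (g i : ℝ) ^ ((ev i : ℝ) / e - 1))
        ≤ C * Real.log B ^ (n - 1) * (Real.log B + X ^ (1 / e)) := by
  refine Nat.le_induction ?_ ?_
  · -- base case n = 1
    intro ev
    obtain ⟨c, hc, hsingle⟩ := single_bound e he (ev 0)
    refine ⟨c, hc, fun B X hB hX hXB => ?_⟩
    have hB0 : (0:ℝ) < B := by linarith
    have hNB : ((⌊B⌋₊ : ℕ) : ℝ) ≤ B := Nat.floor_le hB0.le
    calc (∑ g ∈ (Fintype.piFinset fun _ : Fin 1 => Finset.Icc 1 ⌊B⌋₊).filter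
            (fun g => (∏ i, ((g i : ℝ)) ^ (ev i)) ≤ X),
          ∏ i, (g i : ℝ) ^ ((ev i : ℝ) / e - 1))
        = ∑ a ∈ Finset.Icc 1 ⌊B⌋₊,
            ∑ g ∈ (Fintype.piFinset fun _ : Fin 0 => Finset.Icc 1 ⌊B⌋₊).filter
              (fun g => (∏ i, (((Fin.cons a g : Fin 1 → ℕ) i : ℕ) : ℝ) ^ (ev i)) ≤ X),
              ∏ i, (((Fin.cons a g : Fin 1 → ℕ) i : ℕ) : ℝ) ^ ((ev i : ℝ) / e - 1) :=
          split_sum (n := 0) ⌊B⌋₊ (fun g => (∏ i, ((g i : ℝ)) ^ (ev i)) ≤ X)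
            (fun g => ∏ i, (g i : ℝ) ^ ((ev i : ℝ) / e - 1))
      _ = ∑ a ∈ Finset.Icc 1 ⌊B⌋₊,
            (if ((a:ℝ)) ^ (ev 0) ≤ X then (a : ℝ) ^ ((ev 0 : ℝ) / e - 1) else 0) := by
          refine Finset.sum_congr rfl fun a _ => ?_
          simp only [Fin.prod_univ_succ, Fin.prod_univ_zero, Fin.cons_zero, mul_one]
          rw [Finset.filter_const]
          split_ifs
          · rw [Finset.sum_const, Fintype.card_piFinset]
            simp
          · simp
      _ = ∑ a ∈ (Finset.Icc 1 ⌊B⌋₊).filter (fun a : ℕ => ((a:ℝ)) ^ (ev 0) ≤ X),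
            (a : ℝ) ^ ((ev 0 : ℝ) / e - 1) := (Finset.sum_filter _ _).symm
      _ ≤ c * (Real.log B + X ^ (1 / e)) := hsingle B X ⌊B⌋₊ hB hX hNB
      _ = c * Real.log B ^ (1 - 1) * (Real.log B + X ^ (1 / e)) := by norm_num
  · -- induction step
    intro n hn IH ev
    obtain ⟨C, hC, hIH⟩ := IH (Fin.tail ev)
    obtain ⟨c, hc, hsingle⟩ := single_bound e he (ev 0)
    refine ⟨(c + 2) * C, by positivity, fun B X hB hX hXB => ?_⟩
    have hB0 : (0:ℝ) < B := by linarith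
    have hNB : ((⌊B⌋₊ : ℕ) : ℝ) ≤ B := Nat.floor_le hB0.le
    have hL : 1 < Real.log B := one_lt_log hB
    have hL0 : (0:ℝ) < Real.log B := by linarith
    have hX0 : (0:ℝ) < X := by linarith
    have hY0 : (0:ℝ) ≤ X ^ (1/e) := Real.rpow_nonneg hX0.le _
    have hLn1 : (0:ℝ) ≤ Real.log B ^ (n-1) := pow_nonneg hL0.le _
    -- inner bound for each a
    have hinner : ∀ a ∈ Finset.Icc 1 ⌊B⌋₊,
        (∑ g ∈ (Fintype.piFinset fun _ : Fin n => Finset.Icc 1 ⌊B⌋₊).filter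
            (fun g => (∏ i, (((Fin.cons a g : Fin (n+1) → ℕ) i : ℕ) : ℝ) ^ (ev i)) ≤ X),
          ∏ i, (((Fin.cons a g : Fin (n+1) → ℕ) i : ℕ) : ℝ) ^ ((ev i : ℝ) / e - 1))
        ≤ (if ((a:ℝ)) ^ (ev 0) ≤ X then
            (a : ℝ) ^ ((ev 0 : ℝ) / e - 1) *
              (C * Real.log B ^ (n - 1) *
                (Real.log B + X ^ (1/e) / (a:ℝ) ^ ((ev 0 : ℝ) / e))) else 0) := by
      intro a ha
      have h1a : 1 ≤ a := (Finset.mem_Icc.mp ha).1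
      have hx0 : (0:ℝ) < a := by exact_mod_cast Nat.lt_of_lt_of_le Nat.zero_lt_one h1a
      have hd0 : (0:ℝ) < ((a:ℝ)) ^ (ev 0) := pow_pos hx0 _
      by_cases hp : ((a:ℝ)) ^ (ev 0) ≤ X
      · rw [if_pos hp]
        have hd1 : (1:ℝ) ≤ ((a:ℝ)) ^ (ev 0) := one_le_pow₀ (by exact_mod_cast h1a)
        have h1X' : 1 ≤ X / ((a:ℝ)) ^ (ev 0) := (one_le_div hd0).mpr hp
        have hX'B : X / ((a:ℝ)) ^ (ev 0) ≤ B := le_trans (div_le_self hX0.le hd1) hXB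
        have hXd : (X / ((a:ℝ)) ^ (ev 0)) ^ (1/e)
            = X ^ (1/e) / (a:ℝ) ^ ((ev 0 : ℝ) / e) := by
          rw [Real.div_rpow hX0.le hd0.le, ← Real.rpow_natCast (a:ℝ) (ev 0),
            ← Real.rpow_mul hx0.le, mul_one_div]
        simp only [Fin.prod_univ_succ, Fin.cons_zero, Fin.cons_succ]
        rw [← Finset.mul_sum]
        apply mul_le_mul_of_nonneg_left ?_ (Real.rpow_nonneg hx0.le _)
        have heq : ((Fintype.piFinset fun _ : Fin n => Finset.Icc 1 ⌊B⌋₊).filter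
              (fun g : Fin n → ℕ =>
                ((a:ℝ)) ^ (ev 0) * ∏ i, ((g i : ℝ)) ^ (ev i.succ) ≤ X))
            = ((Fintype.piFinset fun _ : Fin n => Finset.Icc 1 ⌊B⌋₊).filter
              (fun g : Fin n → ℕ =>
                (∏ i, ((g i : ℝ)) ^ (Fin.tail ev i)) ≤ X / ((a:ℝ)) ^ (ev 0))) := by
          refine Finset.filter_congr fun g _ => ?_
          rw [le_div_iff₀ hd0, mul_comm]
          exact Iff.rfl
        calc (∑ g ∈ (Fintype.piFinset fun _ : Fin n => Finset.Icc 1 ⌊B⌋₊).filter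
                (fun g : Fin n → ℕ =>
                  ((a:ℝ)) ^ (ev 0) * ∏ i, ((g i : ℝ)) ^ (ev i.succ) ≤ X),
              ∏ i, (g i : ℝ) ^ ((ev i.succ : ℝ) / e - 1))
            = (∑ g ∈ (Fintype.piFinset fun _ : Fin n => Finset.Icc 1 ⌊B⌋₊).filter
                (fun g : Fin n → ℕ =>
                  (∏ i, ((g i : ℝ)) ^ (Fin.tail ev i)) ≤ X / ((a:ℝ)) ^ (ev 0)),
              ∏ i, (g i : ℝ) ^ ((Fin.tail ev i : ℝ) / e - 1)) :=
              Finset.sum_congr heq fun g _ => rfl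
          _ ≤ C * Real.log B ^ (n - 1) *
                (Real.log B + (X / ((a:ℝ)) ^ (ev 0)) ^ (1/e)) :=
              hIH B (X / ((a:ℝ)) ^ (ev 0)) hB h1X' hX'B
          _ = C * Real.log B ^ (n - 1) *
                (Real.log B + X ^ (1/e) / (a:ℝ) ^ ((ev 0 : ℝ) / e)) := by rw [hXd]
      · rw [if_neg hp]
        have hempty : ((Fintype.piFinset fun _ : Fin n => Finset.Icc 1 ⌊B⌋₊).filter
            (fun g : Fin n → ℕ =>
              (∏ i, (((Fin.cons a g : Fin (n+1) → ℕ) i : ℕ) : ℝ) ^ (ev i)) ≤ X)) = ∅ := by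
          refine Finset.filter_false_of_mem fun g hg => ?_
          intro hcon
          rw [Fin.prod_univ_succ] at hcon
          simp only [Fin.cons_zero, Fin.cons_succ] at hcon
          have hg1 : ∀ i, 1 ≤ g i := fun i =>
            (Finset.mem_Icc.mp (Fintype.mem_piFinset.mp hg i)).1
          have hprod : (1:ℝ) ≤ ∏ i, ((g i : ℝ)) ^ (ev i.succ) := by
            calc (1:ℝ) = ∏ _i : Fin n, 1 := by simp
              _ ≤ ∏ i, ((g i : ℝ)) ^ (ev i.succ) :=
                Finset.prod_le_prod (by simp)
                  (fun i _ => one_le_pow₀ (by exact_mod_cast hg1 i))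
          exact hp (le_trans (le_mul_of_one_le_right hd0.le hprod) hcon)
        rw [hempty, Finset.sum_empty]
    -- per-a expansion on the filtered set
    have hsummand : ∀ a ∈ (Finset.Icc 1 ⌊B⌋₊).filter (fun a : ℕ => ((a:ℝ)) ^ (ev 0) ≤ X),
        (a : ℝ) ^ ((ev 0 : ℝ) / e - 1) *
            (C * Real.log B ^ (n - 1) *
              (Real.log B + X ^ (1/e) / (a:ℝ) ^ ((ev 0 : ℝ) / e)))
        = (C * Real.log B ^ (n - 1) * Real.log B) * (a : ℝ) ^ ((ev 0 : ℝ) / e - 1)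
          + (C * Real.log B ^ (n - 1) * X ^ (1/e)) * ((a:ℝ))⁻¹ := by
      intro a ha
      have h1a : 1 ≤ a := (Finset.mem_Icc.mp (Finset.mem_filter.mp ha).1).1
      have hx0 : (0:ℝ) < a := by exact_mod_cast Nat.lt_of_lt_of_le Nat.zero_lt_one h1a
      have hkey : (a:ℝ) ^ ((ev 0 : ℝ) / e - 1) * ((a:ℝ) ^ ((ev 0 : ℝ) / e))⁻¹
          = ((a:ℝ))⁻¹ := by
        rw [← Real.rpow_neg hx0.le, ← Real.rpow_add hx0,
          show (ev 0 : ℝ) / e - 1 + -((ev 0 : ℝ) / e) = -1 by ring, Real.rpow_neg_one]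
      calc (a : ℝ) ^ ((ev 0 : ℝ) / e - 1) *
              (C * Real.log B ^ (n - 1) *
                (Real.log B + X ^ (1/e) / (a:ℝ) ^ ((ev 0 : ℝ) / e)))
          = (C * Real.log B ^ (n - 1) * Real.log B) * (a : ℝ) ^ ((ev 0 : ℝ) / e - 1)
            + (C * Real.log B ^ (n - 1) * X ^ (1/e)) *
              ((a : ℝ) ^ ((ev 0 : ℝ) / e - 1) * ((a:ℝ) ^ ((ev 0 : ℝ) / e))⁻¹) := by
            rw [div_eq_mul_inv]; ring
        _ = (C * Real.log B ^ (n - 1) * Real.log B) * (a : ℝ) ^ ((ev 0 : ℝ) / e - 1)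
            + (C * Real.log B ^ (n - 1) * X ^ (1/e)) * ((a:ℝ))⁻¹ := by rw [hkey]
    have hA : ∑ a ∈ (Finset.Icc 1 ⌊B⌋₊).filter (fun a : ℕ => ((a:ℝ)) ^ (ev 0) ≤ X),
        (a : ℝ) ^ ((ev 0 : ℝ) / e - 1) ≤ c * (Real.log B + X ^ (1/e)) :=
      hsingle B X ⌊B⌋₊ hB hX hNB
    have hH : ∑ a ∈ (Finset.Icc 1 ⌊B⌋₊).filter (fun a : ℕ => ((a:ℝ)) ^ (ev 0) ≤ X),
        ((a:ℝ))⁻¹ ≤ 2 * Real.log B := by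
      have hlogN : Real.log ⌊B⌋₊ ≤ Real.log B := by
        rcases Nat.eq_zero_or_pos ⌊B⌋₊ with h | h
        · rw [h]
          simp only [Nat.cast_zero, Real.log_zero]
          linarith
        · exact Real.log_le_log (by exact_mod_cast h) hNB
      calc ∑ a ∈ (Finset.Icc 1 ⌊B⌋₊).filter (fun a : ℕ => ((a:ℝ)) ^ (ev 0) ≤ X), ((a:ℝ))⁻¹
          ≤ ∑ a ∈ Finset.Icc 1 ⌊B⌋₊, ((a:ℝ))⁻¹ :=
            Finset.sum_le_sum_of_subset_of_nonneg (Finset.filter_subset _ _)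
              (fun a _ _ => by positivity)
        _ ≤ 1 + Real.log ⌊B⌋₊ := sum_inv_le ⌊B⌋₊
        _ ≤ 2 * Real.log B := by linarith
    have hpown : Real.log B ^ (n-1) * Real.log B = Real.log B ^ n := by
      obtain ⟨j, rfl⟩ : ∃ j, n = j + 1 := ⟨n - 1, by omega⟩
      simp only [Nat.add_sub_cancel]
      rw [pow_succ]
    have hc1 : (0:ℝ) ≤ C * Real.log B ^ (n-1) * Real.log B :=
      mul_nonneg (mul_nonneg hC.le hLn1) hL0.le
    have hc2 : (0:ℝ) ≤ C * Real.log B ^ (n-1) * X ^ (1/e) :=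
      mul_nonneg (mul_nonneg hC.le hLn1) hY0
    calc (∑ g ∈ (Fintype.piFinset fun _ : Fin (n+1) => Finset.Icc 1 ⌊B⌋₊).filter
            (fun g => (∏ i, ((g i : ℝ)) ^ (ev i)) ≤ X),
          ∏ i, (g i : ℝ) ^ ((ev i : ℝ) / e - 1))
        = ∑ a ∈ Finset.Icc 1 ⌊B⌋₊,
            ∑ g ∈ (Fintype.piFinset fun _ : Fin n => Finset.Icc 1 ⌊B⌋₊).filter
              (fun g => (∏ i, (((Fin.cons a g : Fin (n+1) → ℕ) i : ℕ) : ℝ) ^ (ev i)) ≤ X),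
              ∏ i, (((Fin.cons a g : Fin (n+1) → ℕ) i : ℕ) : ℝ) ^ ((ev i : ℝ) / e - 1) :=
          split_sum (n := n) ⌊B⌋₊ (fun g => (∏ i, ((g i : ℝ)) ^ (ev i)) ≤ X)
            (fun g => ∏ i, (g i : ℝ) ^ ((ev i : ℝ) / e - 1))
      _ ≤ ∑ a ∈ Finset.Icc 1 ⌊B⌋₊,
            (if ((a:ℝ)) ^ (ev 0) ≤ X then
              (a : ℝ) ^ ((ev 0 : ℝ) / e - 1) *
                (C * Real.log B ^ (n - 1) *
                  (Real.log B + X ^ (1/e) / (a:ℝ) ^ ((ev 0 : ℝ) / e))) else 0) :=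
          Finset.sum_le_sum hinner
      _ = ∑ a ∈ (Finset.Icc 1 ⌊B⌋₊).filter (fun a : ℕ => ((a:ℝ)) ^ (ev 0) ≤ X),
            (a : ℝ) ^ ((ev 0 : ℝ) / e - 1) *
              (C * Real.log B ^ (n - 1) *
                (Real.log B + X ^ (1/e) / (a:ℝ) ^ ((ev 0 : ℝ) / e))) :=
          (Finset.sum_filter _ _).symm
      _ = ∑ a ∈ (Finset.Icc 1 ⌊B⌋₊).filter (fun a : ℕ => ((a:ℝ)) ^ (ev 0) ≤ X),
            ((C * Real.log B ^ (n - 1) * Real.log B) * (a : ℝ) ^ ((ev 0 : ℝ) / e - 1)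
              + (C * Real.log B ^ (n - 1) * X ^ (1/e)) * ((a:ℝ))⁻¹) :=
          Finset.sum_congr rfl hsummand
      _ = (C * Real.log B ^ (n - 1) * Real.log B) *
            (∑ a ∈ (Finset.Icc 1 ⌊B⌋₊).filter (fun a : ℕ => ((a:ℝ)) ^ (ev 0) ≤ X),
              (a : ℝ) ^ ((ev 0 : ℝ) / e - 1))
          + (C * Real.log B ^ (n - 1) * X ^ (1/e)) *
            (∑ a ∈ (Finset.Icc 1 ⌊B⌋₊).filter (fun a : ℕ => ((a:ℝ)) ^ (ev 0) ≤ X),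
              ((a:ℝ))⁻¹) := by
          rw [Finset.sum_add_distrib, Finset.mul_sum, Finset.mul_sum]
      _ ≤ (C * Real.log B ^ (n - 1) * Real.log B) * (c * (Real.log B + X ^ (1/e)))
          + (C * Real.log B ^ (n - 1) * X ^ (1/e)) * (2 * Real.log B) :=
          add_le_add (mul_le_mul_of_nonneg_left hA hc1) (mul_le_mul_of_nonneg_left hH hc2)
      _ = C * Real.log B ^ n * (c * (Real.log B + X ^ (1/e)))
          + C * Real.log B ^ n * (2 * X ^ (1/e)) := by rw [← hpown]; ring
      _ ≤ (c + 2) * C * Real.log B ^ (n + 1 - 1) * (Real.log B + X ^ (1/e)) := by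
          simp only [Nat.add_sub_cancel]
          nlinarith [mul_nonneg (mul_nonneg hC.le (pow_nonneg hL0.le n)) hL0.le,
            mul_nonneg hC.le (pow_nonneg hL0.le n)]

/-- Multivariate summation lemma (Salberger's sublemma, with the extra parameter `λ`):
the sum of `∏ gᵢ^(eᵢ/e - 1)` over positive integer tuples with `∏ gᵢ^{eᵢ} ≤ B/λ` and
`max gᵢ ≤ B` is `O(max((log B)^m, (B/λ)^{1/e} (log B)^{m-1}))`, uniformly in `λ ∈ [1,B]`. -/
theorem stmt_0 (m : ℕ) (hm : 1 ≤ m) (e : ℝ) (he : 0 < e) (ev : Fin m → ℕ) :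
    ∃ C : ℝ, 0 < C ∧ ∀ B lam : ℝ, 3 < B → 1 ≤ lam → lam ≤ B →
      (∑ g ∈ (Fintype.piFinset fun _ : Fin m => Finset.Icc 1 ⌊B⌋₊).filter
          (fun g => (∏ i, ((g i : ℝ)) ^ (ev i)) ≤ B / lam),
        ∏ i, (g i : ℝ) ^ ((ev i : ℝ) / e - 1))
      ≤ C * max ((Real.log B) ^ m) ((B / lam) ^ (1 / e) * (Real.log B) ^ (m - 1)) := by
  obtain ⟨C, hC, hkey⟩ := key_lemma e he m hm ev
  refine ⟨2 * C, by positivity, fun B lam hB hlam hlamB => ?_⟩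
  have hlam0 : (0 : ℝ) < lam := by linarith
  have hX1 : 1 ≤ B / lam := (one_le_div hlam0).mpr hlamB
  have hXB : B / lam ≤ B := div_le_self (by linarith) hlam
  have h := hkey B (B / lam) hB hX1 hXB
  set L := Real.log B with hL
  set Y := (B / lam) ^ (1 / e) with hY'
  have hL1 : 1 < L := one_lt_log hB
  have hY : (0 : ℝ) ≤ Y := Real.rpow_nonneg (by linarith) _
  obtain ⟨k, rfl⟩ : ∃ k, m = k + 1 := ⟨m - 1, by omega⟩
  have hpow : C * L ^ (k + 1 - 1) * (L + Y) = C * (L ^ (k + 1) + Y * L ^ (k + 1 - 1)) := by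
    simp only [Nat.add_sub_cancel]
    rw [pow_succ]
    ring
  rw [hpow] at h
  refine le_trans h ?_
  have h1 : L ^ (k + 1) ≤ max (L ^ (k + 1)) (Y * L ^ (k + 1 - 1)) := le_max_left _ _
  have h2 : Y * L ^ (k + 1 - 1) ≤ max (L ^ (k + 1)) (Y * L ^ (k + 1 - 1)) := le_max_right _ _
  have hadd : L ^ (k + 1) + Y * L ^ (k + 1 - 1)
      ≤ 2 * max (L ^ (k + 1)) (Y * L ^ (k + 1 - 1)) := by linarith
  calc C * (L ^ (k + 1) + Y * L ^ (k + 1 - 1))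
      ≤ C * (2 * max (L ^ (k + 1)) (Y * L ^ (k + 1 - 1))) :=
        mul_le_mul_of_nonneg_left hadd hC.le
    _ = 2 * C * max (L ^ (k + 1)) (Y * L ^ (k + 1 - 1)) := by ring
end

section
/- Let $m \geq 1$, $e > 0$, $\mathbf{e} = (e_1,\dots,e_m) \in \mathbb{Z}_{\geq 0}^m$, $B > 3$, and $1 \leq \lambda \leq B$. Define $R(B,\lambda) = \int \prod_{i=1}^m g_i^{e_i/e - 1}\, dg_1\cdots dg_m$, the integral over real tuples $(g_1,\dots,g_m) \in [1,\infty)^m$ satisfying $\prod_{i=1}^m g_i^{e_i} \leq B/\lambda$ and $\max_i g_i \leq B$. Then $R(B,\lambda) = O_{m,e,\mathbf{e}}\big(\max((\log B)^m, (B/\lambda)^{1/e}(\log B)^{m-1})\big)$, with implied constant independent of $\lambda$. -/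
open Finset Real MeasureTheory

lemma aux_lintegral_pi {n : ℕ} (f : Fin n → ℝ → ENNReal) (hf : ∀ i, Measurable (f i)) :
    ∫⁻ x : Fin n → ℝ, ∏ i, f i (x i) = ∏ i, ∫⁻ t, f i t := by
  induction n with
  | zero =>
      simp only [Finset.univ_eq_empty, Finset.prod_empty, lintegral_one]
      rw [volume_pi, Measure.pi_empty_univ]
  | succ n ih =>
      have h := (volume_preserving_piFinSuccAbove (fun _ : Fin (n + 1) => ℝ) 0).symm
      have hmeas : Measurable fun x : Fin (n + 1) → ℝ => ∏ i, f i (x i) :=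
        Finset.measurable_prod _ fun i _ => (hf i).comp (measurable_pi_apply i)
      rw [← h.lintegral_comp hmeas]
      have key : ∀ p : ℝ × (Fin n → ℝ),
          (∏ i, f i (((MeasurableEquiv.piFinSuccAbove (fun _ : Fin (n+1) => ℝ) 0).symm p) i))
          = f 0 p.1 * ∏ j, f ((0 : Fin (n+1)).succAbove j) (p.2 j) := by
        intro p
        rw [MeasurableEquiv.piFinSuccAbove_symm_apply, Fin.prod_univ_succAbove _ 0]
        simp [Fin.insertNth_apply_same, Fin.insertNth_apply_succAbove]
      simp_rw [key]
      rw [Measure.volume_eq_prod]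
      rw [lintegral_prod_mul (f := f 0)
        (g := fun y : Fin n → ℝ => ∏ j, f ((0 : Fin (n+1)).succAbove j) (y j))
        (hf 0).aemeasurable
        (Finset.measurable_prod _ fun j _ => (hf _).comp (measurable_pi_apply j)).aemeasurable]
      rw [ih (fun j => f ((0 : Fin (n+1)).succAbove j)) (fun j => hf _),
        Fin.prod_univ_succAbove (fun i => ∫⁻ t, f i t) 0]

lemma aux_lint_inv {B : ℝ} (hB : 1 ≤ B) :
    ∫⁻ t in Set.Icc (1:ℝ) B, ENNReal.ofReal t⁻¹ = ENNReal.ofReal (Real.log B) := by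
  rw [← ofReal_integral_eq_lintegral_ofReal]
  · congr 1
    rw [integral_Icc_eq_integral_Ioc, ← intervalIntegral.integral_of_le hB,
      integral_inv (by rw [Set.uIcc_of_le hB]; rintro ⟨h0, -⟩; linarith)]
    rw [div_one]
  · apply ContinuousOn.integrableOn_compact isCompact_Icc
    exact continuousOn_inv₀.mono
      (fun x hx h0 => by rw [Set.mem_singleton_iff] at h0; rw [h0] at hx; linarith [hx.1])
  · exact ae_restrict_of_forall_mem measurableSet_Icc fun x hx => inv_nonneg.2 (by linarith [hx.1])

lemma aux_lint_rpow {c : ℝ} (hc : 0 < c) (X : ℝ) :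
    ∫⁻ t in Set.Icc (1:ℝ) X, ENNReal.ofReal (t ^ (c - 1)) ≤ ENNReal.ofReal (c⁻¹ * X ^ c) := by
  rcases le_or_gt 1 X with hX | hX
  · rw [← ofReal_integral_eq_lintegral_ofReal]
    · apply ENNReal.ofReal_le_ofReal
      rw [integral_Icc_eq_integral_Ioc, ← intervalIntegral.integral_of_le hX,
        integral_rpow (Or.inl (by linarith))]
      have h1 : c - 1 + 1 = c := by ring
      rw [h1, Real.one_rpow]
      have hXc : (0:ℝ) ≤ X ^ c := Real.rpow_nonneg (by linarith) c
      rw [div_eq_inv_mul]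
      nlinarith [inv_nonneg.2 hc.le]
    · apply ContinuousOn.integrableOn_compact isCompact_Icc
      exact fun x hx =>
        (Real.continuousAt_rpow_const x _ (Or.inl (by linarith [hx.1]))).continuousWithinAt
    · exact ae_restrict_of_forall_mem measurableSet_Icc
        fun x hx => Real.rpow_nonneg (by linarith [hx.1]) _
  · rw [Set.Icc_eq_empty (by linarith), Measure.restrict_empty, lintegral_zero_measure]
    exact zero_le ..

/-- Integral version of the multivariate summation lemma: the integral of
`∏ gᵢ^(eᵢ/e - 1)` over real tuples in `[1,∞)^m` with `∏ gᵢ^{eᵢ} ≤ B/λ` and `max gᵢ ≤ B`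
is `O(max((log B)^m, (B/λ)^{1/e} (log B)^{m-1}))`, uniformly in `λ ∈ [1,B]`. -/
theorem stmt_1 (m : ℕ) (hm : 1 ≤ m) (e : ℝ) (he : 0 < e) (ev : Fin m → ℕ) :
    ∃ C : ℝ, 0 < C ∧ ∀ B lam : ℝ, 3 < B → 1 ≤ lam → lam ≤ B →
      (∫ g in {g : Fin m → ℝ | (∀ i, 1 ≤ g i) ∧ (∏ i, (g i) ^ (ev i)) ≤ B / lam ∧
          ∀ i, g i ≤ B}, ∏ i, (g i) ^ ((ev i : ℝ) / e - 1))
      ≤ C * max ((Real.log B) ^ m) ((B / lam) ^ (1 / e) * (Real.log B) ^ (m - 1)) := by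
  obtain ⟨n, rfl⟩ : ∃ n, m = n + 1 := ⟨m - 1, (Nat.succ_pred_eq_of_pos hm).symm⟩
  refine ⟨e + 1, by linarith, ?_⟩
  intro B lam hB hlam hlamB
  have h1B : (1:ℝ) ≤ B := by linarith
  have hlogB : 0 ≤ Real.log B := Real.log_nonneg h1B
  have hBlam : 0 < B / lam := div_pos (by linarith) (by linarith)
  set S : Set (Fin (n+1) → ℝ) := {g : Fin (n+1) → ℝ | (∀ i, 1 ≤ g i) ∧
      (∏ i, (g i) ^ (ev i)) ≤ B / lam ∧ ∀ i, g i ≤ B} with hSdef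
  have hS : MeasurableSet S := by
    have : S = (⋂ i, {g : Fin (n+1) → ℝ | 1 ≤ g i}) ∩
        ({g : Fin (n+1) → ℝ | ∏ i, (g i) ^ (ev i) ≤ B / lam}
          ∩ ⋂ i, {g : Fin (n+1) → ℝ | g i ≤ B}) := by
      ext g; simp [hSdef, Set.mem_setOf_eq, forall_and]
    rw [this]
    exact (MeasurableSet.iInter fun i =>
        measurableSet_le measurable_const (measurable_pi_apply i)).inter
      ((measurableSet_le (Finset.measurable_prod _ fun i _ =>
          (measurable_pi_apply i).pow_const _) measurable_const).inter
        (.iInter fun i => measurableSet_le (measurable_pi_apply i) measurable_const))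
  have hfmeas : Measurable fun g : Fin (n+1) → ℝ => ∏ i, (g i) ^ ((ev i : ℝ) / e - 1) :=
    Finset.measurable_prod _ fun i _ => by fun_prop
  have hnn : 0 ≤ᵐ[volume.restrict S] fun g : Fin (n+1) → ℝ => ∏ i, (g i) ^ ((ev i : ℝ) / e - 1) :=
    ae_restrict_of_forall_mem hS fun g hg => Finset.prod_nonneg fun i _ =>
      Real.rpow_nonneg (le_trans zero_le_one (hg.1 i)) _
  rw [integral_eq_lintegral_of_nonneg_ae hnn hfmeas.aestronglyMeasurable]
  have hmax0 : 0 ≤ max ((Real.log B) ^ (n+1)) ((B / lam) ^ (1 / e) * (Real.log B) ^ (n+1-1)) :=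
    le_trans (pow_nonneg hlogB _) (le_max_left _ _)
  apply ENNReal.toReal_le_of_le_ofReal (mul_nonneg (by linarith) hmax0)
  -- now bound the lintegral
  by_cases hz : ∀ i, ev i = 0
  · -- all exponents zero
    calc ∫⁻ g in S, ENNReal.ofReal (∏ i, (g i) ^ ((ev i : ℝ) / e - 1))
        ≤ ∫⁻ g : Fin (n+1) → ℝ,
            ∏ i, (Set.Icc (1:ℝ) B).indicator (fun t => ENNReal.ofReal t⁻¹) (g i) := by
          rw [← lintegral_indicator hS]
          apply lintegral_mono
          intro g
          by_cases hgS : g ∈ S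
          · rw [Set.indicator_of_mem hgS]
            have hgpos : ∀ i, (0:ℝ) < g i := fun i => lt_of_lt_of_le one_pos (hgS.1 i)
            have hval : (∏ i, (g i) ^ ((ev i : ℝ) / e - 1)) = ∏ i, (g i)⁻¹ := by
              refine Finset.prod_congr rfl fun i _ => ?_
              rw [hz i]
              push_cast
              rw [zero_div, zero_sub, Real.rpow_neg_one]
            rw [hval, ENNReal.ofReal_prod_of_nonneg (fun i _ => inv_nonneg.2 (hgpos i).le)]
            refine le_of_eq (Finset.prod_congr rfl fun i _ => ?_)
            rw [Set.indicator_of_mem (Set.mem_Icc.mpr ⟨hgS.1 i, hgS.2.2 i⟩)]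
          · rw [Set.indicator_of_notMem hgS]; exact zero_le ..
      _ = ∏ _i : Fin (n+1), ENNReal.ofReal (Real.log B) := by
          rw [aux_lintegral_pi
            (fun _ t => (Set.Icc (1:ℝ) B).indicator (fun t => ENNReal.ofReal t⁻¹) t)
            (fun i => Measurable.indicator (by fun_prop) measurableSet_Icc)]
          exact Finset.prod_congr rfl fun i _ => by
            rw [lintegral_indicator measurableSet_Icc, aux_lint_inv h1B]
      _ = ENNReal.ofReal (Real.log B) ^ (n+1) := by
          rw [Finset.prod_const, Finset.card_univ, Fintype.card_fin]
      _ ≤ ENNReal.ofReal ((e + 1) *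
            max ((Real.log B) ^ (n+1)) ((B / lam) ^ (1 / e) * (Real.log B) ^ (n+1-1))) := by
          rw [← ENNReal.ofReal_pow hlogB]
          apply ENNReal.ofReal_le_ofReal
          calc (Real.log B) ^ (n+1) ≤ max ((Real.log B) ^ (n+1)) _ := le_max_left _ _
            _ ≤ (e+1) * _ := le_mul_of_one_le_left hmax0 (by linarith)
  · -- some exponent positive
    push_neg at hz
    obtain ⟨i₀, hi₀⟩ := hz
    have hE1 : 1 ≤ (ev i₀ : ℝ) := by exact_mod_cast Nat.one_le_iff_ne_zero.2 hi₀
    set c : ℝ := (ev i₀ : ℝ) / e with hcdef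
    have hc : 0 < c := div_pos (by linarith) he
    have hcinv : c⁻¹ ≤ e := by
      rw [hcdef, inv_div]
      exact div_le_self he.le hE1
    have hFmeas : Measurable (S.indicator fun g : Fin (n+1) → ℝ =>
        ENNReal.ofReal (∏ i, (g i) ^ ((ev i : ℝ) / e - 1))) :=
      (ENNReal.measurable_ofReal.comp hfmeas).indicator hS
    have hmp := (volume_preserving_piFinSuccAbove (fun _ : Fin (n+1) => ℝ) i₀).symm
    rw [← lintegral_indicator hS, ← hmp.lintegral_comp hFmeas,
      Measure.volume_eq_prod,
      lintegral_prod_symm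
        (fun p : ℝ × (Fin n → ℝ) => (S.indicator fun g : Fin (n+1) → ℝ =>
          ENNReal.ofReal (∏ i, (g i) ^ ((ev i : ℝ) / e - 1)))
          ((MeasurableEquiv.piFinSuccAbove (fun _ : Fin (n+1) => ℝ) i₀).symm p))
        ((hFmeas.comp
          (MeasurableEquiv.piFinSuccAbove (fun _ : Fin (n+1) => ℝ) i₀).symm.measurable).aemeasurable)]
    set cst : ENNReal := ENNReal.ofReal (c⁻¹ * (B / lam) ^ (1 / e)) with hcst
    have claim : ∀ y : Fin n → ℝ,
        (∫⁻ x : ℝ, (S.indicator fun g : Fin (n+1) → ℝ =>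
            ENNReal.ofReal (∏ i, (g i) ^ ((ev i : ℝ) / e - 1))) ((MeasurableEquiv.piFinSuccAbove (fun _ : Fin (n+1) => ℝ) i₀).symm (x, y)))
        ≤ (∏ j, (Set.Icc (1:ℝ) B).indicator (fun t => ENNReal.ofReal t⁻¹) (y j)) * cst := by
      intro y
      have hsymm : ∀ x : ℝ, (MeasurableEquiv.piFinSuccAbove (fun _ : Fin (n+1) => ℝ) i₀).symm (x, y) = i₀.insertNth x y := by
        intro x
        rw [MeasurableEquiv.piFinSuccAbove_symm_apply]
        rfl
      by_cases hy : ∀ j, y j ∈ Set.Icc (1:ℝ) B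
      · -- y in the box
        have hyp : ∀ j, (0:ℝ) < y j := fun j => lt_of_lt_of_le one_pos (hy j).1
        set P : ℝ := ∏ j, (y j) ^ (ev (i₀.succAbove j)) with hPdef
        have hP : 0 < P := Finset.prod_pos fun j _ => pow_pos (hyp j) _
        set M : ℝ := (B / lam) / P with hMdef
        have hM : 0 < M := div_pos hBlam hP
        set X : ℝ := M ^ ((1:ℝ) / (ev i₀ : ℝ)) with hXdef
        set Q : ℝ := ∏ j, (y j) ^ ((ev (i₀.succAbove j) : ℝ) / e - 1) with hQdef
        have hQ : 0 ≤ Q := Finset.prod_nonneg fun j _ => Real.rpow_nonneg (hyp j).le _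
        have step1 : ∀ x : ℝ, (S.indicator fun g : Fin (n+1) → ℝ =>
            ENNReal.ofReal (∏ i, (g i) ^ ((ev i : ℝ) / e - 1))) ((MeasurableEquiv.piFinSuccAbove (fun _ : Fin (n+1) => ℝ) i₀).symm (x, y))
            ≤ (Set.Icc (1:ℝ) X).indicator
              (fun x => ENNReal.ofReal (x ^ (c - 1)) * ENNReal.ofReal Q) x := by
          intro x
          rw [hsymm x]
          by_cases hgS : i₀.insertNth x y ∈ S
          · have hx1 : 1 ≤ x := by
              have := hgS.1 i₀
              rwa [Fin.insertNth_apply_same] at this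
            have hxX : x ≤ X := by
              have hprod : x ^ (ev i₀) * P ≤ B / lam := by
                have hPP : (∏ j, ((i₀.insertNth x y : Fin (n+1) → ℝ) (i₀.succAbove j)) ^ (ev (i₀.succAbove j))) = P :=
                  Finset.prod_congr rfl fun j _ => by rw [Fin.insertNth_apply_succAbove]
                have := hgS.2.1
                rwa [Fin.prod_univ_succAbove _ i₀, Fin.insertNth_apply_same, hPP] at this
              have hxM : x ^ ((ev i₀ : ℝ)) ≤ M := by
                rw [Real.rpow_natCast]
                rw [hMdef, le_div_iff₀ hP]
                exact hprod
              calc x = (x ^ ((ev i₀ : ℝ))) ^ ((1:ℝ) / (ev i₀ : ℝ)) := by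
                    rw [← Real.rpow_mul (by linarith), mul_one_div,
                      div_self (by linarith), Real.rpow_one]
                _ ≤ X := Real.rpow_le_rpow (Real.rpow_nonneg (by linarith) _) hxM
                    (by positivity)
            have hval : (∏ i, (i₀.insertNth x y i) ^ ((ev i : ℝ) / e - 1))
                = x ^ (c - 1) * Q := by
              rw [Fin.prod_univ_succAbove _ i₀, Fin.insertNth_apply_same, hcdef, hQdef]
              congr 1
              exact Finset.prod_congr rfl fun j _ => by rw [Fin.insertNth_apply_succAbove]
            rw [Set.indicator_of_mem hgS, hval,
              ENNReal.ofReal_mul (Real.rpow_nonneg (by linarith) _),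
              Set.indicator_of_mem (Set.mem_Icc.mpr ⟨hx1, hxX⟩)]
          · rw [Set.indicator_of_notMem hgS]; exact zero_le ..
        calc (∫⁻ x : ℝ, (S.indicator fun g : Fin (n+1) → ℝ =>
                ENNReal.ofReal (∏ i, (g i) ^ ((ev i : ℝ) / e - 1))) ((MeasurableEquiv.piFinSuccAbove (fun _ : Fin (n+1) => ℝ) i₀).symm (x, y)))
            ≤ ∫⁻ x : ℝ, (Set.Icc (1:ℝ) X).indicator
                (fun x => ENNReal.ofReal (x ^ (c - 1)) * ENNReal.ofReal Q) x :=
              lintegral_mono step1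
          _ = (∫⁻ x in Set.Icc (1:ℝ) X, ENNReal.ofReal (x ^ (c - 1))) * ENNReal.ofReal Q := by
              rw [lintegral_indicator measurableSet_Icc]
              exact lintegral_mul_const _ (by fun_prop)
          _ ≤ ENNReal.ofReal (c⁻¹ * X ^ c) * ENNReal.ofReal Q :=
              mul_le_mul_left (aux_lint_rpow hc X) _
          _ = (∏ j, (Set.Icc (1:ℝ) B).indicator (fun t => ENNReal.ofReal t⁻¹) (y j)) * cst := by
              have hPe : P ^ ((1:ℝ)/e) = ∏ j, (y j) ^ ((ev (i₀.succAbove j) : ℝ)/e) := by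
                rw [hPdef, ← Real.finset_prod_rpow _ _ (fun j _ => pow_nonneg (hyp j).le _)]
                refine Finset.prod_congr rfl fun j _ => ?_
                rw [← Real.rpow_natCast (y j) (ev _), ← Real.rpow_mul (hyp j).le, mul_one_div]
              have hPepos : 0 < P ^ ((1:ℝ)/e) := Real.rpow_pos_of_pos hP _
              have hQP : Q = (∏ j, (y j)⁻¹) * P ^ ((1:ℝ)/e) := by
                rw [hQdef, hPe, ← Finset.prod_mul_distrib]
                refine Finset.prod_congr rfl fun j _ => ?_
                rw [show ((ev (i₀.succAbove j) : ℝ)/e - 1)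
                    = (-1) + (ev (i₀.succAbove j) : ℝ)/e from by ring,
                  Real.rpow_add (hyp j), Real.rpow_neg_one]
              have hE0 : (ev i₀ : ℝ) ≠ 0 := by linarith
              have hXc : X ^ c = (B / lam) ^ ((1:ℝ)/e) / P ^ ((1:ℝ)/e) := by
                rw [hXdef, ← Real.rpow_mul hM.le]
                have h1c : (1:ℝ) / (ev i₀ : ℝ) * c = 1/e := by
                  rw [hcdef]; field_simp
                rw [h1c, hMdef, Real.div_rpow hBlam.le hP.le]
              have hreal : c⁻¹ * X ^ c * Q = (∏ j, (y j)⁻¹) * (c⁻¹ * (B / lam) ^ ((1:ℝ)/e)) := by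
                have hPene : P ^ ((1:ℝ)/e) ≠ 0 := ne_of_gt hPepos
                rw [hXc, hQP, div_eq_mul_inv]
                rw [show c⁻¹ * ((B / lam) ^ ((1:ℝ)/e) * (P ^ ((1:ℝ)/e))⁻¹)
                      * ((∏ j, (y j)⁻¹) * P ^ ((1:ℝ)/e))
                    = ((P ^ ((1:ℝ)/e))⁻¹ * P ^ ((1:ℝ)/e))
                      * ((∏ j, (y j)⁻¹) * (c⁻¹ * (B / lam) ^ ((1:ℝ)/e))) from by ring,
                  inv_mul_cancel₀ hPene, one_mul]
              rw [← ENNReal.ofReal_mul (by positivity), hreal,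
                ENNReal.ofReal_mul (Finset.prod_nonneg fun j _ => inv_nonneg.2 (hyp j).le),
                ENNReal.ofReal_prod_of_nonneg (fun j _ => inv_nonneg.2 (hyp j).le)]
              congr 1
              exact Finset.prod_congr rfl fun j _ => by rw [Set.indicator_of_mem (hy j)]
      · -- y not in the box
        push_neg at hy
        obtain ⟨j, hj⟩ := hy
        have hzero : ∀ x : ℝ, (S.indicator fun g : Fin (n+1) → ℝ =>
            ENNReal.ofReal (∏ i, (g i) ^ ((ev i : ℝ) / e - 1))) ((MeasurableEquiv.piFinSuccAbove (fun _ : Fin (n+1) => ℝ) i₀).symm (x, y)) = 0 := by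
          intro x
          rw [hsymm x]
          apply Set.indicator_of_notMem
          intro hgS
          apply hj
          constructor
          · have := hgS.1 (i₀.succAbove j)
            rwa [Fin.insertNth_apply_succAbove] at this
          · have := hgS.2.2 (i₀.succAbove j)
            rwa [Fin.insertNth_apply_succAbove] at this
        simp only [hzero, lintegral_zero]
        exact zero_le ..
    calc (∫⁻ y : Fin n → ℝ, ∫⁻ x : ℝ, (S.indicator fun g : Fin (n+1) → ℝ =>
            ENNReal.ofReal (∏ i, (g i) ^ ((ev i : ℝ) / e - 1))) ((MeasurableEquiv.piFinSuccAbove (fun _ : Fin (n+1) => ℝ) i₀).symm (x, y)))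
        ≤ ∫⁻ y : Fin n → ℝ,
            (∏ j, (Set.Icc (1:ℝ) B).indicator (fun t => ENNReal.ofReal t⁻¹) (y j)) * cst :=
          lintegral_mono claim
      _ = (∫⁻ y : Fin n → ℝ,
            ∏ j, (Set.Icc (1:ℝ) B).indicator (fun t => ENNReal.ofReal t⁻¹) (y j)) * cst :=
          lintegral_mul_const _ (Finset.measurable_prod _ fun j _ =>
            ((ENNReal.measurable_ofReal.comp measurable_inv).indicator
              measurableSet_Icc).comp (measurable_pi_apply j))
      _ = ENNReal.ofReal (Real.log B) ^ n * cst := by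
          rw [aux_lintegral_pi
            (fun _ t => (Set.Icc (1:ℝ) B).indicator (fun t => ENNReal.ofReal t⁻¹) t)
            (fun j => Measurable.indicator (by fun_prop) measurableSet_Icc)]
          congr 1
          rw [Finset.prod_congr rfl (fun (j : Fin n) _ => by
            rw [lintegral_indicator measurableSet_Icc, aux_lint_inv h1B]),
            Finset.prod_const, Finset.card_univ, Fintype.card_fin]
      _ ≤ ENNReal.ofReal ((e + 1) *
            max ((Real.log B) ^ (n+1)) ((B / lam) ^ (1 / e) * (Real.log B) ^ (n+1-1))) := by
          rw [hcst, ← ENNReal.ofReal_pow hlogB, ← ENNReal.ofReal_mul (by positivity)]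
          apply ENNReal.ofReal_le_ofReal
          have hterm : 0 ≤ (B / lam) ^ ((1:ℝ) / e) * (Real.log B) ^ n := by positivity
          calc (Real.log B) ^ n * (c⁻¹ * (B / lam) ^ ((1:ℝ) / e))
              = c⁻¹ * ((B / lam) ^ ((1:ℝ) / e) * (Real.log B) ^ n) := by ring
            _ ≤ (e + 1) * ((B / lam) ^ ((1:ℝ) / e) * (Real.log B) ^ n) :=
                mul_le_mul_of_nonneg_right (by linarith) hterm
            _ ≤ (e + 1) * max ((Real.log B) ^ (n+1))
                ((B / lam) ^ (1 / e) * (Real.log B) ^ (n+1-1)) := by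
                apply mul_le_mul_of_nonneg_left _ (by linarith)
                simp only [Nat.add_sub_cancel]
                exact le_max_right _ _
end

section
/- Let $r \geq 2$, let $a_1,\dots,a_r \in \mathbb{Z}_{\geq 0}$, fix $i_0 \in \{1,\dots,r\}$, and let $\eta: \mathbb{N}_{\geq 1}^{r-1} \to \mathbb{N}_{\geq 1}$ be an arbitrary function (possibly depending on $B$). For $B > 2$ define $\mathcal{N}(B) = \sum \prod_{i=1}^r X_i^{a_i - 1}$, the sum over tuples $(X_1,\dots,X_r) \in \mathbb{N}_{\geq 1}^r$ with $\prod_{i=1}^r X_i^{a_i} \leq B$, $\max_i X_i \leq B$, and $X_{i_0} = \eta(X_i, i \neq i_0)$. Then $\mathcal{N}(B) = O(B (\log B)^{r-2})$, with implied constant depending only on $r$ and the $a_i$ but not on $\eta$. -/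
open scoped Classical
open Finset Real


lemma harmonic_sum_le (N : ℕ) : ∑ n ∈ Finset.Icc 1 N, ((n:ℝ))⁻¹ ≤ 1 + Real.log N := by
  induction N with
  | zero => simp
  | succ N ih =>
    rw [Finset.sum_Icc_succ_top (by omega : 1 ≤ N+1)]
    rcases Nat.eq_zero_or_pos N with rfl | hN
    · norm_num
    · have hN0 : (0:ℝ) < N := by exact_mod_cast hN
      have h1 : Real.log ((N:ℝ) / (N+1)) ≤ (N:ℝ)/(N+1) - 1 :=
        Real.log_le_sub_one_of_pos (by positivity)
      have h2 : Real.log ((N:ℝ) / (N+1)) = Real.log N - Real.log (N+1) :=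
        Real.log_div (by positivity) (by positivity)
      have h3 : (N:ℝ)/(N+1) - 1 = -(((N:ℝ)+1)⁻¹) := by field_simp; ring
      have h4 : Real.log N + ((N:ℝ)+1)⁻¹ ≤ Real.log (N+1) := by
        rw [h2, h3] at h1; linarith
      have : ((N:ℕ)+1:ℝ) = (N:ℝ)+1 := by push_cast; ring
      push_cast
      linarith

-- key Bernoulli consequences
lemma step_le {c : ℝ} (hc1 : 0 < c) (hc2 : c ≤ 1) (i : ℕ) :
    c * ((i:ℝ)+1) ^ (c-1) ≤ ((i:ℝ)+1) ^ c - (i:ℝ) ^ c := by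
  have hpos : (0:ℝ) < (i:ℝ)+1 := by positivity
  have hs : (-1:ℝ) ≤ -(((i:ℝ)+1)⁻¹) := by
    rw [neg_le_neg_iff]
    exact inv_le_one_of_one_le₀ (by linarith [Nat.cast_nonneg (α := ℝ) i])
  have hb : (1 + (-(((i:ℝ)+1)⁻¹))) ^ c ≤ 1 + c * (-(((i:ℝ)+1)⁻¹)) :=
    rpow_one_add_le_one_add_mul_self hs hc1.le hc2
  have h1 : (1:ℝ) + (-(((i:ℝ)+1)⁻¹)) = (i:ℝ)/((i:ℝ)+1) := by field_simp; ring
  have h2 : (i:ℝ) ^ c = ((i:ℝ)+1)^c * ((i:ℝ)/((i:ℝ)+1))^c := by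
    rw [← Real.mul_rpow hpos.le (by positivity)]
    congr 1; field_simp
  have h3 : ((i:ℝ)+1)^c * ((i:ℝ)+1)⁻¹ = ((i:ℝ)+1)^(c-1) := by
    rw [Real.rpow_sub hpos, Real.rpow_one]; rfl
  calc c * ((i:ℝ)+1) ^ (c-1) = ((i:ℝ)+1)^c - ((i:ℝ)+1)^c * (1 + c * (-(((i:ℝ)+1)⁻¹))) := by
        rw [← h3]; ring
    _ ≤ ((i:ℝ)+1)^c - (i:ℝ)^c := by
        have hge : ((i:ℝ)+1)^c * ((i:ℝ)/((i:ℝ)+1))^c ≤ ((i:ℝ)+1)^c * (1 + c * (-(((i:ℝ)+1)⁻¹))) := by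
          apply mul_le_mul_of_nonneg_left _ (Real.rpow_nonneg hpos.le c)
          rw [← h1]; exact hb
        rw [h2]; linarith

lemma step_ge {c : ℝ} (hc1 : 1 ≤ c) (i : ℕ) :
    c * ((i:ℝ)+1) ^ (c-1) ≤ ((i:ℝ)+2) ^ c - ((i:ℝ)+1) ^ c := by
  have hpos : (0:ℝ) < (i:ℝ)+1 := by positivity
  have hb : 1 + c * (((i:ℝ)+1)⁻¹) ≤ (1 + (((i:ℝ)+1)⁻¹)) ^ c :=
    one_add_mul_self_le_rpow_one_add (le_trans (by norm_num : (-1:ℝ) ≤ 0) (inv_nonneg.mpr hpos.le)) hc1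
  have h1 : (1:ℝ) + (((i:ℝ)+1)⁻¹) = ((i:ℝ)+2)/((i:ℝ)+1) := by field_simp; ring
  have h2 : ((i:ℝ)+2) ^ c = ((i:ℝ)+1)^c * (((i:ℝ)+2)/((i:ℝ)+1))^c := by
    rw [← Real.mul_rpow hpos.le (by positivity)]
    congr 1; field_simp
  have h3 : ((i:ℝ)+1)^c * ((i:ℝ)+1)⁻¹ = ((i:ℝ)+1)^(c-1) := by
    rw [Real.rpow_sub hpos, Real.rpow_one]; rfl
  have hge : ((i:ℝ)+1)^c * (1 + c * (((i:ℝ)+1)⁻¹)) ≤ ((i:ℝ)+1)^c * (((i:ℝ)+2)/((i:ℝ)+1))^c := by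
    apply mul_le_mul_of_nonneg_left _ (Real.rpow_nonneg hpos.le c)
    rw [← h1]; exact hb
  rw [h2]
  calc c * ((i:ℝ)+1) ^ (c-1) = ((i:ℝ)+1)^c * (1 + c * (((i:ℝ)+1)⁻¹)) - ((i:ℝ)+1)^c := by
        rw [← h3]; ring
    _ ≤ ((i:ℝ)+1)^c * (((i:ℝ)+2)/((i:ℝ)+1))^c - ((i:ℝ)+1)^c := by linarith
lemma pow_partial_sum_le {c M : ℝ} (hc : 0 < c) (hM : 0 < M) (N : ℕ) :
    ∑ n ∈ (Finset.Icc 1 N).filter (fun n : ℕ => ((n:ℝ)) ^ c ≤ M), ((n:ℝ)) ^ (c - 1)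
      ≤ (2 ^ c / c) * M := by
  set K := ⌊M ^ (1/c)⌋₊ with hK
  have hMc : ((K:ℝ)) ^ c ≤ M := by
    have h1 : (K:ℝ) ≤ M ^ (1/c) := Nat.floor_le (Real.rpow_nonneg hM.le _)
    calc ((K:ℝ)) ^ c ≤ (M ^ (1/c)) ^ c :=
          Real.rpow_le_rpow (Nat.cast_nonneg K) h1 hc.le
      _ = M := by rw [← Real.rpow_mul hM.le, one_div_mul_cancel hc.ne', Real.rpow_one]
  have hsub : (Finset.Icc 1 N).filter (fun n : ℕ => ((n:ℝ)) ^ c ≤ M) ⊆ Finset.Icc 1 K := by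
    intro n hn
    simp only [Finset.mem_filter, Finset.mem_Icc] at hn
    refine Finset.mem_Icc.mpr ⟨hn.1.1, ?_⟩
    apply Nat.le_floor
    have : ((n:ℝ)^c)^(1/c) ≤ M^(1/c) := Real.rpow_le_rpow (by positivity) hn.2 (by positivity)
    rwa [← Real.rpow_mul (Nat.cast_nonneg n), mul_one_div_cancel hc.ne', Real.rpow_one] at this
  have hstep : ∑ n ∈ (Finset.Icc 1 N).filter (fun n : ℕ => ((n:ℝ)) ^ c ≤ M), ((n:ℝ)) ^ (c - 1)
      ≤ ∑ n ∈ Finset.Icc 1 K, ((n:ℝ)) ^ (c-1) := by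
    apply Finset.sum_le_sum_of_subset_of_nonneg hsub
    intro n _ _
    exact Real.rpow_nonneg (Nat.cast_nonneg n) _
  refine hstep.trans ?_
  have hrange : ∑ n ∈ Finset.Icc 1 K, ((n:ℝ)) ^ (c-1)
      = ∑ i ∈ Finset.range K, (((i:ℝ))+1) ^ (c-1) := by
    rw [← Finset.Ico_add_one_right_eq_Icc, Finset.sum_Ico_eq_sum_range]
    apply Finset.sum_congr (by simp) (fun i _ => by push_cast; ring_nf)
  rw [hrange]
  have h2c : (1:ℝ) ≤ 2 ^ c := by
    calc (1:ℝ) = 2 ^ (0:ℝ) := by rw [Real.rpow_zero]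
      _ ≤ 2 ^ c := Real.rpow_le_rpow_of_exponent_le one_le_two hc.le
  have hinv : (0:ℝ) ≤ 1/c := by positivity
  rcases le_or_gt c 1 with hc1 | hc1
  · have : ∑ i ∈ Finset.range K, (((i:ℝ))+1) ^ (c-1)
        ≤ ∑ i ∈ Finset.range K, (1/c) * ((((i:ℝ))+1) ^ c - ((i:ℝ)) ^ c) := by
      apply Finset.sum_le_sum
      intro i _
      calc (((i:ℝ))+1) ^ (c-1) = (1/c) * (c * (((i:ℝ))+1) ^ (c-1)) := by field_simp
        _ ≤ (1/c) * ((((i:ℝ))+1) ^ c - ((i:ℝ)) ^ c) :=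
            mul_le_mul_of_nonneg_left (step_le hc hc1 i) hinv
    refine this.trans ?_
    rw [← Finset.mul_sum]
    have htel : ∑ i ∈ Finset.range K, ((((i:ℝ))+1) ^ c - ((i:ℝ)) ^ c) = ((K:ℝ)) ^ c - ((0:ℝ)) ^ c := by
      have := Finset.sum_range_sub (fun i => ((i:ℝ)) ^ c) K
      simpa using this
    rw [htel, Real.zero_rpow hc.ne', sub_zero]
    have h1 : ((K:ℝ))^c ≤ 2^c * M := le_trans hMc (le_mul_of_one_le_left hM.le h2c)
    calc (1/c) * ((K:ℝ))^c ≤ (1/c) * (2^c * M) := mul_le_mul_of_nonneg_left h1 hinv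
      _ = (2^c/c) * M := by ring
  · have : ∑ i ∈ Finset.range K, (((i:ℝ))+1) ^ (c-1)
        ≤ ∑ i ∈ Finset.range K, (1/c) * ((((i:ℝ))+2) ^ c - (((i:ℝ))+1) ^ c) := by
      apply Finset.sum_le_sum
      intro i _
      calc (((i:ℝ))+1) ^ (c-1) = (1/c) * (c * (((i:ℝ))+1) ^ (c-1)) := by field_simp
        _ ≤ (1/c) * ((((i:ℝ))+2) ^ c - (((i:ℝ))+1) ^ c) :=
            mul_le_mul_of_nonneg_left (step_ge hc1.le i) hinv
    refine this.trans ?_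
    rw [← Finset.mul_sum]
    have htel : ∑ i ∈ Finset.range K, ((((i:ℝ))+2) ^ c - (((i:ℝ))+1) ^ c)
        = (((K:ℝ))+1) ^ c - 1 := by
      calc ∑ i ∈ Finset.range K, ((((i:ℝ))+2) ^ c - (((i:ℝ))+1) ^ c)
          = ∑ i ∈ Finset.range K, ((((i+1:ℕ):ℝ)+1) ^ c - (((i:ℕ):ℝ)+1) ^ c) := by
            apply Finset.sum_congr rfl; intro i _; push_cast; ring_nf
        _ = (((K:ℕ):ℝ)+1) ^ c - (((0:ℕ):ℝ)+1) ^ c := Finset.sum_range_sub (fun i => (((i:ℕ):ℝ)+1) ^ c) K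
        _ = (((K:ℝ))+1) ^ c - 1 := by norm_num
    rw [htel]
    rcases Nat.eq_zero_or_pos K with hK0 | hK0
    · rw [hK0]
      simp only [Nat.cast_zero, zero_add, Real.one_rpow, sub_self, mul_zero]
      positivity
    · have hK1 : (1:ℝ) ≤ (K:ℝ) := by exact_mod_cast hK0
      have h1 : (((K:ℝ))+1) ^ c ≤ (2*(K:ℝ)) ^ c :=
        Real.rpow_le_rpow (by positivity) (by linarith) hc.le
      have h2 : (2*(K:ℝ)) ^ c = 2^c * ((K:ℝ))^c := Real.mul_rpow (by norm_num) (by positivity)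
      have h3 : (((K:ℝ))+1) ^ c - 1 ≤ 2^c * M := by
        have h4 : ((K:ℝ))^c ≤ M := hMc
        have h5 : 2^c * ((K:ℝ))^c ≤ 2^c * M :=
          mul_le_mul_of_nonneg_left h4 (by positivity)
        have h6 : (0:ℝ) < (((K:ℝ))+1) ^ c := Real.rpow_pos_of_pos (by positivity) c
        rw [h2] at h1
        linarith
      calc (1/c) * ((((K:ℝ))+1) ^ c - 1) ≤ (1/c) * (2^c * M) :=
            mul_le_mul_of_nonneg_left h3 hinv
        _ = (2^c/c) * M := by ring

lemma sum_piFinset_split {ι : Type*} [Fintype ι] [DecidableEq ι] (j : ι) (s : Finset ℕ)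
    (f : (ι → ℕ) → ℝ) :
    ∑ y ∈ Fintype.piFinset (fun _ : ι => s), f y
      = ∑ t ∈ Fintype.piFinset (fun _ : {i : ι // i ≠ j} => s), ∑ n ∈ s,
          f (fun i => if h : i = j then n else t ⟨i, h⟩) := by
  rw [← Finset.sum_product']
  apply Finset.sum_nbij' (i := fun y => ((fun i' : {i : ι // i ≠ j} => y i'.1), y j))
    (j := fun p => fun i => if h : i = j then p.2 else p.1 ⟨i, h⟩)
  · intro y hy
    simp only [Fintype.mem_piFinset] at hy
    simp only [Finset.mem_product, Fintype.mem_piFinset]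
    exact ⟨fun i' => hy i'.1, hy j⟩
  · intro p hp
    simp only [Finset.mem_product, Fintype.mem_piFinset] at hp
    simp only [Fintype.mem_piFinset]
    intro i
    by_cases h : i = j
    · rw [dif_pos h]; exact hp.2
    · rw [dif_neg h]; exact hp.1 ⟨i, h⟩
  · intro y hy
    funext i
    by_cases h : i = j
    · subst h; rw [dif_pos rfl]
    · rw [dif_neg h]
  · intro p hp
    ext i'
    · show (if h : (i':ι) = j then p.2 else p.1 ⟨i'.1, h⟩) = p.1 i'
      rw [dif_neg i'.2]
    · show (if h : j = j then p.2 else p.1 ⟨j, h⟩) = p.2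
      rw [dif_pos rfl]
  · intro y hy
    congr 1
    funext i
    by_cases h : i = j
    · subst h; simp
    · simp [h]

lemma prod_split_at {ι : Type*} [Fintype ι] [DecidableEq ι] (j : ι) (g : ι → ℝ) :
    ∏ i, g i = g j * ∏ i' : {i : ι // i ≠ j}, g i'.1 := by
  rw [Fintype.prod_eq_mul_prod_compl j]
  congr 1
  rw [← Finset.prod_subtype ({j}ᶜ : Finset ι) (fun x => by simp) (fun i => g i)]

lemma card_ne_eq {ι : Type*} [Fintype ι] [DecidableEq ι] (j : ι) :
    Fintype.card {i : ι // i ≠ j} = Fintype.card ι - 1 := by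
  simp [Ne, Fintype.card_subtype_compl]
set_option maxHeartbeats 1000000 in
lemma core_bound {ι : Type*} [Fintype ι] [DecidableEq ι] (c : ι → ℝ)
    (j : ι) (hcj : 0 < c j) (N : ℕ) {Q : ℝ} (hQ : 0 < Q) :
    ∑ y ∈ Fintype.piFinset (fun _ : ι => Finset.Icc 1 N),
        (if ∏ i, ((y i : ℝ)) ^ (c i) ≤ Q then ∏ i, ((y i : ℝ)) ^ (c i - 1) else 0)
      ≤ (2 ^ (c j) / c j) * Q * (1 + Real.log N) ^ (Fintype.card ι - 1) := by
  have hlogN : (0:ℝ) ≤ 1 + Real.log N := by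
    have := Real.log_natCast_nonneg N; linarith
  rw [sum_piFinset_split j]
  have key : ∀ t ∈ Fintype.piFinset (fun _ : {i : ι // i ≠ j} => Finset.Icc 1 N),
      (∑ n ∈ Finset.Icc 1 N,
        (if ∏ i, (((fun i => if h : i = j then n else t ⟨i, h⟩) i : ℕ) : ℝ) ^ (c i) ≤ Q
         then ∏ i, (((fun i => if h : i = j then n else t ⟨i, h⟩) i : ℕ) : ℝ) ^ (c i - 1) else 0))
      ≤ (2 ^ (c j) / c j) * Q * ∏ i' : {i : ι // i ≠ j}, ((t i' : ℝ))⁻¹ := by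
    intro t ht
    simp only [Fintype.mem_piFinset, Finset.mem_Icc] at ht
    have htpos : ∀ i' : {i : ι // i ≠ j}, (0:ℝ) < (t i' : ℝ) := fun i' => by
      have := (ht i').1; positivity
    set P := ∏ i' : {i : ι // i ≠ j}, ((t i' : ℝ)) ^ (c i'.1) with hPdef
    set W := ∏ i' : {i : ι // i ≠ j}, ((t i' : ℝ)) ^ (c i'.1 - 1) with hWdef
    have hP : 0 < P := Finset.prod_pos fun i' _ => Real.rpow_pos_of_pos (htpos i') _
    have hW : 0 ≤ W := Finset.prod_nonneg fun i' _ => Real.rpow_nonneg (htpos i').le _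
    have hWP : W = P * ∏ i' : {i : ι // i ≠ j}, ((t i' : ℝ))⁻¹ := by
      rw [hPdef, hWdef, ← Finset.prod_mul_distrib]
      apply Finset.prod_congr rfl
      intro i' _
      rw [Real.rpow_sub (htpos i'), Real.rpow_one, div_eq_mul_inv]
    have hprod : ∀ (n : ℕ) (d : ι → ℝ),
        True := fun _ _ => trivial
    have hsum_eq : (∑ n ∈ Finset.Icc 1 N,
        (if ∏ i, (((fun i => if h : i = j then n else t ⟨i, h⟩) i : ℕ) : ℝ) ^ (c i) ≤ Q
         then ∏ i, (((fun i => if h : i = j then n else t ⟨i, h⟩) i : ℕ) : ℝ) ^ (c i - 1) else 0))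
        = ∑ n ∈ Finset.Icc 1 N,
            (if ((n:ℝ)) ^ (c j) ≤ Q / P then ((n:ℝ)) ^ (c j - 1) else 0) * W := by
      apply Finset.sum_congr rfl
      intro n _
      have hE1 : ∏ i, (((fun i => if h : i = j then n else t ⟨i, h⟩) i : ℕ) : ℝ) ^ (c i)
          = ((n:ℝ)) ^ (c j) * P := by
        rw [prod_split_at j]
        congr 1
        · simp
        · apply Finset.prod_congr rfl
          intro i' _
          simp [i'.2]
      have hE2 : ∏ i, (((fun i => if h : i = j then n else t ⟨i, h⟩) i : ℕ) : ℝ) ^ (c i - 1)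
          = ((n:ℝ)) ^ (c j - 1) * W := by
        rw [prod_split_at j]
        congr 1
        · simp
        · apply Finset.prod_congr rfl
          intro i' _
          simp [i'.2]
      rw [hE1, hE2, ite_mul, zero_mul]
      congr 1
      · simp [le_div_iff₀ hP]
    rw [hsum_eq, ← Finset.sum_mul, ← Finset.sum_filter]
    have hps := pow_partial_sum_le hcj (div_pos hQ hP) N
    calc (∑ n ∈ (Finset.Icc 1 N).filter (fun n : ℕ => ((n:ℝ)) ^ (c j) ≤ Q / P),
            ((n:ℝ)) ^ (c j - 1)) * W
        ≤ ((2 ^ (c j) / c j) * (Q / P)) * W := by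
          apply mul_le_mul_of_nonneg_right hps hW
      _ = (2 ^ (c j) / c j) * Q * (P⁻¹ * P) * ∏ i' : {i : ι // i ≠ j}, ((t i' : ℝ))⁻¹ := by
          rw [hWP]; ring
      _ = (2 ^ (c j) / c j) * Q * ∏ i' : {i : ι // i ≠ j}, ((t i' : ℝ))⁻¹ := by
          rw [inv_mul_cancel₀ hP.ne', mul_one]
  calc _ ≤ ∑ t ∈ Fintype.piFinset (fun _ : {i : ι // i ≠ j} => Finset.Icc 1 N),
        (2 ^ (c j) / c j) * Q * ∏ i' : {i : ι // i ≠ j}, ((t i' : ℝ))⁻¹ :=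
        Finset.sum_le_sum key
    _ = (2 ^ (c j) / c j) * Q * ∑ t ∈ Fintype.piFinset (fun _ : {i : ι // i ≠ j} => Finset.Icc 1 N),
          ∏ i' : {i : ι // i ≠ j}, ((t i' : ℝ))⁻¹ := by rw [Finset.mul_sum]
    _ ≤ (2 ^ (c j) / c j) * Q * (1 + Real.log N) ^ (Fintype.card ι - 1) := by
        have hK0 : (0:ℝ) ≤ 2 ^ (c j) / c j * Q := by positivity
        apply mul_le_mul_of_nonneg_left _ hK0
        have heq : ∑ t ∈ Fintype.piFinset (fun _ : {i : ι // i ≠ j} => Finset.Icc 1 N),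
            ∏ i' : {i : ι // i ≠ j}, ((t i' : ℝ))⁻¹
            = ∏ _i' : {i : ι // i ≠ j}, ∑ n ∈ Finset.Icc 1 N, ((n:ℝ))⁻¹ :=
          (Finset.prod_univ_sum (fun _ : {i : ι // i ≠ j} => Finset.Icc 1 N) (fun _ n => ((n:ℝ))⁻¹)).symm
        rw [heq, Finset.prod_const]
        have hHnn : (0:ℝ) ≤ ∑ n ∈ Finset.Icc 1 N, ((n:ℝ))⁻¹ :=
          Finset.sum_nonneg fun n _ => by positivity
        calc (∑ n ∈ Finset.Icc 1 N, ((n:ℝ))⁻¹) ^ (Finset.univ.card (α := {i : ι // i ≠ j}))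
            ≤ (1 + Real.log N) ^ (Finset.univ.card (α := {i : ι // i ≠ j})) :=
              pow_le_pow_left₀ hHnn (harmonic_sum_le N) _
          _ = (1 + Real.log N) ^ (Fintype.card ι - 1) := by
              rw [Finset.card_univ, card_ne_eq]

lemma prod_inv_sum_le {ι : Type*} [Fintype ι] [DecidableEq ι] (N : ℕ) :
    ∑ t ∈ Fintype.piFinset (fun _ : ι => Finset.Icc 1 N), ∏ i, ((t i : ℝ))⁻¹
      ≤ (1 + Real.log N) ^ (Fintype.card ι) := by
  have heq : ∑ t ∈ Fintype.piFinset (fun _ : ι => Finset.Icc 1 N), ∏ i, ((t i : ℝ))⁻¹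
      = ∏ _i : ι, ∑ n ∈ Finset.Icc 1 N, ((n:ℝ))⁻¹ :=
    (Finset.prod_univ_sum (fun _ : ι => Finset.Icc 1 N) (fun _ n => ((n:ℝ))⁻¹)).symm
  rw [heq, Finset.prod_const, Finset.card_univ]
  have hH0 : (0:ℝ) ≤ ∑ n ∈ Finset.Icc 1 N, ((n:ℝ))⁻¹ :=
    Finset.sum_nonneg fun n _ => by positivity
  exact pow_le_pow_left₀ hH0 (harmonic_sum_le N) _

set_option maxHeartbeats 2000000 in
/-- Sums of slicing type: if one coordinate `X_{i₀}` is determined by an arbitrary function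
`η` (possibly depending on `B`) of the other coordinates, then
`∑ ∏ Xᵢ^{aᵢ-1}` over tuples with `∏ Xᵢ^{aᵢ} ≤ B`, `max Xᵢ ≤ B` is `O(B (log B)^{r-2})`,
uniformly in `η`. -/
theorem stmt_2 (r : ℕ) (hr : 2 ≤ r) (a : Fin r → ℕ) (i0 : Fin r) :
    ∃ C : ℝ, 0 < C ∧
      ∀ (η : ℝ → ({i : Fin r // i ≠ i0} → ℕ) → ℕ),
        (∀ B x, 1 ≤ η B x) →
        ∀ B : ℝ, 2 < B →
          (∑ X ∈ (Fintype.piFinset fun _ : Fin r => Finset.Icc 1 ⌊B⌋₊).filter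
              (fun X => (∏ i, ((X i : ℝ)) ^ (a i)) ≤ B ∧
                X i0 = η B (fun j => X j.1)),
            ∏ i, (X i : ℝ) ^ ((a i : ℝ) - 1))
          ≤ C * B * (Real.log B) ^ (r - 2) := by
  classical
  set A : ℕ := (∑ i, a i) + 2 with hAdef
  set c₁ : ℝ := 1 / Real.log 2 + 1 with hc₁def
  have hlog2 : 0 < Real.log 2 := Real.log_pos (by norm_num)
  have hc₁pos : 0 < c₁ := by positivity
  have hc₁4 : c₁ ≤ 4 := by
    have h9 := Real.log_two_gt_d9
    have h1 : 1 / Real.log 2 ≤ 3 := by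
      rw [div_le_iff₀ hlog2]; nlinarith
    rw [hc₁def]; linarith
  have hApos : (0:ℝ) < (A:ℝ) := by
    have : 0 < A := by omega
    exact_mod_cast this
  refine ⟨2 ^ ((A:ℕ):ℝ) * (A:ℝ) * c₁ ^ (r - 2), by positivity, ?_⟩
  intro η hη B hB
  have hB0 : (0:ℝ) < B := by linarith
  have hB1 : (1:ℝ) < B := by linarith
  have hlogB : 0 < Real.log B := Real.log_pos hB1
  set N := ⌊B⌋₊ with hNdef
  have hNB : (N:ℝ) ≤ B := Nat.floor_le hB0.le
  have hN2 : 2 ≤ N := Nat.le_floor (by exact_mod_cast hB.le)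
  have hNpos : (0:ℝ) < (N:ℝ) := by
    have : 0 < N := by omega
    exact_mod_cast this
  have hlogN0 : (0:ℝ) ≤ Real.log N := Real.log_natCast_nonneg N
  have hL0 : (0:ℝ) ≤ 1 + Real.log N := by linarith
  have hLle : 1 + Real.log N ≤ c₁ * Real.log B := by
    have h1 : Real.log N ≤ Real.log B := Real.log_le_log hNpos hNB
    have h2 : Real.log 2 ≤ Real.log B := Real.log_le_log (by norm_num) (by linarith)
    have h3 : (1:ℝ) ≤ 1 / Real.log 2 * Real.log B := by
      rw [div_mul_eq_mul_div, le_div_iff₀ hlog2]; linarith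
    calc 1 + Real.log N ≤ 1 / Real.log 2 * Real.log B + Real.log B := add_le_add h3 h1
      _ = c₁ * Real.log B := by rw [hc₁def]; ring
  -- facts about A
  have haA : ∀ i : Fin r, (a i : ℝ) ≤ (A:ℝ) := by
    intro i
    have h1 : a i ≤ A := by
      have := Finset.single_le_sum (f := a) (fun i _ => Nat.zero_le (a i))
        (Finset.mem_univ i)
      omega
    exact_mod_cast h1
  have hA2 : (2:ℝ) ≤ (A:ℝ) := by
    have : 2 ≤ A := by omega
    exact_mod_cast this
  have h2A4 : (4:ℝ) ≤ 2 ^ ((A:ℕ):ℝ) := by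
    have h0 : (4:ℝ) = 2 ^ ((2:ℝ)) := by
      rw [show ((2:ℝ)) = ((2:ℕ):ℝ) by norm_num, Real.rpow_natCast]; norm_num
    rw [h0]
    exact Real.rpow_le_rpow_of_exponent_le one_le_two hA2
  have hc₁2A : c₁ ≤ 2 ^ ((A:ℕ):ℝ) := hc₁4.trans h2A4
  have hcard : Fintype.card {i : Fin r // i ≠ i0} = r - 1 := by
    rw [card_ne_eq, Fintype.card_fin]
  have hcard2 : Fintype.card {i : Fin r // i ≠ i0} - 1 = r - 2 := by omega
  have hzero : ∑ t ∈ Fintype.piFinset (fun _ : {i : Fin r // i ≠ i0} => Finset.Icc 1 N),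
      ∏ i' : {i : Fin r // i ≠ i0}, ((t i' : ℝ))⁻¹ ≤ (1 + Real.log N) ^ (r - 1) := by
    have h := prod_inv_sum_le (ι := {i : Fin r // i ≠ i0}) N
    rwa [hcard] at h
  have hr12 : r - 1 = (r - 2) + 1 := by omega
  have hlogBB : Real.log B ≤ B := by
    have := Real.log_le_sub_one_of_pos hB0
    linarith
  -- the slice weight
  set G : ({i : Fin r // i ≠ i0} → ℕ) → ℝ := fun t =>
    if ((η B t : ℝ)) ^ (a i0) * ∏ i' : {i : Fin r // i ≠ i0}, ((t i' : ℝ)) ^ (a i'.1) ≤ B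
    then ((η B t : ℝ)) ^ ((a i0 : ℝ) - 1) *
      ∏ i' : {i : Fin r // i ≠ i0}, ((t i' : ℝ)) ^ ((a i'.1 : ℝ) - 1)
    else 0 with hGdef
  -- step 1 : reindex
  have step1 : (∑ X ∈ (Fintype.piFinset fun _ : Fin r => Finset.Icc 1 N).filter
      (fun X => (∏ i, ((X i : ℝ)) ^ (a i)) ≤ B ∧ X i0 = η B (fun j => X j.1)),
        ∏ i, (X i : ℝ) ^ ((a i : ℝ) - 1))
      ≤ ∑ t ∈ Fintype.piFinset (fun _ : {i : Fin r // i ≠ i0} => Finset.Icc 1 N), G t := by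
    rw [Finset.sum_filter]
    rw [sum_piFinset_split i0 (Finset.Icc 1 N)
      (fun X => if (∏ i, ((X i : ℝ)) ^ (a i)) ≤ B ∧ X i0 = η B (fun j => X j.1)
        then ∏ i, (X i : ℝ) ^ ((a i : ℝ) - 1) else 0)]
    apply Finset.sum_le_sum
    intro t _
    have hXt : ∀ n : ℕ, ((fun i => if h : i = i0 then n else t ⟨i, h⟩) i0) = n := by
      intro n; simp
    have hXr : ∀ (n : ℕ) (i' : {i : Fin r // i ≠ i0}),
        ((fun i => if h : i = i0 then n else t ⟨i, h⟩) i'.1) = t i' := by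
      intro n i'; simp [i'.2]
    have hrest : ∀ n : ℕ,
        (fun j : {i : Fin r // i ≠ i0} =>
          (fun i => if h : i = i0 then n else t ⟨i, h⟩) j.1) = t := by
      intro n; funext j; exact hXr n j
    have hcondn : ∀ n : ℕ,
        (∏ i, (((fun i => if h : i = i0 then n else t ⟨i, h⟩) i : ℕ) : ℝ) ^ (a i))
        = ((n:ℝ)) ^ (a i0) * ∏ i' : {i : Fin r // i ≠ i0}, ((t i' : ℝ)) ^ (a i'.1) := by
      intro n
      rw [prod_split_at i0 (fun i =>
        (((fun i => if h : i = i0 then n else t ⟨i, h⟩) i : ℕ) : ℝ) ^ (a i))]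
      congr 1
      · rw [hXt n]
      · exact Finset.prod_congr rfl fun i' _ => by rw [hXr n i']
    have hwtn : ∀ n : ℕ,
        (∏ i, (((fun i => if h : i = i0 then n else t ⟨i, h⟩) i : ℕ) : ℝ) ^ ((a i : ℝ) - 1))
        = ((n:ℝ)) ^ ((a i0 : ℝ) - 1) *
            ∏ i' : {i : Fin r // i ≠ i0}, ((t i' : ℝ)) ^ ((a i'.1 : ℝ) - 1) := by
      intro n
      rw [prod_split_at i0 (fun i =>
        (((fun i => if h : i = i0 then n else t ⟨i, h⟩) i : ℕ) : ℝ) ^ ((a i : ℝ) - 1))]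
      congr 1
      · rw [hXt n]
      · exact Finset.prod_congr rfl fun i' _ => by rw [hXr n i']
    have heq : (∑ n ∈ Finset.Icc 1 N,
        if (∏ i, (((fun i => if h : i = i0 then n else t ⟨i, h⟩) i : ℕ) : ℝ) ^ (a i)) ≤ B ∧
            (fun i => if h : i = i0 then n else t ⟨i, h⟩) i0 =
              η B (fun j => (fun i => if h : i = i0 then n else t ⟨i, h⟩) j.1)
        then ∏ i, (((fun i => if h : i = i0 then n else t ⟨i, h⟩) i : ℕ) : ℝ) ^ ((a i : ℝ) - 1)
        else 0)
        = ∑ n ∈ Finset.Icc 1 N, (if n = η B t then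
            (if ((n:ℝ)) ^ (a i0) * ∏ i' : {i : Fin r // i ≠ i0}, ((t i' : ℝ)) ^ (a i'.1) ≤ B
             then ((n:ℝ)) ^ ((a i0 : ℝ) - 1) *
               ∏ i' : {i : Fin r // i ≠ i0}, ((t i' : ℝ)) ^ ((a i'.1 : ℝ) - 1)
             else 0) else 0) := by
      apply Finset.sum_congr rfl
      intro n _
      rw [hcondn n, hwtn n, hrest n, hXt n]
      by_cases hn : n = η B t <;> simp [hn]
    rw [heq, Finset.sum_ite_eq' (Finset.Icc 1 N) (η B t)]
    by_cases hmem : η B t ∈ Finset.Icc 1 N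
    · rw [if_pos hmem, hGdef]
    · rw [if_neg hmem, hGdef]
      dsimp only
      split_ifs
      · positivity
      · exact le_rfl
  have key : ∃ K1 : ℝ, 0 ≤ K1 ∧ K1 ≤ 2 ^ ((A:ℕ):ℝ) * (A:ℝ) ∧
      ∑ t ∈ Fintype.piFinset (fun _ : {i : Fin r // i ≠ i0} => Finset.Icc 1 N), G t
        ≤ K1 * B * (1 + Real.log N) ^ (r - 2) := by
    rcases Nat.eq_zero_or_pos (a i0) with ha0 | ha0
    · -- a i0 = 0
      set c : {i : Fin r // i ≠ i0} → ℝ := fun i' => (a i'.1 : ℝ) with hcdef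
      have claim : ∀ t ∈ Fintype.piFinset (fun _ : {i : Fin r // i ≠ i0} => Finset.Icc 1 N),
          G t ≤ (if ∏ i' : {i : Fin r // i ≠ i0}, ((t i' : ℝ)) ^ (c i') ≤ B
            then ∏ i' : {i : Fin r // i ≠ i0}, ((t i' : ℝ)) ^ (c i' - 1) else 0) := by
        intro t ht
        simp only [Fintype.mem_piFinset, Finset.mem_Icc] at ht
        have htpos : ∀ i' : {i : Fin r // i ≠ i0}, (0:ℝ) < (t i' : ℝ) := fun i' => by
          have := (ht i').1; positivity
        have he1 : (1:ℝ) ≤ (η B t : ℝ) := by exact_mod_cast hη B t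
        have hprodc : ∏ i' : {i : Fin r // i ≠ i0}, ((t i' : ℝ)) ^ (c i')
            = ∏ i' : {i : Fin r // i ≠ i0}, ((t i' : ℝ)) ^ (a i'.1) :=
          Finset.prod_congr rfl fun i' _ => Real.rpow_natCast _ _
        have hwc : ∏ i' : {i : Fin r // i ≠ i0}, ((t i' : ℝ)) ^ ((a i'.1 : ℝ) - 1)
            = ∏ i' : {i : Fin r // i ≠ i0}, ((t i' : ℝ)) ^ (c i' - 1) := rfl
        rw [hGdef]
        dsimp only
        rw [ha0, pow_zero, one_mul]
        split_ifs with h1 h2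
        · -- value bound
          rw [← hwc]
          have hWn : 0 ≤ ∏ i' : {i : Fin r // i ≠ i0}, ((t i' : ℝ)) ^ ((a i'.1 : ℝ) - 1) :=
            Finset.prod_nonneg fun i' _ => Real.rpow_nonneg (htpos i').le _
          have hinv : ((η B t : ℝ)) ^ (((0:ℕ):ℝ) - 1) ≤ 1 := by
            rw [Nat.cast_zero, zero_sub, Real.rpow_neg_one]
            exact inv_le_one_of_one_le₀ he1
          calc ((η B t : ℝ)) ^ (((0:ℕ):ℝ) - 1) *
                ∏ i' : {i : Fin r // i ≠ i0}, ((t i' : ℝ)) ^ ((a i'.1 : ℝ) - 1)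
              ≤ 1 * ∏ i' : {i : Fin r // i ≠ i0}, ((t i' : ℝ)) ^ ((a i'.1 : ℝ) - 1) :=
                mul_le_mul_of_nonneg_right hinv hWn
            _ = _ := one_mul _
        · exact absurd (hprodc ▸ h1) h2
        · exact Finset.prod_nonneg fun i' _ => Real.rpow_nonneg (htpos i').le _
        · exact le_rfl
      by_cases hex : ∃ j' : {i : Fin r // i ≠ i0}, 0 < a j'.1
      · obtain ⟨j', hj'⟩ := hex
        have hcj : 0 < c j' := by
          simp only [hcdef]; exact_mod_cast hj'
        have hcore := core_bound c j' hcj N (Q := B) hB0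
        rw [hcard2] at hcore
        refine ⟨2 ^ (c j') / c j', by positivity, ?_, ?_⟩
        · have hcjA : c j' ≤ (A:ℝ) := haA j'.1
          have h2c : (2:ℝ) ^ (c j') ≤ 2 ^ ((A:ℕ):ℝ) :=
            Real.rpow_le_rpow_of_exponent_le one_le_two hcjA
          have hj1 : (1:ℝ) ≤ c j' := by simp only [hcdef]; exact_mod_cast hj'
          have hinv : 1 / c j' ≤ (A:ℝ) := by
            calc 1 / c j' ≤ 1 := by rw [div_le_one hcj]; exact hj1
              _ ≤ (A:ℝ) := by linarith
          calc 2 ^ (c j') / c j' = 2 ^ (c j') * (1 / c j') := by ring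
            _ ≤ 2 ^ ((A:ℕ):ℝ) * (A:ℝ) := mul_le_mul h2c hinv (by positivity) (by positivity)
        · exact le_trans (Finset.sum_le_sum claim) hcore
      · push_neg at hex
        have hc00 : ∀ i' : {i : Fin r // i ≠ i0}, c i' = 0 := by
          intro i'
          have hz : a i'.1 = 0 := by have := hex i'; omega
          rw [hcdef]; simp [hz]
        refine ⟨c₁ * (A:ℝ), by positivity,
          mul_le_mul_of_nonneg_right hc₁2A hApos.le, ?_⟩
        calc ∑ t ∈ Fintype.piFinset (fun _ : {i : Fin r // i ≠ i0} => Finset.Icc 1 N), G t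
            ≤ ∑ t ∈ Fintype.piFinset (fun _ : {i : Fin r // i ≠ i0} => Finset.Icc 1 N),
              (if ∏ i' : {i : Fin r // i ≠ i0}, ((t i' : ℝ)) ^ (c i') ≤ B
               then ∏ i' : {i : Fin r // i ≠ i0}, ((t i' : ℝ)) ^ (c i' - 1) else 0) :=
              Finset.sum_le_sum claim
          _ ≤ ∑ t ∈ Fintype.piFinset (fun _ : {i : Fin r // i ≠ i0} => Finset.Icc 1 N),
              ∏ i' : {i : Fin r // i ≠ i0}, ((t i' : ℝ))⁻¹ := by
              apply Finset.sum_le_sum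
              intro t ht
              split_ifs with h
              · apply le_of_eq
                apply Finset.prod_congr rfl
                intro i' _
                rw [hc00 i', zero_sub, Real.rpow_neg_one]
              · exact Finset.prod_nonneg fun i' _ => by positivity
          _ ≤ (1 + Real.log N) ^ (r - 1) := hzero
          _ = (1 + Real.log N) ^ (r - 2) * (1 + Real.log N) := by rw [hr12, pow_succ]
          _ ≤ (1 + Real.log N) ^ (r - 2) * (c₁ * Real.log B) :=
              mul_le_mul_of_nonneg_left hLle (pow_nonneg hL0 _)
          _ ≤ (1 + Real.log N) ^ (r - 2) * (c₁ * ((A:ℝ) * B)) := by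
              apply mul_le_mul_of_nonneg_left _ (pow_nonneg hL0 _)
              apply mul_le_mul_of_nonneg_left _ hc₁pos.le
              calc Real.log B ≤ B := hlogBB
                _ ≤ (A:ℝ) * B := le_mul_of_one_le_left hB0.le (by linarith)
          _ = c₁ * (A:ℝ) * B * (1 + Real.log N) ^ (r - 2) := by ring
    · -- 1 ≤ a i0
      have ha0r : (1:ℝ) ≤ (a i0 : ℝ) := by exact_mod_cast ha0
      have ha0pos : (0:ℝ) < (a i0 : ℝ) := by linarith
      set q : ℝ := ((a i0 : ℝ) - 1) / (a i0 : ℝ) with hqdef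
      have hq0 : 0 ≤ q := div_nonneg (by linarith) ha0pos.le
      set c : {i : Fin r // i ≠ i0} → ℝ := fun i' => (a i'.1 : ℝ) / (a i0 : ℝ) with hcdef
      have hQpos : (0:ℝ) < B ^ (1/(a i0 : ℝ)) := Real.rpow_pos_of_pos hB0 _
      have hqsum : q + 1/(a i0 : ℝ) = 1 := by rw [hqdef]; field_simp; ring
      have claim : ∀ t ∈ Fintype.piFinset (fun _ : {i : Fin r // i ≠ i0} => Finset.Icc 1 N),
          G t ≤ B ^ q * (if ∏ i' : {i : Fin r // i ≠ i0}, ((t i' : ℝ)) ^ (c i') ≤ B ^ (1/(a i0:ℝ))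
            then ∏ i' : {i : Fin r // i ≠ i0}, ((t i' : ℝ)) ^ (c i' - 1) else 0) := by
        intro t ht
        simp only [Fintype.mem_piFinset, Finset.mem_Icc] at ht
        have htpos : ∀ i' : {i : Fin r // i ≠ i0}, (0:ℝ) < (t i' : ℝ) := fun i' => by
          have := (ht i').1; positivity
        have he1 : (1:ℝ) ≤ (η B t : ℝ) := by exact_mod_cast hη B t
        have he0 : (0:ℝ) < (η B t : ℝ) := by linarith
        have hPpos : (0:ℝ) < ∏ i' : {i : Fin r // i ≠ i0}, ((t i' : ℝ)) ^ (a i'.1) :=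
          Finset.prod_pos fun i' _ => pow_pos (htpos i') _
        have hprodc : ∏ i' : {i : Fin r // i ≠ i0}, ((t i' : ℝ)) ^ (c i')
            = (∏ i' : {i : Fin r // i ≠ i0}, ((t i' : ℝ)) ^ (a i'.1)) ^ (1/(a i0:ℝ)) := by
          rw [← Real.finset_prod_rpow _ _ (fun i' _ => pow_nonneg (htpos i').le _) _]
          apply Finset.prod_congr rfl
          intro i' _
          rw [← Real.rpow_natCast ((t i' : ℝ)) (a i'.1), ← Real.rpow_mul (htpos i').le]
          rw [hcdef, mul_one_div]
        rw [hGdef]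
        dsimp only
        split_ifs with h1 h2
        · -- main value bound
          have hea : ((η B t : ℝ)) ^ ((a i0 : ℕ):ℝ) *
              ∏ i' : {i : Fin r // i ≠ i0}, ((t i' : ℝ)) ^ (a i'.1) ≤ B := by
            rwa [Real.rpow_natCast]
          have heaP : ((η B t : ℝ)) ^ ((a i0 : ℕ):ℝ)
              ≤ B / ∏ i' : {i : Fin r // i ≠ i0}, ((t i' : ℝ)) ^ (a i'.1) :=
            (le_div_iff₀ hPpos).mpr hea
          have he2 : ((η B t : ℝ)) ^ ((a i0 : ℝ) - 1)
              ≤ (B / ∏ i' : {i : Fin r // i ≠ i0}, ((t i' : ℝ)) ^ (a i'.1)) ^ q := by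
            have hmul : ((a i0 : ℕ):ℝ) * q = (a i0 : ℝ) - 1 := by
              rw [hqdef]; field_simp
            rw [← hmul, Real.rpow_mul he0.le]
            exact Real.rpow_le_rpow (Real.rpow_nonneg he0.le _) heaP hq0
          have hW : ∏ i' : {i : Fin r // i ≠ i0}, ((t i' : ℝ)) ^ ((a i'.1 : ℝ) - 1)
              = (∏ i' : {i : Fin r // i ≠ i0}, ((t i' : ℝ)) ^ (a i'.1)) *
                ∏ i' : {i : Fin r // i ≠ i0}, ((t i' : ℝ))⁻¹ := by
            rw [← Finset.prod_mul_distrib]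
            apply Finset.prod_congr rfl
            intro i' _
            rw [Real.rpow_sub (htpos i'), Real.rpow_one, Real.rpow_natCast, div_eq_mul_inv]
          have hWn : 0 ≤ ∏ i' : {i : Fin r // i ≠ i0}, ((t i' : ℝ)) ^ ((a i'.1 : ℝ) - 1) :=
            Finset.prod_nonneg fun i' _ => Real.rpow_nonneg (htpos i').le _
          have hPq : (∏ i' : {i : Fin r // i ≠ i0}, ((t i' : ℝ)) ^ (a i'.1)) ^ (1 - q)
              = (∏ i' : {i : Fin r // i ≠ i0}, ((t i' : ℝ)) ^ (a i'.1)) /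
                (∏ i' : {i : Fin r // i ≠ i0}, ((t i' : ℝ)) ^ (a i'.1)) ^ q := by
            rw [Real.rpow_sub hPpos, Real.rpow_one]
          have hq1 : 1 - q = 1/(a i0 : ℝ) := by rw [hqdef]; field_simp; ring
          calc ((η B t : ℝ)) ^ ((a i0 : ℝ) - 1) *
                ∏ i' : {i : Fin r // i ≠ i0}, ((t i' : ℝ)) ^ ((a i'.1 : ℝ) - 1)
              ≤ (B / ∏ i' : {i : Fin r // i ≠ i0}, ((t i' : ℝ)) ^ (a i'.1)) ^ q *
                ∏ i' : {i : Fin r // i ≠ i0}, ((t i' : ℝ)) ^ ((a i'.1 : ℝ) - 1) :=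
                mul_le_mul_of_nonneg_right he2 hWn
            _ = B ^ q *
                ((∏ i' : {i : Fin r // i ≠ i0}, ((t i' : ℝ)) ^ (a i'.1)) /
                  (∏ i' : {i : Fin r // i ≠ i0}, ((t i' : ℝ)) ^ (a i'.1)) ^ q) *
                ∏ i' : {i : Fin r // i ≠ i0}, ((t i' : ℝ))⁻¹ := by
                rw [hW, Real.div_rpow hB0.le hPpos.le]; ring
            _ = B ^ q *
                (∏ i' : {i : Fin r // i ≠ i0}, ((t i' : ℝ)) ^ (a i'.1)) ^ (1/(a i0:ℝ)) *
                ∏ i' : {i : Fin r // i ≠ i0}, ((t i' : ℝ))⁻¹ := by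
                rw [← hq1, hPq]
            _ = B ^ q * ((∏ i' : {i : Fin r // i ≠ i0}, ((t i' : ℝ)) ^ (c i')) *
                ∏ i' : {i : Fin r // i ≠ i0}, ((t i' : ℝ))⁻¹) := by
                rw [hprodc]; ring
            _ = B ^ q * ∏ i' : {i : Fin r // i ≠ i0}, ((t i' : ℝ)) ^ (c i' - 1) := by
                congr 1
                rw [← Finset.prod_mul_distrib]
                apply Finset.prod_congr rfl
                intro i' _
                rw [Real.rpow_sub (htpos i'), Real.rpow_one, div_eq_mul_inv]
        · exfalso
          apply h2
          have honele : (1:ℝ) ≤ ((η B t : ℝ)) ^ (a i0) := one_le_pow₀ he1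
          have hPB : (∏ i' : {i : Fin r // i ≠ i0}, ((t i' : ℝ)) ^ (a i'.1)) ≤ B := by
            nlinarith [hPpos, h1, honele]
          rw [hprodc]
          exact Real.rpow_le_rpow hPpos.le hPB (by positivity)
        · exact mul_nonneg (Real.rpow_nonneg hB0.le _)
            (Finset.prod_nonneg fun i' _ => Real.rpow_nonneg (htpos i').le _)
        · rw [mul_zero]
      by_cases hex : ∃ j' : {i : Fin r // i ≠ i0}, 0 < a j'.1
      · obtain ⟨j', hj'⟩ := hex
        have hj1 : (1:ℝ) ≤ (a j'.1 : ℝ) := by exact_mod_cast hj'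
        have hcj : 0 < c j' := by
          rw [hcdef]; exact div_pos (by linarith) ha0pos
        have hcore := core_bound c j' hcj N (Q := B ^ (1/(a i0:ℝ))) hQpos
        rw [hcard2] at hcore
        refine ⟨2 ^ (c j') / c j', by positivity, ?_, ?_⟩
        · have hcjA : c j' ≤ (A:ℝ) := by
            rw [hcdef]
            calc (a j'.1 : ℝ) / (a i0 : ℝ) ≤ (a j'.1 : ℝ) :=
                div_le_self (Nat.cast_nonneg _) ha0r
              _ ≤ (A:ℝ) := haA j'.1
          have h2c : (2:ℝ) ^ (c j') ≤ 2 ^ ((A:ℕ):ℝ) :=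
            Real.rpow_le_rpow_of_exponent_le one_le_two hcjA
          have hinv : 1 / c j' ≤ (A:ℝ) := by
            rw [hcdef]
            dsimp only
            rw [one_div_div]
            calc (a i0 : ℝ) / (a j'.1 : ℝ) ≤ (a i0 : ℝ) :=
                div_le_self (Nat.cast_nonneg _) hj1
              _ ≤ (A:ℝ) := haA i0
          calc 2 ^ (c j') / c j' = 2 ^ (c j') * (1 / c j') := by ring
            _ ≤ 2 ^ ((A:ℕ):ℝ) * (A:ℝ) := mul_le_mul h2c hinv (by positivity) (by positivity)
        · calc ∑ t ∈ Fintype.piFinset (fun _ : {i : Fin r // i ≠ i0} => Finset.Icc 1 N), G t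
              ≤ ∑ t ∈ Fintype.piFinset (fun _ : {i : Fin r // i ≠ i0} => Finset.Icc 1 N),
                B ^ q * (if ∏ i' : {i : Fin r // i ≠ i0}, ((t i' : ℝ)) ^ (c i') ≤ B ^ (1/(a i0:ℝ))
                  then ∏ i' : {i : Fin r // i ≠ i0}, ((t i' : ℝ)) ^ (c i' - 1) else 0) :=
                Finset.sum_le_sum claim
            _ = B ^ q * ∑ t ∈ Fintype.piFinset (fun _ : {i : Fin r // i ≠ i0} => Finset.Icc 1 N),
                (if ∏ i' : {i : Fin r // i ≠ i0}, ((t i' : ℝ)) ^ (c i') ≤ B ^ (1/(a i0:ℝ))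
                  then ∏ i' : {i : Fin r // i ≠ i0}, ((t i' : ℝ)) ^ (c i' - 1) else 0) := by
                rw [Finset.mul_sum]
            _ ≤ B ^ q * (2 ^ (c j') / c j' * B ^ (1/(a i0:ℝ)) * (1 + Real.log N) ^ (r - 2)) :=
                mul_le_mul_of_nonneg_left hcore (Real.rpow_nonneg hB0.le _)
            _ = 2 ^ (c j') / c j' * (B ^ q * B ^ (1/(a i0:ℝ))) * (1 + Real.log N) ^ (r - 2) := by
                ring
            _ = 2 ^ (c j') / c j' * B * (1 + Real.log N) ^ (r - 2) := by
                rw [← Real.rpow_add hB0, hqsum, Real.rpow_one]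
      · push_neg at hex
        have hc00 : ∀ i' : {i : Fin r // i ≠ i0}, c i' = 0 := by
          intro i'
          have hz : a i'.1 = 0 := by have := hex i'; omega
          rw [hcdef]; simp [hz]
        refine ⟨c₁ * (A:ℝ), by positivity,
          mul_le_mul_of_nonneg_right hc₁2A hApos.le, ?_⟩
        have hlogB_le : Real.log B ≤ (a i0 : ℝ) * B ^ (1/(a i0:ℝ)) := by
          have h1 : Real.log (B ^ (1/(a i0:ℝ))) = (1/(a i0:ℝ)) * Real.log B :=
            Real.log_rpow hB0 _
          have h2 : Real.log (B ^ (1/(a i0:ℝ))) ≤ B ^ (1/(a i0:ℝ)) := by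
            have := Real.log_le_sub_one_of_pos hQpos; linarith
          rw [h1] at h2
          rw [div_mul_eq_mul_div, one_mul, div_le_iff₀ ha0pos] at h2
          linarith [mul_comm ((a i0 : ℝ)) (B ^ (1/(a i0:ℝ)))]
        calc ∑ t ∈ Fintype.piFinset (fun _ : {i : Fin r // i ≠ i0} => Finset.Icc 1 N), G t
            ≤ ∑ t ∈ Fintype.piFinset (fun _ : {i : Fin r // i ≠ i0} => Finset.Icc 1 N),
              B ^ q * (if ∏ i' : {i : Fin r // i ≠ i0}, ((t i' : ℝ)) ^ (c i') ≤ B ^ (1/(a i0:ℝ))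
                then ∏ i' : {i : Fin r // i ≠ i0}, ((t i' : ℝ)) ^ (c i' - 1) else 0) :=
              Finset.sum_le_sum claim
          _ = B ^ q * ∑ t ∈ Fintype.piFinset (fun _ : {i : Fin r // i ≠ i0} => Finset.Icc 1 N),
              (if ∏ i' : {i : Fin r // i ≠ i0}, ((t i' : ℝ)) ^ (c i') ≤ B ^ (1/(a i0:ℝ))
                then ∏ i' : {i : Fin r // i ≠ i0}, ((t i' : ℝ)) ^ (c i' - 1) else 0) := by
              rw [Finset.mul_sum]
          _ ≤ B ^ q * ∑ t ∈ Fintype.piFinset (fun _ : {i : Fin r // i ≠ i0} => Finset.Icc 1 N),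
              ∏ i' : {i : Fin r // i ≠ i0}, ((t i' : ℝ))⁻¹ := by
              apply mul_le_mul_of_nonneg_left _ (Real.rpow_nonneg hB0.le _)
              apply Finset.sum_le_sum
              intro t ht
              split_ifs with h
              · apply le_of_eq
                apply Finset.prod_congr rfl
                intro i' _
                rw [hc00 i', zero_sub, Real.rpow_neg_one]
              · exact Finset.prod_nonneg fun i' _ => by positivity
          _ ≤ B ^ q * (1 + Real.log N) ^ (r - 1) :=
              mul_le_mul_of_nonneg_left hzero (Real.rpow_nonneg hB0.le _)
          _ = B ^ q * ((1 + Real.log N) ^ (r - 2) * (1 + Real.log N)) := by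
              rw [hr12, pow_succ]
          _ ≤ B ^ q * ((1 + Real.log N) ^ (r - 2) * (c₁ * Real.log B)) := by
              apply mul_le_mul_of_nonneg_left _ (Real.rpow_nonneg hB0.le _)
              exact mul_le_mul_of_nonneg_left hLle (pow_nonneg hL0 _)
          _ ≤ B ^ q * ((1 + Real.log N) ^ (r - 2) * (c₁ * ((a i0 : ℝ) * B ^ (1/(a i0:ℝ))))) := by
              apply mul_le_mul_of_nonneg_left _ (Real.rpow_nonneg hB0.le _)
              apply mul_le_mul_of_nonneg_left _ (pow_nonneg hL0 _)
              exact mul_le_mul_of_nonneg_left hlogB_le hc₁pos.le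
          _ = (c₁ * (a i0 : ℝ)) * (B ^ q * B ^ (1/(a i0:ℝ))) * (1 + Real.log N) ^ (r - 2) := by
              ring
          _ = (c₁ * (a i0 : ℝ)) * B * (1 + Real.log N) ^ (r - 2) := by
              rw [← Real.rpow_add hB0, hqsum, Real.rpow_one]
          _ ≤ c₁ * (A:ℝ) * B * (1 + Real.log N) ^ (r - 2) := by
              have h1 : c₁ * (a i0 : ℝ) ≤ c₁ * (A:ℝ) :=
                mul_le_mul_of_nonneg_left (haA i0) hc₁pos.le
              apply mul_le_mul_of_nonneg_right _ (pow_nonneg hL0 _)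
              exact mul_le_mul_of_nonneg_right h1 hB0.le
  obtain ⟨K1, hK10, hK1le, hSG⟩ := key
  have hpow2 : (1 + Real.log N) ^ (r - 2) ≤ (c₁ * Real.log B) ^ (r - 2) :=
    pow_le_pow_left₀ hL0 hLle _
  refine le_trans step1 (le_trans hSG ?_)
  calc K1 * B * (1 + Real.log N) ^ (r - 2)
      ≤ (2 ^ ((A:ℕ):ℝ) * (A:ℝ)) * B * (c₁ * Real.log B) ^ (r - 2) := by
        apply mul_le_mul (mul_le_mul hK1le le_rfl hB0.le (by positivity)) hpow2
          (pow_nonneg hL0 _) (by positivity)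
    _ = 2 ^ ((A:ℕ):ℝ) * (A:ℝ) * c₁ ^ (r - 2) * B * (Real.log B) ^ (r - 2) := by
        rw [mul_pow]; ring
end

section
/- Let $\mathcal{P}$ be a finite set of primes with product $\Pi(\mathcal{P})$, let $\mathcal{A} = (a_i)_{i \in I}$ be a finite sequence of integers, and for $d \in \mathbb{N}_{\geq 1}$ let $|\mathcal{A}_d| = \#\{i \in I : d \mid a_i\}$. Let $\mathfrak{X} > 0$ and let $g$ be a multiplicative function with $0 < g(p) < 1$ for each $p \mid \Pi(\mathcal{P})$. Then for every $D > 1$, the sifting function $S(\mathcal{A}, \mathcal{P}) = \#\{i \in I : \gcd(a_i, \Pi(\mathcal{P})) = 1\}$ satisfies $S(\mathcal{A}, \mathcal{P}) \leq \mathfrak{X}/J(\mathcal{P}, D) + \sum_{d \mid \Pi(\mathcal{P}),\, d < D} \tau_3(d) \, |R_d|$, where $J(\mathcal{P}, D) = \sum_{d \mid \Pi(\mathcal{P}),\, d < \sqrt{D}} \prod_{p \mid d} \frac{g(p)}{1 - g(p)}$ and $R_d = |\mathcal{A}_d| - g(d)\mathfrak{X}$. -/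
open scoped Classical
open Finset

namespace SelbergAux

noncomputable def Hf (f : ℕ → ℝ) (d : ℕ) : ℝ := ∏ p ∈ d.primeFactors, f p

lemma Hf_one (f : ℕ → ℝ) : Hf f 1 = 1 := by simp [Hf]

lemma Hf_mul (f : ℕ → ℝ) {m n : ℕ} (hm : m ≠ 0) (hn : n ≠ 0) (h : Nat.Coprime m n) :
    Hf f (m * n) = Hf f m * Hf f n := by
  unfold Hf
  rw [Nat.primeFactors_mul hm hn, Finset.prod_union h.disjoint_primeFactors]

lemma Hf_prime (f : ℕ → ℝ) {p : ℕ} (hp : p.Prime) : Hf f p = f p := by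
  simp [Hf, Nat.Prime.primeFactors hp]

lemma sum_divisors_Hf (f : ℕ → ℝ) {n : ℕ} (hn : Squarefree n) :
    ∑ d ∈ n.divisors, Hf f d = ∏ p ∈ n.primeFactors, (1 + f p) := by
  classical
  have h0 : n ≠ 0 := hn.ne_zero
  rw [show ∏ p ∈ n.primeFactors, (1 + f p) = ∏ p ∈ n.primeFactors, (f p + 1) by
    exact Finset.prod_congr rfl fun p _ => add_comm _ _, Finset.prod_add]
  simp only [Finset.prod_const_one, mul_one]
  refine Finset.sum_nbij' (fun d => d.primeFactors) (fun t => ∏ p ∈ t, p) ?_ ?_ ?_ ?_ ?_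
  · intro d hd
    rw [Finset.mem_powerset]
    exact Nat.primeFactors_mono (Nat.dvd_of_mem_divisors hd) h0
  · intro t ht
    rw [Finset.mem_powerset] at ht
    refine Nat.mem_divisors.mpr ⟨?_, h0⟩
    exact dvd_trans (Finset.prod_dvd_prod_of_subset _ _ _ ht) (Nat.prod_primeFactors_dvd n)
  · intro d hd
    exact Nat.prod_primeFactors_of_squarefree (hn.squarefree_of_dvd (Nat.dvd_of_mem_divisors hd))
  · intro t ht
    rw [Finset.mem_powerset] at ht
    exact Nat.primeFactors_prod (fun p hp => Nat.prime_of_mem_primeFactors (ht hp))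
  · intro d hd; rfl

lemma sum_divisors_mu {n : ℕ} (hn : Squarefree n) :
    ∑ d ∈ n.divisors, Hf (fun _ => (-1 : ℝ)) d = if n = 1 then 1 else 0 := by
  rw [sum_divisors_Hf _ hn]
  simp only [add_neg_cancel, Finset.prod_const, zero_pow_eq, Finset.card_eq_zero]
  by_cases h1 : n = 1
  · simp [h1]
  · have : n.primeFactors ≠ ∅ := by
      rw [Ne, Nat.primeFactors_eq_empty]; simp [hn.ne_zero, h1]
    simp [h1, this]

lemma g_eq_Hf (g : ℕ → ℝ) (hg1 : g 1 = 1)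
    (hgmul : ∀ m n : ℕ, Nat.Coprime m n → g (m * n) = g m * g n) :
    ∀ d : ℕ, Squarefree d → g d = Hf g d := by
  intro d
  induction d using Nat.strong_induction_on with
  | _ d ih =>
    intro hd
    rcases eq_or_ne d 1 with rfl | hne
    · simp [Hf, hg1]
    · obtain ⟨p, hp, hpd⟩ := Nat.exists_prime_and_dvd hne
      obtain ⟨m, rfl⟩ := hpd
      have hsq := hd
      rw [Nat.squarefree_mul_iff] at hsq
      obtain ⟨hcop, hpsq, hmsq⟩ := hsq
      have hm1 : m < p * m := by
        have := hp.two_le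
        have hm0 : 0 < m := Nat.pos_of_ne_zero hmsq.ne_zero
        calc m = 1 * m := (one_mul m).symm
        _ < p * m := by exact (Nat.mul_lt_mul_right hm0).mpr (by omega)
      rw [hgmul p m hcop, Hf_mul g hp.ne_zero hmsq.ne_zero hcop, Hf_prime g hp,
        ih m hm1 hmsq]


section Main
variable (g : ℕ → ℝ) (P0 : ℕ) (D : ℝ)

noncomputable def hh (d : ℕ) : ℝ := Hf (fun p => g p / (1 - g p)) d
noncomputable def Gg (d : ℕ) : ℝ := Hf g d
noncomputable def mu' (d : ℕ) : ℝ := Hf (fun _ => (-1 : ℝ)) d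
noncomputable def tt (d : ℕ) : ℝ := Hf (fun p => (1 - g p) / g p) d
noncomputable def Sset : Finset ℕ := P0.divisors.filter (fun d => (d : ℝ) < Real.sqrt D)
noncomputable def Jsum : ℝ := ∑ d ∈ Sset P0 D, hh g d
noncomputable def Mset (d : ℕ) : Finset ℕ :=
  P0.divisors.filter (fun m => Nat.Coprime m d ∧ (m : ℝ) * (d : ℝ) < Real.sqrt D)
noncomputable def Tsum (d : ℕ) : ℝ := ∑ m ∈ Mset P0 D d, hh g m
noncomputable def lam (d : ℕ) : ℝ := mu' d * (hh g d / Gg g d) * Tsum g P0 D d / Jsum g P0 D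

variable {g P0 D}
variable (hsq : Squarefree P0) (hgp : ∀ p ∈ P0.primeFactors, 0 < g p ∧ g p < 1) (hD : 1 < D)

section Basics
include hsq hgp

lemma Gg_pos {d : ℕ} (hd : d ∣ P0) : 0 < Gg g d := by
  unfold Gg Hf
  apply Finset.prod_pos
  intro p hp
  exact (hgp p (Nat.primeFactors_mono hd hsq.ne_zero hp)).1

lemma hh_pos {d : ℕ} (hd : d ∣ P0) : 0 < hh g d := by
  unfold hh Hf
  apply Finset.prod_pos
  intro p hp
  have h := hgp p (Nat.primeFactors_mono hd hsq.ne_zero hp)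
  exact div_pos h.1 (by linarith [h.2])

lemma tt_mul_hh {d : ℕ} (hd : d ∣ P0) : tt g d * hh g d = 1 := by
  unfold tt hh Hf
  rw [← Finset.prod_mul_distrib]
  apply Finset.prod_eq_one
  intro p hp
  have h := hgp p (Nat.primeFactors_mono hd hsq.ne_zero hp)
  have h1 : g p ≠ 0 := h.1.ne'
  have h2 : (1 : ℝ) - g p ≠ 0 := by linarith [h.2]
  field_simp

omit hsq hgp in
lemma mu'_sq {d : ℕ} : mu' d * mu' d = 1 := by
  unfold mu' Hf
  rw [← Finset.prod_mul_distrib]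
  simp

lemma sum_divisors_tt {m : ℕ} (hm : m ∣ P0) :
    ∑ k ∈ m.divisors, tt g k = (Gg g m)⁻¹ := by
  unfold tt
  rw [sum_divisors_Hf _ (hsq.squarefree_of_dvd hm)]
  unfold Gg Hf
  rw [← Finset.prod_inv_distrib]
  apply Finset.prod_congr rfl
  intro p hp
  have h := hgp p (Nat.primeFactors_mono hm hsq.ne_zero hp)
  have h1 : g p ≠ 0 := h.1.ne'
  field_simp
  ring

lemma sum_divisors_hh {d : ℕ} (hd : d ∣ P0) :
    ∑ e ∈ d.divisors, hh g e = hh g d / Gg g d := by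
  unfold hh
  rw [sum_divisors_Hf _ (hsq.squarefree_of_dvd hd),
    eq_div_iff (Gg_pos hsq hgp hd).ne']
  unfold Gg Hf
  rw [← Finset.prod_mul_distrib]
  apply Finset.prod_congr rfl
  intro p hp
  have h := hgp p (Nat.primeFactors_mono hd hsq.ne_zero hp)
  have h1 : g p ≠ 0 := h.1.ne'
  have h2 : (1 : ℝ) - g p ≠ 0 := by linarith [h.2]
  field_simp
  ring

end Basics
section SJ
include hsq hD

lemma one_mem_S : 1 ∈ Sset P0 D := by
  unfold Sset
  rw [Finset.mem_filter, Nat.mem_divisors]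
  refine ⟨⟨one_dvd _, hsq.ne_zero⟩, ?_⟩
  rw [Nat.cast_one]
  have := Real.lt_sqrt (x := 1) (y := D) zero_le_one
  rw [this]; simpa using hD

omit hD in
lemma mem_S_dvd {d : ℕ} (hd : d ∈ Sset P0 D) : d ∣ P0 := by
  unfold Sset at hd
  rw [Finset.mem_filter, Nat.mem_divisors] at hd
  exact hd.1.1

omit hsq hD in
lemma mem_S_lt {d : ℕ} (hd : d ∈ Sset P0 D) : (d : ℝ) < Real.sqrt D := by
  unfold Sset at hd
  exact (Finset.mem_filter.mp hd).2

include hgp in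
lemma Jsum_pos : 0 < Jsum g P0 D := by
  unfold Jsum
  apply Finset.sum_pos
  · intro d hd
    exact hh_pos hsq hgp (mem_S_dvd hsq hd)
  · exact ⟨1, one_mem_S hsq hD⟩

include hgp in
lemma lam_one : lam g P0 D 1 = 1 := by
  unfold lam
  have hM : Mset P0 D 1 = Sset P0 D := by
    unfold Mset Sset
    apply Finset.filter_congr
    intro m _
    simp [Nat.coprime_one_right]
  rw [show Tsum g P0 D 1 = Jsum g P0 D by unfold Tsum Jsum; rw [hM]]
  unfold mu' Gg
  rw [Hf_one, Hf_one, show hh g 1 = 1 from Hf_one _]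
  norm_num [div_self (Jsum_pos hsq hgp hD).ne']

include hgp in
lemma abs_lam_le {d : ℕ} (hd : d ∈ Sset P0 D) : |lam g P0 D d| ≤ 1 := by
  have hdP : d ∣ P0 := mem_S_dvd hsq hd
  have hd0 : d ≠ 0 := fun h => hsq.ne_zero (zero_dvd_iff.mp (h ▸ hdP))
  have hJ := Jsum_pos hsq hgp hD
  have hG := Gg_pos hsq hgp hdP
  have hhd := hh_pos hsq hgp hdP
  have hT : 0 ≤ Tsum g P0 D d := by
    apply Finset.sum_nonneg
    intro m hm
    unfold Mset at hm
    exact (hh_pos hsq hgp (Nat.dvd_of_mem_divisors (Finset.mem_filter.mp hm).1)).le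
  have hmu : |mu' d| = 1 := by
    unfold mu' Hf
    rw [Finset.prod_const, abs_pow, abs_neg, abs_one, one_pow]
  -- key: (hh d / Gg d) * Tsum d ≤ Jsum
  have key : (hh g d / Gg g d) * Tsum g P0 D d ≤ Jsum g P0 D := by
    rw [← sum_divisors_hh hsq hgp hdP]
    unfold Tsum
    rw [Finset.sum_mul_sum, ← Finset.sum_product' (s := d.divisors) (t := Mset P0 D d)
      (f := fun e m => hh g e * hh g m)]
    have hinj : ∀ x ∈ d.divisors ×ˢ Mset P0 D d, ∀ y ∈ d.divisors ×ˢ Mset P0 D d,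
        x.1 * x.2 = y.1 * y.2 → x = y := by
      rintro ⟨e₁, m₁⟩ hx ⟨e₂, m₂⟩ hy hxy
      simp only [Finset.mem_product, Nat.mem_divisors] at hx hy
      unfold Mset at hx hy
      rw [Finset.mem_filter] at hx hy
      have hc₁ : Nat.Coprime e₁ m₂ := Nat.Coprime.coprime_dvd_left hx.1.1 hy.2.2.1.symm
      have hc₂ : Nat.Coprime e₂ m₁ := Nat.Coprime.coprime_dvd_left hy.1.1 hx.2.2.1.symm
      have he : e₁ = e₂ := by
        have h1 : e₁ ∣ e₂ * m₂ := hxy ▸ Dvd.intro m₁ rfl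
        have h2 : e₂ ∣ e₁ * m₁ := hxy ▸ Dvd.intro m₂ rfl
        exact Nat.dvd_antisymm ((Nat.Coprime.dvd_of_dvd_mul_right hc₁ h1))
          ((Nat.Coprime.dvd_of_dvd_mul_right hc₂ h2))
      subst he
      have he0 : 0 < e₁ := Nat.pos_of_ne_zero fun h => by
        subst h; exact hd0 (zero_dvd_iff.mp hx.1.1)
      have : m₁ = m₂ := Nat.eq_of_mul_eq_mul_left he0 hxy
      subst this; rfl
    have hval : ∀ x ∈ d.divisors ×ˢ Mset P0 D d,
        hh g x.1 * hh g x.2 = hh g (x.1 * x.2) := by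
      rintro ⟨e, m⟩ hx
      simp only [Finset.mem_product, Nat.mem_divisors] at hx
      unfold Mset at hx
      rw [Finset.mem_filter] at hx
      have hcop : Nat.Coprime e m :=
        Nat.Coprime.coprime_dvd_left hx.1.1 hx.2.2.1.symm
      have he0 : e ≠ 0 := fun h => hd0 (zero_dvd_iff.mp (h ▸ hx.1.1))
      have hm0 : m ≠ 0 := (Nat.pos_of_mem_divisors hx.2.1).ne'
      exact (Hf_mul _ he0 hm0 hcop).symm
    rw [Finset.sum_congr rfl hval, ← Finset.sum_image hinj]
    apply Finset.sum_le_sum_of_subset_of_nonneg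
    · intro n hn
      rw [Finset.mem_image] at hn
      obtain ⟨⟨e, m⟩, hx, rfl⟩ := hn
      simp only [Finset.mem_product, Nat.mem_divisors] at hx
      unfold Mset at hx
      rw [Finset.mem_filter, Nat.mem_divisors] at hx
      have hcop : Nat.Coprime e m :=
        Nat.Coprime.coprime_dvd_left hx.1.1 hx.2.2.1.symm
      unfold Sset
      rw [Finset.mem_filter, Nat.mem_divisors]
      refine ⟨⟨Nat.Coprime.mul_dvd_of_dvd_of_dvd hcop (hx.1.1.trans hdP) hx.2.1.1,
        hsq.ne_zero⟩, ?_⟩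
      have hle : (e : ℝ) ≤ (d : ℝ) := by
        exact_mod_cast Nat.le_of_dvd (Nat.pos_of_ne_zero hd0) hx.1.1
      have hm0 : (0 : ℝ) ≤ (m : ℝ) := Nat.cast_nonneg m
      push_cast
      calc (e : ℝ) * m ≤ (d : ℝ) * m := by nlinarith
        _ = (m : ℝ) * d := by ring
        _ < Real.sqrt D := hx.2.2.2
    · intro n hn _
      exact (hh_pos hsq hgp (mem_S_dvd hsq hn)).le
  rw [show lam g P0 D d = mu' d * ((hh g d / Gg g d) * Tsum g P0 D d) / Jsum g P0 D by
    unfold lam; ring]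
  rw [abs_div, abs_mul, hmu, one_mul, abs_of_pos hJ, div_le_one hJ,
    abs_of_nonneg (mul_nonneg (div_pos hhd hG).le hT)]
  exact key

end SJ
noncomputable def xi (g₀ : ℕ → ℝ) (Q : ℕ) (E : ℝ) (k : ℕ) : ℝ :=
  ∑ d ∈ (Sset Q E).filter (fun d => k ∣ d), lam g₀ Q E d * Gg g₀ d

include hsq in
omit hgp hD in
lemma mob_sum {n k : ℕ} (hn : n ∣ P0) (hk : k ∣ n) :
    ∑ e ∈ n.divisors.filter (fun e => k ∣ e), mu' e
      = mu' k * (if n = k then 1 else 0) := by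
  have hn0 : n ≠ 0 := fun h => hsq.ne_zero (zero_dvd_iff.mp (h ▸ hn))
  have hk0 : k ≠ 0 := fun h => hn0 (zero_dvd_iff.mp (h ▸ hk))
  have hsqn : Squarefree n := hsq.squarefree_of_dvd hn
  have key : ∑ e ∈ n.divisors.filter (fun e => k ∣ e), mu' e
      = ∑ e' ∈ (n / k).divisors, mu' k * mu' e' := by
    refine Finset.sum_nbij' (fun e => e / k) (fun e' => k * e') ?_ ?_ ?_ ?_ ?_
    · intro e he
      rw [Finset.mem_filter, Nat.mem_divisors] at he
      rw [Nat.mem_divisors]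
      obtain ⟨e', rfl⟩ := he.2
      have hkpos : 0 < k := Nat.pos_of_ne_zero hk0
      constructor
      · show k * e' / k ∣ n / k
        rw [Nat.mul_div_cancel_left e' hkpos]
        have h1 : k * e' ∣ k * (n / k) := by
          rw [Nat.mul_div_cancel' hk]; exact he.1.1
        exact (Nat.mul_dvd_mul_iff_left hkpos).mp h1
      · intro h
        rw [Nat.div_eq_zero_iff] at h
        exact absurd (Nat.le_of_dvd (Nat.pos_of_ne_zero hn0) hk) (by omega)
    · intro e' he'
      rw [Nat.mem_divisors] at he'
      rw [Finset.mem_filter, Nat.mem_divisors]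
      have h1 : k * e' ∣ k * (n / k) := mul_dvd_mul_left k he'.1
      rw [Nat.mul_div_cancel' hk] at h1
      exact ⟨⟨h1, hn0⟩, Dvd.intro e' rfl⟩
    · intro e he
      rw [Finset.mem_filter] at he
      exact Nat.mul_div_cancel' he.2
    · intro e' he'
      show k * e' / k = e'
      exact Nat.mul_div_cancel_left e' (Nat.pos_of_ne_zero hk0)
    · intro e he
      rw [Finset.mem_filter, Nat.mem_divisors] at he
      obtain ⟨e', rfl⟩ := he.2
      have he'0 : e' ≠ 0 := fun h => hn0 (zero_dvd_iff.mp (by simpa [h] using he.1.1))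
      have hcop : Nat.Coprime k e' :=
        (Nat.squarefree_mul_iff.mp (hsqn.squarefree_of_dvd he.1.1)).1
      show mu' (k * e') = mu' k * mu' ((k * e') / k)
      rw [Nat.mul_div_cancel_left e' (Nat.pos_of_ne_zero hk0)]
      unfold mu'
      rw [Hf_mul _ hk0 he'0 hcop]
  rw [key, ← Finset.mul_sum]
  congr 1
  rw [show (∑ i ∈ (n / k).divisors, mu' i)
      = ∑ i ∈ (n / k).divisors, Hf (fun _ => (-1 : ℝ)) i from rfl,
    sum_divisors_mu (hsqn.squarefree_of_dvd (Nat.div_dvd_of_dvd hk))]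
  have : n / k = 1 ↔ n = k := by
    constructor
    · intro h
      have := Nat.div_mul_cancel hk
      rw [h, one_mul] at this; omega
    · intro h; subst h; exact Nat.div_self (Nat.pos_of_ne_zero hk0)
  simp [this]

include hsq hgp hD in
lemma xi_eq {k : ℕ} (hk : k ∈ Sset P0 D) :
    xi g P0 D k = mu' k * hh g k / Jsum g P0 D := by
  have hJ := Jsum_pos hsq hgp hD
  have hkP : k ∣ P0 := mem_S_dvd hsq hk
  have hk0 : k ≠ 0 := fun h => hsq.ne_zero (zero_dvd_iff.mp (h ▸ hkP))
  rw [eq_div_iff hJ.ne']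
  unfold xi
  rw [Finset.sum_mul]
  have step1 : ∀ d ∈ (Sset P0 D).filter (fun d => k ∣ d),
      lam g P0 D d * Gg g d * Jsum g P0 D = ∑ m ∈ Mset P0 D d, mu' d * hh g d * hh g m := by
    intro d hd
    rw [Finset.mem_filter] at hd
    have hdP : d ∣ P0 := mem_S_dvd hsq hd.1
    have hG := (Gg_pos hsq hgp hdP).ne'
    unfold lam
    rw [← Finset.mul_sum]
    show mu' d * (hh g d / Gg g d) * Tsum g P0 D d / Jsum g P0 D * Gg g d * Jsum g P0 D
      = mu' d * hh g d * Tsum g P0 D d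
    field_simp
  rw [Finset.sum_congr rfl step1, Finset.sum_sigma']
  have main : ∑ x ∈ ((Sset P0 D).filter (fun d => k ∣ d)).sigma (fun d => Mset P0 D d),
        mu' x.1 * hh g x.1 * hh g x.2
      = ∑ x ∈ ((Sset P0 D).filter (fun n => k ∣ n)).sigma
          (fun n => n.divisors.filter (fun e => k ∣ e)),
        hh g x.1 * mu' x.2 := by
    refine Finset.sum_nbij' (fun x => ⟨x.1 * x.2, x.1⟩) (fun x => ⟨x.2, x.1 / x.2⟩) ?_ ?_ ?_ ?_ ?_
    · rintro ⟨d, m⟩ hx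
      rw [Finset.mem_sigma, Finset.mem_filter] at hx
      obtain ⟨⟨hdS, hkd⟩, hm⟩ := hx
      have hdP : d ∣ P0 := mem_S_dvd hsq hdS
      have hd0 : d ≠ 0 := fun h => hsq.ne_zero (zero_dvd_iff.mp (h ▸ hdP))
      unfold Mset at hm
      rw [Finset.mem_filter, Nat.mem_divisors] at hm
      obtain ⟨⟨hmP, _⟩, hcop, hlt⟩ := hm
      have hm0 : m ≠ 0 := fun h => hsq.ne_zero (zero_dvd_iff.mp (h ▸ hmP))
      have hdm : d * m ∣ P0 := Nat.Coprime.mul_dvd_of_dvd_of_dvd hcop.symm hdP hmP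
      rw [Finset.mem_sigma]
      constructor
      · rw [Finset.mem_filter]
        refine ⟨?_, hkd.trans (Dvd.intro m rfl)⟩
        unfold Sset
        rw [Finset.mem_filter, Nat.mem_divisors]
        refine ⟨⟨hdm, hsq.ne_zero⟩, ?_⟩
        push_cast
        calc (d : ℝ) * m = (m : ℝ) * d := by ring
          _ < Real.sqrt D := hlt
      · rw [Finset.mem_filter, Nat.mem_divisors]
        exact ⟨⟨Dvd.intro m rfl, by positivity⟩, hkd⟩
    · rintro ⟨n, e⟩ hx
      rw [Finset.mem_sigma, Finset.mem_filter, Finset.mem_filter, Nat.mem_divisors] at hx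
      obtain ⟨⟨hnS, hkn⟩, ⟨hen, hn0⟩, hke⟩ := hx
      have hnP : n ∣ P0 := mem_S_dvd hsq hnS
      have hsqn : Squarefree n := hsq.squarefree_of_dvd hnP
      have he0 : e ≠ 0 := fun h => hn0 (zero_dvd_iff.mp (h ▸ hen))
      have hepos : 0 < e := Nat.pos_of_ne_zero he0
      have hcop : Nat.Coprime e (n / e) := by
        have : Squarefree (e * (n / e)) := by rw [Nat.mul_div_cancel' hen]; exact hsqn
        exact (Nat.squarefree_mul_iff.mp this).1
      rw [Finset.mem_sigma, Finset.mem_filter]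
      constructor
      · refine ⟨?_, hke⟩
        unfold Sset
        rw [Finset.mem_filter, Nat.mem_divisors]
        refine ⟨⟨hen.trans hnP, hsq.ne_zero⟩, ?_⟩
        have : (e : ℝ) ≤ (n : ℝ) := by exact_mod_cast Nat.le_of_dvd (Nat.pos_of_ne_zero hn0) hen
        exact lt_of_le_of_lt this (mem_S_lt hnS)
      · unfold Mset
        rw [Finset.mem_filter, Nat.mem_divisors]
        refine ⟨⟨(Nat.div_dvd_of_dvd hen).trans hnP, hsq.ne_zero⟩, hcop.symm, ?_⟩
        have : ((n / e : ℕ) : ℝ) * e = (n : ℝ) := by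
          rw [← Nat.cast_mul, Nat.div_mul_cancel hen]
        rw [this]
        exact mem_S_lt hnS
    · rintro ⟨d, m⟩ hx
      rw [Finset.mem_sigma, Finset.mem_filter] at hx
      have hd0 : d ≠ 0 := by
        intro h
        exact hsq.ne_zero (zero_dvd_iff.mp (h ▸ mem_S_dvd hsq hx.1.1))
      simp [Nat.mul_div_cancel_left m (Nat.pos_of_ne_zero hd0)]
    · rintro ⟨n, e⟩ hx
      rw [Finset.mem_sigma, Finset.mem_filter, Finset.mem_filter, Nat.mem_divisors] at hx
      simp [Nat.mul_div_cancel' hx.2.1.1]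
    · rintro ⟨d, m⟩ hx
      rw [Finset.mem_sigma, Finset.mem_filter] at hx
      obtain ⟨⟨hdS, hkd⟩, hm⟩ := hx
      have hdP : d ∣ P0 := mem_S_dvd hsq hdS
      have hd0 : d ≠ 0 := fun h => hsq.ne_zero (zero_dvd_iff.mp (h ▸ hdP))
      unfold Mset at hm
      rw [Finset.mem_filter, Nat.mem_divisors] at hm
      obtain ⟨⟨hmP, _⟩, hcop, hlt⟩ := hm
      have hm0 : m ≠ 0 := fun h => hsq.ne_zero (zero_dvd_iff.mp (h ▸ hmP))
      show mu' d * hh g d * hh g m = hh g (d * m) * mu' d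
      unfold hh
      rw [Hf_mul _ hd0 hm0 hcop.symm]
      ring
  rw [main, Finset.sum_sigma]
  have inner : ∀ n ∈ (Sset P0 D).filter (fun n => k ∣ n),
      ∑ e ∈ n.divisors.filter (fun e => k ∣ e), hh g n * mu' e
        = hh g n * (mu' k * (if n = k then 1 else 0)) := by
    intro n hn
    rw [Finset.mem_filter] at hn
    rw [← Finset.mul_sum, mob_sum hsq (mem_S_dvd hsq hn.1) hn.2]
  rw [Finset.sum_congr rfl inner]
  rw [Finset.sum_eq_single k]
  · simp [mul_comm]
  · intro n _ hne; simp [hne]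
  · intro h
    exact absurd (Finset.mem_filter.mpr ⟨hk, dvd_refl k⟩) h

include hsq in
omit hD in
lemma xi_zero {k : ℕ} (hk : ¬ (k : ℝ) < Real.sqrt D) : xi g P0 D k = 0 := by
  unfold xi
  rw [Finset.filter_false_of_mem, Finset.sum_empty]
  intro d hd hkd
  have hdP : d ∣ P0 := mem_S_dvd hsq hd
  have hd0 : d ≠ 0 := fun h => hsq.ne_zero (zero_dvd_iff.mp (h ▸ hdP))
  have : (k : ℝ) ≤ (d : ℝ) := by exact_mod_cast Nat.le_of_dvd (Nat.pos_of_ne_zero hd0) hkd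
  exact hk (lt_of_le_of_lt this (mem_S_lt hd))

include hsq hgp in
omit hD in
lemma Gg_lcm_eq {d1 d2 : ℕ} (h1 : d1 ∣ P0) (h2 : d2 ∣ P0) :
    Gg g (Nat.lcm d1 d2) = Gg g d1 * Gg g d2 * ∑ k ∈ (Nat.gcd d1 d2).divisors, tt g k := by
  have hd10 : d1 ≠ 0 := fun h => hsq.ne_zero (zero_dvd_iff.mp (h ▸ h1))
  have hd20 : d2 ≠ 0 := fun h => hsq.ne_zero (zero_dvd_iff.mp (h ▸ h2))
  have hgcd : Nat.gcd d1 d2 ∣ P0 := (Nat.gcd_dvd_left d1 d2).trans h1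
  rw [sum_divisors_tt hsq hgp hgcd]
  have hmul : (ArithmeticFunction.prodPrimeFactors g).IsMultiplicative :=
    ArithmeticFunction.IsMultiplicative.prodPrimeFactors g
  have key := hmul.lcm_apply_mul_gcd_apply (x := d1) (y := d2)
  have happ : ∀ n : ℕ, n ≠ 0 → ArithmeticFunction.prodPrimeFactors g n = Gg g n := by
    intro n hn
    rw [ArithmeticFunction.prodPrimeFactors_apply hn]; rfl
  rw [happ d1 hd10, happ d2 hd20, happ _ (Nat.lcm_ne_zero hd10 hd20),
    happ _ (Nat.gcd_ne_zero_left hd10)] at key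
  have hGgcd : 0 < Gg g (Nat.gcd d1 d2) := Gg_pos hsq hgp hgcd
  field_simp
  linarith [key]

include hsq hgp hD in
lemma quad :
    ∑ d1 ∈ Sset P0 D, ∑ d2 ∈ Sset P0 D,
        lam g P0 D d1 * lam g P0 D d2 * Gg g (Nat.lcm d1 d2)
      = 1 / Jsum g P0 D := by
  have hJ := Jsum_pos hsq hgp hD
  have hP0 : P0 ≠ 0 := hsq.ne_zero
  -- Step B : pointwise expansion
  have stepB : ∀ d1 ∈ Sset P0 D, ∀ d2 ∈ Sset P0 D,
      lam g P0 D d1 * lam g P0 D d2 * Gg g (Nat.lcm d1 d2)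
        = ∑ k ∈ P0.divisors,
            (if k ∣ d1 then lam g P0 D d1 * Gg g d1 else 0) *
            ((if k ∣ d2 then lam g P0 D d2 * Gg g d2 else 0) * tt g k) := by
    intro d1 h1 d2 h2
    have hd1P := mem_S_dvd hsq h1
    have hd2P := mem_S_dvd hsq h2
    have hgcd : Nat.gcd d1 d2 ∣ P0 := (Nat.gcd_dvd_left d1 d2).trans hd1P
    have e1 : ∀ k ∈ P0.divisors,
        (if k ∣ d1 then lam g P0 D d1 * Gg g d1 else 0) *
          ((if k ∣ d2 then lam g P0 D d2 * Gg g d2 else 0) * tt g k)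
        = if k ∣ Nat.gcd d1 d2 then
            (lam g P0 D d1 * Gg g d1) * ((lam g P0 D d2 * Gg g d2) * tt g k) else 0 := by
      intro k _
      by_cases hk1 : k ∣ d1 <;> by_cases hk2 : k ∣ d2 <;>
        simp [hk1, hk2, Nat.dvd_gcd_iff, *]
    rw [Finset.sum_congr rfl e1, ← Finset.sum_filter,
      Nat.divisors_filter_dvd_of_dvd hP0 hgcd, ← Finset.mul_sum, ← Finset.mul_sum,
      Gg_lcm_eq hsq hgp hd1P hd2P]
    ring
  rw [Finset.sum_congr rfl (fun d1 h1 => Finset.sum_congr rfl (stepB d1 h1))]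
  -- Step C : swap summations
  rw [Finset.sum_congr rfl (fun d1 _ => Finset.sum_comm), Finset.sum_comm]
  have stepC : ∀ k ∈ P0.divisors,
      ∑ d1 ∈ Sset P0 D, ∑ d2 ∈ Sset P0 D,
          (if k ∣ d1 then lam g P0 D d1 * Gg g d1 else 0) *
          ((if k ∣ d2 then lam g P0 D d2 * Gg g d2 else 0) * tt g k)
        = tt g k * xi g P0 D k * xi g P0 D k := by
    intro k _
    have hxi : ∀ s : Finset ℕ, ∑ d ∈ s, (if k ∣ d then lam g P0 D d * Gg g d else 0)
        = ∑ d ∈ s.filter (fun d => k ∣ d), lam g P0 D d * Gg g d :=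
      fun s => (Finset.sum_filter _ _).symm
    calc ∑ d1 ∈ Sset P0 D, ∑ d2 ∈ Sset P0 D,
          (if k ∣ d1 then lam g P0 D d1 * Gg g d1 else 0) *
          ((if k ∣ d2 then lam g P0 D d2 * Gg g d2 else 0) * tt g k)
        = (∑ d1 ∈ Sset P0 D, (if k ∣ d1 then lam g P0 D d1 * Gg g d1 else 0)) *
          ((∑ d2 ∈ Sset P0 D, (if k ∣ d2 then lam g P0 D d2 * Gg g d2 else 0)) * tt g k) := by
          simp only [Finset.sum_mul, Finset.mul_sum]
          rw [Finset.sum_comm]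
      _ = tt g k * xi g P0 D k * xi g P0 D k := by
          rw [hxi]
          unfold xi
          ring
  rw [Finset.sum_congr rfl stepC]
  -- Step D : evaluate
  have vanish : ∀ k ∈ P0.divisors, k ∉ Sset P0 D →
      tt g k * xi g P0 D k * xi g P0 D k = 0 := by
    intro k hk hkS
    have : ¬ (k : ℝ) < Real.sqrt D := by
      intro h
      exact hkS (by unfold Sset; rw [Finset.mem_filter]; exact ⟨hk, h⟩)
    simp [xi_zero hsq this]
  have hsub : Sset P0 D ⊆ P0.divisors := Finset.filter_subset _ _
  rw [← Finset.sum_subset hsub vanish]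
  have ev : ∀ k ∈ Sset P0 D, tt g k * xi g P0 D k * xi g P0 D k
      = hh g k / (Jsum g P0 D * Jsum g P0 D) := by
    intro k hk
    have hkP := mem_S_dvd hsq hk
    rw [xi_eq hsq hgp hD hk]
    have h1 := tt_mul_hh hsq hgp hkP
    have h2 : mu' k * mu' k = 1 := mu'_sq
    calc tt g k * (mu' k * hh g k / Jsum g P0 D) * (mu' k * hh g k / Jsum g P0 D)
        = (mu' k * mu' k) * ((tt g k * hh g k) * hh g k) / (Jsum g P0 D * Jsum g P0 D) := by
          ring
      _ = hh g k / (Jsum g P0 D * Jsum g P0 D) := by rw [h1, h2]; ring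
  rw [Finset.sum_congr rfl ev, ← Finset.sum_div]
  rw [show (∑ k ∈ Sset P0 D, hh g k) = Jsum g P0 D from rfl]
  field_simp

omit hsq hgp hD in
lemma squarefree_prod_primes {P : Finset ℕ} (hP : ∀ p ∈ P, p.Prime) :
    Squarefree (∏ p ∈ P, p) := by
  classical
  induction P using Finset.induction_on with
  | empty => simp
  | insert _ _ hnotmem ih =>
    rename_i q s
    rw [Finset.prod_insert hnotmem]
    have hq := hP q (Finset.mem_insert_self q s)
    have hs : ∀ p ∈ s, p.Prime := fun p hp => hP p (Finset.mem_insert_of_mem hp)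
    have hsq := ih hs
    rw [Nat.squarefree_mul_iff]
    refine ⟨?_, hq.squarefree, hsq⟩
    refine Nat.Coprime.prod_right fun p hp => ?_
    exact (Nat.coprime_primes hq (hs p hp)).mpr (fun h => hnotmem (h ▸ hp))
end Main
end SelbergAux

/-- `τ₃(d)`: the number of ways of writing `d` as an ordered product of three positive
integers, `τ₃(d) = ∑_{e ∣ d} τ(e)`. -/
def tau3 (d : ℕ) : ℕ := ∑ e ∈ d.divisors, e.divisors.card

open SelbergAux

/-- Selberg's sieve (Friedlander–Iwaniec, Theorem 7.1): for a finite sequence of integers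
`(aᵢ)_{i ∈ I}`, a finite set of primes `𝒫` with product `Π(𝒫)`, a level `D > 1`, an
approximation `𝔛 > 0` and a multiplicative density function `g` with `0 < g(p) < 1` for
`p ∈ 𝒫`, the sifting function satisfies
`S(𝒜,𝒫) ≤ 𝔛/J(𝒫,D) + ∑_{d ∣ Π(𝒫), d < D} τ₃(d) |R_d|`. -/
theorem stmt_9 {ι : Type*} (I : Finset ι) (a : ι → ℤ)
    (P : Finset ℕ) (hP : ∀ p ∈ P, p.Prime)
    (X : ℝ) (hX : 0 < X)
    (g : ℕ → ℝ) (hg1 : g 1 = 1)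
    (hgmul : ∀ m n : ℕ, Nat.Coprime m n → g (m * n) = g m * g n)
    (hgp : ∀ p ∈ P, 0 < g p ∧ g p < 1) :
    ∀ D : ℝ, 1 < D →
      ((I.filter fun i => Int.gcd (a i) ((∏ p ∈ P, p : ℕ) : ℤ) = 1).card : ℝ)
        ≤ X / (∑ d ∈ (∏ p ∈ P, p).divisors.filter (fun d : ℕ => (d : ℝ) < Real.sqrt D),
                ∏ p ∈ d.primeFactors, g p / (1 - g p))
          + ∑ d ∈ (∏ p ∈ P, p).divisors.filter (fun d : ℕ => (d : ℝ) < D),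
              (tau3 d : ℝ) *
                |((I.filter fun i => (d : ℤ) ∣ a i).card : ℝ) - g d * X| := by
  intro D hD
  classical
  set P0 : ℕ := ∏ p ∈ P, p with hP0def
  have hsq : Squarefree P0 := squarefree_prod_primes hP
  have hP0ne : P0 ≠ 0 := hsq.ne_zero
  have hpf : P0.primeFactors = P := Nat.primeFactors_prod hP
  have hgp' : ∀ p ∈ P0.primeFactors, 0 < g p ∧ g p < 1 := by rw [hpf]; exact hgp
  have hgG : ∀ n, n ∣ P0 → g n = Gg g n := fun n hn =>
    g_eq_Hf g hg1 hgmul n (hsq.squarefree_of_dvd hn)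
  have hJ : 0 < Jsum g P0 D := Jsum_pos hsq hgp' hD
  have hJeq : (∑ d ∈ P0.divisors.filter (fun d : ℕ => (d : ℝ) < Real.sqrt D),
      ∏ p ∈ d.primeFactors, g p / (1 - g p)) = Jsum g P0 D := rfl
  rw [hJeq]
  set S : Finset ℕ := Sset P0 D with hSdef
  set L : ℕ → ℝ := lam g P0 D with hLdef
  set R : ℕ → ℝ := fun n => ((I.filter fun i => (n : ℤ) ∣ a i).card : ℝ) - g n * X with hRdef
  set T : Finset ℕ := P0.divisors.filter (fun d : ℕ => (d : ℝ) < D) with hTdef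
  set C : ℕ → ℝ := fun n => ((I.filter fun i => (n : ℤ) ∣ a i).card : ℝ) with hCdef
  set W : ι → ℝ := fun i => ∑ d ∈ S.filter (fun d : ℕ => (d : ℤ) ∣ a i), L d with hWdef
  have hlcm_int : ∀ (d1 d2 : ℕ) (c : ℤ),
      ((Nat.lcm d1 d2 : ℕ) : ℤ) ∣ c ↔ (d1 : ℤ) ∣ c ∧ (d2 : ℤ) ∣ c := by
    intro d1 d2 c
    constructor
    · intro h
      exact ⟨dvd_trans (Int.natCast_dvd_natCast.mpr (Nat.dvd_lcm_left d1 d2)) h,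
        dvd_trans (Int.natCast_dvd_natCast.mpr (Nat.dvd_lcm_right d1 d2)) h⟩
    · rintro ⟨h1, h2⟩
      exact Int.natCast_dvd.mpr (Nat.lcm_dvd (Int.natCast_dvd.mp h1) (Int.natCast_dvd.mp h2))
  -- Step 1 : sifted count ≤ ∑ W i ^ 2
  have h_sift : ∀ i ∈ I.filter (fun i => Int.gcd (a i) (P0 : ℤ) = 1),
      S.filter (fun d : ℕ => (d : ℤ) ∣ a i) = {1} := by
    intro i hi
    rw [Finset.mem_filter] at hi
    ext d
    rw [Finset.mem_filter, Finset.mem_singleton]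
    constructor
    · rintro ⟨hdS, hdvd⟩
      have hdP : (d : ℤ) ∣ (P0 : ℤ) := Int.natCast_dvd_natCast.mpr (mem_S_dvd hsq hdS)
      have : (d : ℤ) ∣ ((Int.gcd (a i) (P0 : ℤ) : ℕ) : ℤ) := Int.dvd_coe_gcd hdvd hdP
      rw [hi.2] at this
      exact_mod_cast Nat.dvd_one.mp (by exact_mod_cast this)
    · rintro rfl
      exact ⟨one_mem_S hsq hD, by simp⟩
  have step1 : ((I.filter fun i => Int.gcd (a i) (P0 : ℤ) = 1).card : ℝ)
      ≤ ∑ i ∈ I, W i ^ 2 := by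
    rw [Finset.card_eq_sum_ones]
    push_cast
    calc ∑ i ∈ I.filter (fun i => Int.gcd (a i) (P0 : ℤ) = 1), (1 : ℝ)
        = ∑ i ∈ I.filter (fun i => Int.gcd (a i) (P0 : ℤ) = 1), W i ^ 2 := by
          refine Finset.sum_congr rfl fun i hi => ?_
          rw [hWdef]
          simp only []
          rw [h_sift i hi, Finset.sum_singleton, hLdef, lam_one hsq hgp' hD]
          norm_num
      _ ≤ ∑ i ∈ I, W i ^ 2 :=
          Finset.sum_le_sum_of_subset_of_nonneg (Finset.filter_subset _ _)
            (fun i _ _ => sq_nonneg _)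
  -- Step 2 : expand the square
  have step2 : ∑ i ∈ I, W i ^ 2
      = ∑ d1 ∈ S, ∑ d2 ∈ S, L d1 * L d2 * C (Nat.lcm d1 d2) := by
    have hW : ∀ i, W i = ∑ d ∈ S, (if (d : ℤ) ∣ a i then L d else 0) := by
      intro i
      rw [hWdef]
      exact Finset.sum_filter (fun d : ℕ => (d : ℤ) ∣ a i) L
    have expand : ∀ i, W i ^ 2 = ∑ d1 ∈ S, ∑ d2 ∈ S,
        (if (d1 : ℤ) ∣ a i then L d1 else 0) * (if (d2 : ℤ) ∣ a i then L d2 else 0) := by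
      intro i
      rw [sq, hW, Finset.sum_mul_sum]
    rw [Finset.sum_congr rfl (fun i _ => expand i), Finset.sum_comm]
    refine Finset.sum_congr rfl fun d1 _ => ?_
    rw [Finset.sum_comm]
    refine Finset.sum_congr rfl fun d2 _ => ?_
    have pointwise : ∀ i ∈ I,
        (if (d1 : ℤ) ∣ a i then L d1 else 0) * (if (d2 : ℤ) ∣ a i then L d2 else 0)
          = if ((Nat.lcm d1 d2 : ℕ) : ℤ) ∣ a i then L d1 * L d2 else 0 := by
      intro i _
      by_cases h1 : (d1 : ℤ) ∣ a i <;> by_cases h2 : (d2 : ℤ) ∣ a i <;>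
        simp [h1, h2, hlcm_int d1 d2 (a i)]
    rw [Finset.sum_congr rfl pointwise, ← Finset.sum_filter, Finset.sum_const,
      nsmul_eq_mul, hCdef]
    ring
  -- Step 3 : split into main term and remainder
  have step3 : ∑ d1 ∈ S, ∑ d2 ∈ S, L d1 * L d2 * C (Nat.lcm d1 d2)
      = X / Jsum g P0 D + ∑ d1 ∈ S, ∑ d2 ∈ S, L d1 * L d2 * R (Nat.lcm d1 d2) := by
    have hCsplit : ∀ d1 ∈ S, ∀ d2 ∈ S,
        L d1 * L d2 * C (Nat.lcm d1 d2)
          = X * (L d1 * L d2 * Gg g (Nat.lcm d1 d2)) + L d1 * L d2 * R (Nat.lcm d1 d2) := by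
      intro d1 h1 d2 h2
      have hlcmP : Nat.lcm d1 d2 ∣ P0 := Nat.lcm_dvd (mem_S_dvd hsq h1) (mem_S_dvd hsq h2)
      have : C (Nat.lcm d1 d2) = Gg g (Nat.lcm d1 d2) * X + R (Nat.lcm d1 d2) := by
        rw [hCdef, hRdef]
        simp only []
        rw [← hgG _ hlcmP]
        ring
      rw [this]
      ring
    rw [Finset.sum_congr rfl (fun d1 h1 => Finset.sum_congr rfl (hCsplit d1 h1))]
    rw [Finset.sum_congr rfl (fun d1 _ => Finset.sum_add_distrib), Finset.sum_add_distrib]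
    congr 1
    rw [Finset.sum_congr rfl (fun d1 _ => (Finset.mul_sum _ _ _).symm), ← Finset.mul_sum,
      hLdef, quad hsq hgp' hD]
    rw [mul_one_div]
  -- Step 4 : bound the remainder
  have hMap : ∀ x ∈ S ×ˢ S, Nat.lcm x.1 x.2 ∈ T := by
    rintro ⟨d1, d2⟩ hx
    rw [Finset.mem_product] at hx
    have h1P := mem_S_dvd hsq hx.1
    have h2P := mem_S_dvd hsq hx.2
    have hd10 : d1 ≠ 0 := fun h => hP0ne (zero_dvd_iff.mp (h ▸ h1P))
    have hd20 : d2 ≠ 0 := fun h => hP0ne (zero_dvd_iff.mp (h ▸ h2P))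
    rw [hTdef, Finset.mem_filter, Nat.mem_divisors]
    refine ⟨⟨Nat.lcm_dvd h1P h2P, hP0ne⟩, ?_⟩
    have hle : Nat.lcm d1 d2 ≤ d1 * d2 :=
      Nat.le_of_dvd (Nat.pos_of_ne_zero (mul_ne_zero hd10 hd20))
        (Nat.lcm_dvd (dvd_mul_right d1 d2) (dvd_mul_left d2 d1))
    have hcast : ((Nat.lcm d1 d2 : ℕ) : ℝ) ≤ (d1 : ℝ) * (d2 : ℝ) := by
      exact_mod_cast hle
    have hd1 := mem_S_lt hx.1
    have hd2 := mem_S_lt hx.2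
    have hmul : (d1 : ℝ) * (d2 : ℝ) < Real.sqrt D * Real.sqrt D :=
      mul_lt_mul'' hd1 hd2 (Nat.cast_nonneg d1) (Nat.cast_nonneg d2)
    rw [Real.mul_self_sqrt (by linarith : (0:ℝ) ≤ D)] at hmul
    linarith
  have step4 : ∑ d1 ∈ S, ∑ d2 ∈ S, L d1 * L d2 * R (Nat.lcm d1 d2)
      ≤ ∑ d ∈ T, (tau3 d : ℝ) * |R d| := by
    have hT0 : ∀ d ∈ T, d ≠ 0 := by
      intro d hd
      rw [hTdef, Finset.mem_filter] at hd
      exact (Nat.pos_of_mem_divisors hd.1).ne'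
    calc ∑ d1 ∈ S, ∑ d2 ∈ S, L d1 * L d2 * R (Nat.lcm d1 d2)
        = ∑ x ∈ S ×ˢ S, L x.1 * L x.2 * R (Nat.lcm x.1 x.2) := by
          rw [Finset.sum_product]
      _ ≤ ∑ x ∈ S ×ˢ S, |R (Nat.lcm x.1 x.2)| := by
          refine Finset.sum_le_sum fun x hx => ?_
          rw [Finset.mem_product] at hx
          have h1 : |L x.1| ≤ 1 := abs_lam_le hsq hgp' hD hx.1
          have h2 : |L x.2| ≤ 1 := abs_lam_le hsq hgp' hD hx.2
          calc L x.1 * L x.2 * R (Nat.lcm x.1 x.2)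
              ≤ |L x.1 * L x.2 * R (Nat.lcm x.1 x.2)| := le_abs_self _
            _ = |L x.1| * |L x.2| * |R (Nat.lcm x.1 x.2)| := by rw [abs_mul, abs_mul]
            _ ≤ |R (Nat.lcm x.1 x.2)| :=
                mul_le_of_le_one_left (abs_nonneg _)
                  (mul_le_one₀ h1 (abs_nonneg _) h2)
      _ = ∑ d ∈ T, ∑ x ∈ (S ×ˢ S).filter (fun x => Nat.lcm x.1 x.2 = d),
            |R (Nat.lcm x.1 x.2)| :=
          (Finset.sum_fiberwise_of_maps_to hMap _).symm
      _ ≤ ∑ d ∈ T, (tau3 d : ℝ) * |R d| := by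
          refine Finset.sum_le_sum fun d hd => ?_
          have hinner : ∀ x ∈ (S ×ˢ S).filter (fun x => Nat.lcm x.1 x.2 = d),
              |R (Nat.lcm x.1 x.2)| = |R d| := by
            intro x hx
            rw [(Finset.mem_filter.mp hx).2]
          rw [Finset.sum_congr rfl hinner, Finset.sum_const, nsmul_eq_mul]
          refine mul_le_mul_of_nonneg_right ?_ (abs_nonneg _)
          -- card of fiber ≤ tau3 d
          have htau : (tau3 d : ℝ) = ((d.divisors.sigma fun e => e.divisors).card : ℝ) := by
            rw [Finset.card_sigma]; rfl
          rw [htau]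
          refine Nat.cast_le.mpr ?_
          refine Finset.card_le_card_of_injOn
            (fun x => ⟨x.1, Nat.gcd x.1 x.2⟩) ?_ ?_
          · rintro ⟨d1, d2⟩ hx
            rw [Finset.mem_coe, Finset.mem_filter, Finset.mem_product] at hx
            obtain ⟨⟨h1S, h2S⟩, hlcm⟩ := hx
            have hd10 : d1 ≠ 0 := fun h => hP0ne (zero_dvd_iff.mp (h ▸ mem_S_dvd hsq h1S))
            rw [Finset.mem_coe, Finset.mem_sigma, Nat.mem_divisors, Nat.mem_divisors]
            exact ⟨⟨hlcm ▸ Nat.dvd_lcm_left d1 d2, hT0 d hd⟩, Nat.gcd_dvd_left d1 d2, hd10⟩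
          · rintro ⟨d1, d2⟩ hx ⟨e1, e2⟩ hy hxy
            simp only [Finset.mem_coe, Finset.mem_filter, Finset.mem_product] at hx hy
            simp only [Sigma.mk.inj_iff, heq_eq_eq] at hxy
            obtain ⟨h11, hgcd⟩ := hxy
            subst h11
            have hd10 : d1 ≠ 0 := fun h =>
              hP0ne (zero_dvd_iff.mp (h ▸ mem_S_dvd hsq hx.1.1))
            have key1 : Nat.gcd d1 d2 * Nat.lcm d1 d2 = d1 * d2 := Nat.gcd_mul_lcm d1 d2
            have key2 : Nat.gcd d1 e2 * Nat.lcm d1 e2 = d1 * e2 := Nat.gcd_mul_lcm d1 e2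
            rw [hx.2] at key1
            rw [hy.2] at key2
            rw [hgcd] at key1
            have : d1 * d2 = d1 * e2 := by rw [← key1, ← key2]
            have : d2 = e2 := Nat.eq_of_mul_eq_mul_left (Nat.pos_of_ne_zero hd10) this
            simp [this]
  -- Assemble
  calc ((I.filter fun i => Int.gcd (a i) (P0 : ℤ) = 1).card : ℝ)
      ≤ ∑ i ∈ I, W i ^ 2 := step1
    _ = X / Jsum g P0 D + ∑ d1 ∈ S, ∑ d2 ∈ S, L d1 * L d2 * R (Nat.lcm d1 d2) := by
        rw [step2, step3]
    _ ≤ X / Jsum g P0 D + ∑ d ∈ T, (tau3 d : ℝ) * |R d| := by linarith [step4]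
end

section
/- Let $r \geq 2$ and $a_1, \dots, a_r \in \mathbb{Z}_{\geq 0}$ with $a_1 \geq 1$, and let $A \geq 1$. Then $\int_{1 \leq x_1 < (\log B)^A} x_1^{a_1 - 1} \Big( \int_{\substack{1 \leq x_i \leq B \ (2 \leq i \leq r) \\ \prod_{i=2}^r x_i^{a_i} \leq B / x_1^{a_1}}} \prod_{i=2}^r x_i^{a_i - 1} \, dx_2 \cdots dx_r \Big) dx_1 = O_A\big( B (\log B)^{r-2} \log\log B + (\log B)^{r - 1 + A a_1} \big)$ as $B \to \infty$, where the first term suffices when $(a_2,\dots,a_r) \neq (0,\dots,0)$ and the second when $(a_2,\dots,a_r) = (0,\dots,0)$. -/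
open Finset Real MeasureTheory

open scoped ENNReal

namespace Stmt13Aux

lemma lintegral_fin_prod : ∀ (n : ℕ) (f : Fin n → ℝ → ℝ≥0∞), (∀ i, Measurable (f i)) →
    ∫⁻ x : Fin n → ℝ, ∏ i, f i (x i) = ∏ i, ∫⁻ t, f i t := by
  intro n
  induction n with
  | zero =>
    intro f _
    rw [show (volume : Measure (Fin 0 → ℝ)) = Measure.pi fun _ => volume from rfl]
    simp [lintegral_const, Measure.pi_univ]
  | succ n ih =>
    intro f hf
    have hmeas : Measurable fun x : Fin (n + 1) → ℝ => ∏ i, f i (x i) :=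
      Finset.measurable_prod _ fun i _ => (hf i).comp (measurable_pi_apply i)
    have hmp := (measurePreserving_piFinSuccAbove (fun _ : Fin (n + 1) => (volume : Measure ℝ)) 0).symm
    rw [show (volume : Measure (Fin (n+1) → ℝ)) = Measure.pi fun _ => volume from rfl,
      ← hmp.lintegral_comp hmeas]
    simp only [MeasurableEquiv.piFinSuccAbove_symm_apply]
    simp_rw [Fin.insertNthEquiv_apply, Fin.insertNth_zero, Fin.prod_univ_succ, Fin.cons_zero,
      Fin.cons_succ, cast_eq]
    have hgm : Measurable fun z : Fin n → ℝ => ∏ i : Fin n, f i.succ (z i) :=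
      Finset.measurable_prod _ fun i _ => (hf i.succ).comp (measurable_pi_apply i)
    rw [lintegral_prod_mul (hf 0).aemeasurable hgm.aemeasurable]
    congr 1
    exact ih (fun i => f i.succ) (fun i => hf i.succ)

lemma lintegral_fintype_prod {ι : Type*} [Fintype ι] (f : ι → ℝ → ℝ≥0∞)
    (hf : ∀ i, Measurable (f i)) :
    ∫⁻ x : ι → ℝ, ∏ i, f i (x i) = ∏ i, ∫⁻ t, f i t := by
  let e := (Fintype.equivFin ι).symm
  have hmeas : Measurable fun x : ι → ℝ => ∏ i, f i (x i) :=
    Finset.measurable_prod _ fun i _ => (hf i).comp (measurable_pi_apply i)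
  rw [← (volume_measurePreserving_piCongrLeft (fun _ : ι => ℝ) e).lintegral_comp hmeas]
  have h1 : ∀ z : Fin (Fintype.card ι) → ℝ,
      (∏ i : ι, f i ((MeasurableEquiv.piCongrLeft (fun _ : ι => ℝ) e) z i))
        = ∏ k, f (e k) (z k) := by
    intro z
    rw [← e.prod_comp]
    refine Finset.prod_congr rfl fun k _ => ?_
    rw [MeasurableEquiv.coe_piCongrLeft, Equiv.piCongrLeft_apply_apply]
  simp_rw [h1]
  rw [lintegral_fin_prod _ _ (fun k => hf (e k)), ← e.prod_comp]

lemma lint_inv {c : ℝ} (hc : 1 ≤ c) :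
    ∫⁻ t in Set.Icc (1 : ℝ) c, ENNReal.ofReal t⁻¹ = ENNReal.ofReal (Real.log c) := by
  have hInt : IntegrableOn (fun t : ℝ => t⁻¹) (Set.Icc 1 c) := by
    apply ContinuousOn.integrableOn_compact isCompact_Icc
    exact continuousOn_inv₀.mono fun t ht =>
      Set.mem_compl_singleton_iff.mpr (ne_of_gt (lt_of_lt_of_le one_pos ht.1))
  have hnn : 0 ≤ᵐ[volume.restrict (Set.Icc (1 : ℝ) c)] fun t : ℝ => t⁻¹ :=
    ae_restrict_of_forall_mem measurableSet_Icc fun t ht =>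
      inv_nonneg.mpr (le_trans zero_le_one ht.1)
  rw [← ofReal_integral_eq_lintegral_ofReal hInt hnn]
  congr 1
  rw [MeasureTheory.integral_Icc_eq_integral_Ioc, ← intervalIntegral.integral_of_le hc,
    integral_inv (by rw [Set.uIcc_of_le hc]; rintro ⟨h0, -⟩; linarith), div_one]

lemma lint_pow {c : ℝ} {m : ℕ} (hm : 1 ≤ m) :
    ∫⁻ t in Set.Icc (1 : ℝ) c, ENNReal.ofReal (t ^ ((m : ℝ) - 1)) ≤ ENNReal.ofReal (c ^ m) := by
  rcases lt_or_ge c 1 with h | h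
  · rw [Set.Icc_eq_empty (fun hc => absurd hc (not_le.mpr h)), Measure.restrict_empty,
      lintegral_zero_measure]
    exact zero_le
  · have hc0 : (0 : ℝ) < c := lt_of_lt_of_le one_pos h
    have hme : (0 : ℝ) ≤ (m : ℝ) - 1 := by
      have h1 : (1 : ℝ) ≤ m := by exact_mod_cast hm
      linarith
    calc ∫⁻ t in Set.Icc (1 : ℝ) c, ENNReal.ofReal (t ^ ((m : ℝ) - 1))
        ≤ ∫⁻ _ in Set.Icc (1 : ℝ) c, ENNReal.ofReal (c ^ ((m : ℝ) - 1)) := by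
          refine setLIntegral_mono measurable_const fun t ht => ?_
          exact ENNReal.ofReal_le_ofReal
            (Real.rpow_le_rpow (le_trans zero_le_one ht.1) ht.2 hme)
      _ = ENNReal.ofReal (c ^ ((m : ℝ) - 1)) * ENNReal.ofReal (c - 1) := by
          rw [setLIntegral_const, Real.volume_Icc]
      _ ≤ ENNReal.ofReal (c ^ ((m : ℝ) - 1)) * ENNReal.ofReal c :=
          mul_le_mul_right (ENNReal.ofReal_le_ofReal (by linarith)) _
      _ = ENNReal.ofReal (c ^ ((m : ℝ) - 1) * c) :=
          (ENNReal.ofReal_mul (Real.rpow_nonneg hc0.le _)).symm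
      _ = ENNReal.ofReal (c ^ m) := by
          rw [← Real.rpow_natCast c m]
          congr 1
          rw [← Real.rpow_add_one (ne_of_gt hc0), sub_add_cancel]

lemma main_bound {r : ℕ} (a : Fin r → ℕ) {S : Set (Fin r → ℝ)} (hS : MeasurableSet S)
    (j : Fin r) (U : {i : Fin r // ¬i = j} → ℝ) (hU : ∀ i, 1 ≤ U i) {K : ℝ} (hK : 0 ≤ K)
    (c : ({i : Fin r // ¬i = j} → ℝ) → ℝ) (hm : 1 ≤ a j)
    (hmem : ∀ (t : ℝ) (y : {i : Fin r // ¬i = j} → ℝ),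
      (fun i => if h : i = j then t else y ⟨i, h⟩) ∈ S →
      (∀ i, y i ∈ Set.Icc 1 (U i)) ∧ t ∈ Set.Icc 1 (c y))
    (hcb : ∀ y : {i : Fin r // ¬i = j} → ℝ, (∀ i, y i ∈ Set.Icc 1 (U i)) →
      0 ≤ c y ∧
        c y ^ a j * ∏ i, y i ^ ((a (i : Fin r) : ℝ) - 1) ≤ K * ∏ i, (y i)⁻¹) :
    ∫⁻ x in S, ENNReal.ofReal (∏ i, x i ^ ((a i : ℝ) - 1)) ≤
      ENNReal.ofReal K * ∏ i : {i : Fin r // ¬i = j}, ENNReal.ofReal (Real.log (U i)) := by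
  classical
  letI fEq : Fintype {i : Fin r // i = j} := Subtype.fintype _
  set f : (Fin r → ℝ) → ℝ≥0∞ := fun x => ENNReal.ofReal (∏ i, x i ^ ((a i : ℝ) - 1)) with hfdef
  have hfm : Measurable f :=
    ENNReal.measurable_ofReal.comp
      (Finset.measurable_prod _ fun i _ => (measurable_pi_apply i).pow measurable_const)
  have hI : Measurable (S.indicator f) := hfm.indicator hS
  haveI : Unique {i : Fin r // i = j} := ⟨⟨⟨j, rfl⟩⟩, fun u => Subtype.ext u.2⟩
  set e1 := MeasurableEquiv.piEquivPiSubtypeProd (fun _ : Fin r => ℝ) (fun i => i = j) with he1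
  have hvp := volume_preserving_piEquivPiSubtypeProd (fun _ : Fin r => ℝ) (fun i => i = j)
  set pu := MeasurableEquiv.piUnique (fun _ : {i : Fin r // i = j} => ℝ) with hpu
  have hpuv := volume_preserving_piUnique (fun _ : {i : Fin r // i = j} => ℝ)
  set Φ : ℝ → ({i : Fin r // ¬i = j} → ℝ) → (Fin r → ℝ) :=
    fun t y i => if h : i = j then t else y ⟨i, h⟩ with hΦdef
  have hΦ : ∀ (t : ℝ) (y : {i : Fin r // ¬i = j} → ℝ), e1.symm (pu.symm t, y) = Φ t y := by
    intro t y
    funext i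
    by_cases h : i = j <;>
      simp [he1, hpu, hΦdef, MeasurableEquiv.piEquivPiSubtypeProd, MeasurableEquiv.piUnique,
        Equiv.piEquivPiSubtypeProd, Equiv.piUnique, MeasurableEquiv.symm, MeasurableEquiv.coe_mk,
        h, uniqueElim_const]
  have hΦmeas : ∀ y : {i : Fin r // ¬i = j} → ℝ, Measurable fun t : ℝ => Φ t y := by
    intro y
    refine measurable_pi_lambda _ fun i => ?_
    by_cases h : i = j
    · simpa [hΦdef, h] using measurable_id'
    · simpa [hΦdef, h] using (measurable_const : Measurable fun _ : ℝ => y ⟨i, h⟩)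
  rw [← lintegral_indicator hS]
  rw [← (hvp.symm).lintegral_comp hI, Measure.volume_eq_prod,
    lintegral_prod_symm (fun z => S.indicator f (e1.symm z))
      ((hI.comp e1.symm.measurable).aemeasurable)]
  have h2 : ∀ y : {i : Fin r // ¬i = j} → ℝ,
      (∫⁻ u : {i : Fin r // i = j} → ℝ, S.indicator f (e1.symm (u, y)))
        = ∫⁻ t : ℝ, S.indicator f (Φ t y) := by
    intro y
    have hg : Measurable fun t : ℝ => S.indicator f (Φ t y) := hI.comp (hΦmeas y)
    calc (∫⁻ u : {i : Fin r // i = j} → ℝ, S.indicator f (e1.symm (u, y)))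
        = ∫⁻ u : {i : Fin r // i = j} → ℝ, S.indicator f (Φ (pu u) y) :=
          lintegral_congr fun u => by rw [← hΦ (pu u) y, pu.symm_apply_apply]
      _ = ∫⁻ t : ℝ, S.indicator f (Φ t y) := hpuv.lintegral_comp hg
  refine le_trans (le_of_eq (lintegral_congr fun y => h2 y)) ?_
  set Y : Set ({i : Fin r // ¬i = j} → ℝ) := {y | ∀ i, y i ∈ Set.Icc 1 (U i)} with hYdef
  have hpm : Measurable fun t : ℝ => ENNReal.ofReal (t ^ ((a j : ℝ) - 1)) :=
    ENNReal.measurable_ofReal.comp (measurable_id.pow measurable_const)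
  calc (∫⁻ y, ∫⁻ t : ℝ, S.indicator f (Φ t y))
      ≤ ∫⁻ y, Set.indicator Y
          (fun y => ENNReal.ofReal (K * ∏ i, (y i)⁻¹)) y := by
        refine lintegral_mono fun y => ?_
        by_cases hy : ∀ i, y i ∈ Set.Icc 1 (U i)
        · have hyY : y ∈ Y := hy
          rw [Set.indicator_of_mem hyY]
          obtain ⟨hc0, hcK⟩ := hcb y hy
          calc (∫⁻ t : ℝ, S.indicator f (Φ t y))
              ≤ ∫⁻ t : ℝ, (Set.Icc (1 : ℝ) (c y)).indicator
                  (fun t => ENNReal.ofReal (t ^ ((a j : ℝ) - 1))) t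
                  * ENNReal.ofReal (∏ i, y i ^ ((a (i : Fin r) : ℝ) - 1)) := by
                refine lintegral_mono fun t => ?_
                by_cases hx : Φ t y ∈ S
                · obtain ⟨-, htI⟩ := hmem t y hx
                  have h1t : (1 : ℝ) ≤ t := htI.1
                  have hsplit : ∏ i, (Φ t y) i ^ ((a i : ℝ) - 1)
                      = t ^ ((a j : ℝ) - 1)
                        * ∏ i : {i : Fin r // ¬i = j}, y i ^ ((a (i : Fin r) : ℝ) - 1) := by
                    rw [← Finset.mul_prod_erase Finset.univ _ (Finset.mem_univ j)]
                    congr 1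
                    · simp [hΦdef]
                    · rw [Finset.prod_subtype (p := fun i => ¬i = j) (Finset.univ.erase j)
                        (fun x => by simp)
                        (fun i => (Φ t y) i ^ ((a i : ℝ) - 1))]
                      exact Finset.prod_congr rfl fun i _ => by simp [hΦdef, i.2]
                  rw [Set.indicator_of_mem hx, Set.indicator_of_mem htI, hfdef]
                  simp only
                  rw [hsplit, ENNReal.ofReal_mul (Real.rpow_nonneg (le_trans zero_le_one h1t) _)]
                · rw [Set.indicator_of_notMem hx]
                  exact zero_le
            _ = (∫⁻ t in Set.Icc (1 : ℝ) (c y), ENNReal.ofReal (t ^ ((a j : ℝ) - 1)))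
                  * ENNReal.ofReal (∏ i, y i ^ ((a (i : Fin r) : ℝ) - 1)) := by
                rw [lintegral_mul_const _ (hpm.indicator measurableSet_Icc),
                  lintegral_indicator measurableSet_Icc]
            _ ≤ ENNReal.ofReal (c y ^ a j)
                  * ENNReal.ofReal (∏ i, y i ^ ((a (i : Fin r) : ℝ) - 1)) :=
                mul_le_mul_left (lint_pow hm) _
            _ = ENNReal.ofReal (c y ^ a j * ∏ i, y i ^ ((a (i : Fin r) : ℝ) - 1)) :=
                (ENNReal.ofReal_mul (pow_nonneg hc0 _)).symm
            _ ≤ ENNReal.ofReal (K * ∏ i, (y i)⁻¹) := ENNReal.ofReal_le_ofReal hcK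
        · have hyY : y ∉ Y := hy
          rw [Set.indicator_of_notMem hyY]
          have hz : ∀ t : ℝ, S.indicator f (Φ t y) = 0 := fun t =>
            Set.indicator_of_notMem (fun hx => hy (hmem t y hx).1) _
          simp [hz]
    _ = ENNReal.ofReal K * ∏ i : {i : Fin r // ¬i = j}, ENNReal.ofReal (Real.log (U i)) := by
        have heq : ∀ y : {i : Fin r // ¬i = j} → ℝ,
            Set.indicator Y
              (fun y => ENNReal.ofReal (K * ∏ i, (y i)⁻¹)) y
            = ENNReal.ofReal K * ∏ i : {i : Fin r // ¬i = j},
                (Set.Icc (1 : ℝ) (U i)).indicator (fun s => ENNReal.ofReal s⁻¹) (y i) := by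
          intro y
          by_cases hy : ∀ i, y i ∈ Set.Icc 1 (U i)
          · have hyY : y ∈ Y := hy
            rw [Set.indicator_of_mem hyY, ENNReal.ofReal_mul hK,
              ENNReal.ofReal_prod_of_nonneg
                (fun i _ => inv_nonneg.mpr (le_trans zero_le_one (hy i).1))]
            congr 1
            exact Finset.prod_congr rfl fun i _ =>
              (Set.indicator_of_mem (hy i) (fun s => ENNReal.ofReal s⁻¹)).symm
          · have hyY : y ∉ Y := hy
            rw [Set.indicator_of_notMem hyY]
            push_neg at hy
            obtain ⟨i, hi⟩ := hy
            rw [Finset.prod_eq_zero (Finset.mem_univ i)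
              (Set.indicator_of_notMem hi (fun s => ENNReal.ofReal s⁻¹)), mul_zero]
        have hgm : ∀ i : {i : Fin r // ¬i = j},
            Measurable ((Set.Icc (1 : ℝ) (U i)).indicator (fun s => ENNReal.ofReal s⁻¹)) :=
          fun i => (ENNReal.measurable_ofReal.comp measurable_inv).indicator measurableSet_Icc
        simp_rw [heq]
        have hGm : Measurable fun y : {i : Fin r // ¬i = j} → ℝ =>
            ∏ i : {i : Fin r // ¬i = j},
              (Set.Icc (1 : ℝ) (U i)).indicator (fun s => ENNReal.ofReal s⁻¹) (y i) :=
          Finset.measurable_prod _ fun i _ => (hgm i).comp (measurable_pi_apply i)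
        rw [lintegral_const_mul _ hGm,
          lintegral_fintype_prod (fun i => (Set.Icc (1 : ℝ) (U i)).indicator
            (fun s => ENNReal.ofReal s⁻¹)) hgm]
        congr 1
        refine Finset.prod_congr rfl fun i _ => ?_
        rw [lintegral_indicator measurableSet_Icc, lint_inv (hU i)]

end Stmt13Aux

/-- Boundary-region integral estimate (key computation for Lemma `boundrylogBA`): with
`a i0 ≥ 1`, the integral of `∏ᵢ xᵢ^{aᵢ-1}` over the region where `1 ≤ x_{i0} < (log B)^A`,
`1 ≤ xᵢ ≤ B` for `i ≠ i0` and `∏_{i≠i0} xᵢ^{aᵢ} ≤ B / x_{i0}^{a_{i0}}` is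
`O_A(B (log B)^{r-2} log log B + (log B)^{r-1+A·a_{i0}})`. -/
theorem stmt_13 (r : ℕ) (hr : 2 ≤ r) (a : Fin r → ℕ) (i0 : Fin r) (ha : 1 ≤ a i0)
    (A : ℝ) (hA : 1 ≤ A) :
    ∃ C : ℝ, 0 < C ∧ ∀ B : ℝ, 3 < B →
      (∫ x in {x : Fin r → ℝ | 1 ≤ x i0 ∧ x i0 < (Real.log B) ^ A ∧
          (∀ i, i ≠ i0 → 1 ≤ x i ∧ x i ≤ B) ∧
          (∏ i ∈ Finset.univ.erase i0, x i ^ (a i)) ≤ B / x i0 ^ (a i0)},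
        ∏ i, x i ^ ((a i : ℝ) - 1))
      ≤ C * (B * (Real.log B) ^ (r - 2) * Real.log (Real.log B)
           + (Real.log B) ^ ((r : ℝ) - 1 + A * (a i0 : ℝ))) := by
  classical
  refine ⟨A, by linarith, ?_⟩
  intro B hB
  set L := Real.log B with hLdef
  have hL1 : 1 < L := by
    have h3 : (1 : ℝ) < Real.log 3 := by
      have he : Real.exp 1 < 3 := lt_trans Real.exp_one_lt_d9 (by norm_num)
      calc (1 : ℝ) = Real.log (Real.exp 1) := (Real.log_exp 1).symm
        _ < Real.log 3 := Real.log_lt_log (Real.exp_pos 1) he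
    exact lt_of_lt_of_le h3 (Real.log_le_log (by norm_num) hB.le)
  have hL0 : (0 : ℝ) < L := lt_trans one_pos hL1
  have hB0 : (0 : ℝ) < B := by linarith
  have hB1 : (1 : ℝ) ≤ B := by linarith
  have hLA1 : (1 : ℝ) ≤ L ^ A := Real.one_le_rpow hL1.le (by linarith)
  have hlogL0 : 0 ≤ Real.log L := Real.log_nonneg hL1.le
  set S : Set (Fin r → ℝ) := {x : Fin r → ℝ | 1 ≤ x i0 ∧ x i0 < L ^ A ∧
      (∀ i, i ≠ i0 → 1 ≤ x i ∧ x i ≤ B) ∧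
      (∏ i ∈ Finset.univ.erase i0, x i ^ (a i)) ≤ B / x i0 ^ (a i0)} with hSdef
  have hSm : MeasurableSet S := by
    have h1 : MeasurableSet {x : Fin r → ℝ | 1 ≤ x i0} :=
      measurableSet_le measurable_const (measurable_pi_apply i0)
    have h2 : MeasurableSet {x : Fin r → ℝ | x i0 < L ^ A} :=
      measurableSet_lt (measurable_pi_apply i0) measurable_const
    have h3 : MeasurableSet {x : Fin r → ℝ | ∀ i, i ≠ i0 → 1 ≤ x i ∧ x i ≤ B} := by
      have heq : {x : Fin r → ℝ | ∀ i, i ≠ i0 → 1 ≤ x i ∧ x i ≤ B}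
          = ⋂ i, ⋂ (_ : i ≠ i0), ({x : Fin r → ℝ | 1 ≤ x i} ∩ {x : Fin r → ℝ | x i ≤ B}) := by
        ext x
        simp [Set.mem_iInter, Set.mem_inter_iff]
      rw [heq]
      exact MeasurableSet.iInter fun i => MeasurableSet.iInter fun _ =>
        (measurableSet_le measurable_const (measurable_pi_apply i)).inter
          (measurableSet_le (measurable_pi_apply i) measurable_const)
    have h4 : MeasurableSet {x : Fin r → ℝ |
        (∏ i ∈ Finset.univ.erase i0, x i ^ (a i)) ≤ B / x i0 ^ (a i0)} :=
      measurableSet_le (Finset.measurable_prod _ fun i _ => (measurable_pi_apply i).pow_const _)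
        (measurable_const.div ((measurable_pi_apply i0).pow_const _))
    have hSeq : S = {x : Fin r → ℝ | 1 ≤ x i0} ∩ ({x : Fin r → ℝ | x i0 < L ^ A} ∩
        ({x : Fin r → ℝ | ∀ i, i ≠ i0 → 1 ≤ x i ∧ x i ≤ B} ∩
          {x : Fin r → ℝ | (∏ i ∈ Finset.univ.erase i0, x i ^ (a i)) ≤ B / x i0 ^ (a i0)})) := by
      ext x
      simp only [hSdef, Set.mem_setOf_eq, Set.mem_inter_iff]
    rw [hSeq]
    exact h1.inter (h2.inter (h3.inter h4))
  have hf_nonneg : ∀ x ∈ S, 0 ≤ ∏ i, x i ^ ((a i : ℝ) - 1) := by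
    intro x hx
    obtain ⟨h1, h2, h3, h4⟩ := hx
    refine Finset.prod_nonneg fun i _ => Real.rpow_nonneg ?_ _
    by_cases hi : i = i0
    · subst hi; exact le_trans zero_le_one h1
    · exact le_trans zero_le_one (h3 i hi).1
  have hfsm : AEStronglyMeasurable (fun x : Fin r → ℝ => ∏ i, x i ^ ((a i : ℝ) - 1))
      (volume.restrict S) :=
    (Finset.measurable_prod _ fun i _ =>
      (measurable_pi_apply i).pow measurable_const).aestronglyMeasurable
  rw [integral_eq_lintegral_of_nonneg_ae (ae_restrict_of_forall_mem hSm hf_nonneg) hfsm]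
  have hRHS0 : 0 ≤ A * (B * L ^ (r - 2) * Real.log L + L ^ ((r : ℝ) - 1 + A * (a i0 : ℝ))) := by
    have t1 : 0 ≤ B * L ^ (r - 2) * Real.log L :=
      mul_nonneg (mul_nonneg hB0.le (pow_nonneg hL0.le _)) hlogL0
    have t2 : 0 ≤ L ^ ((r : ℝ) - 1 + A * (a i0 : ℝ)) := Real.rpow_nonneg hL0.le _
    nlinarith
  refine ENNReal.toReal_le_of_le_ofReal hRHS0 ?_
  have t1nn : 0 ≤ B * L ^ (r - 2) * Real.log L :=
    mul_nonneg (mul_nonneg hB0.le (pow_nonneg hL0.le _)) hlogL0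
  have t2nn : 0 ≤ L ^ ((r : ℝ) - 1 + A * (a i0 : ℝ)) := Real.rpow_nonneg hL0.le _
  by_cases hz : ∀ i, i ≠ i0 → a i = 0
  · -- all other exponents vanish; take j := i0
    have hKnn : 0 ≤ (L ^ A) ^ (a i0) := pow_nonneg (Real.rpow_nonneg hL0.le A) _
    have key := Stmt13Aux.main_bound a hSm i0 (fun _ => B) (fun _ => hB1) hKnn
      (fun _ => L ^ A) ha ?_ ?_
    · refine le_trans key ?_
      have hcard : Fintype.card {i : Fin r // ¬i = i0} = r - 1 := by
        rw [Fintype.card_subtype_compl, Fintype.card_subtype_eq, Fintype.card_fin]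
      have hprod : (∏ _i : {i : Fin r // ¬i = i0}, ENNReal.ofReal (Real.log B))
          = ENNReal.ofReal L ^ (r - 1) := by
        rw [Finset.prod_const, Finset.card_univ, hcard, hLdef]
      rw [hprod, ← ENNReal.ofReal_pow hL0.le, ← ENNReal.ofReal_mul hKnn]
      refine ENNReal.ofReal_le_ofReal ?_
      have hexp : (L ^ A) ^ (a i0) * L ^ (r - 1) = L ^ ((r : ℝ) - 1 + A * (a i0 : ℝ)) := by
        rw [← Real.rpow_natCast (L ^ A) (a i0), ← Real.rpow_mul hL0.le,
          ← Real.rpow_natCast L (r - 1), ← Real.rpow_add hL0]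
        congr 1
        have : ((r - 1 : ℕ) : ℝ) = (r : ℝ) - 1 := by
          have : (1:ℕ) ≤ r := by omega
          push_cast [Nat.cast_sub this]
          ring
        rw [this]
        ring
      rw [hexp]
      nlinarith
    · -- hmem
      intro t y hx
      simp only [hSdef, Set.mem_setOf_eq] at hx
      obtain ⟨h1, h2, h3, h4⟩ := hx
      have h1' : (1 : ℝ) ≤ t := by simpa using h1
      have h2' : t < L ^ A := by simpa using h2
      constructor
      · intro i
        have h3i := h3 i.1 i.2
        constructor
        · simpa [i.2] using h3i.1
        · simpa [i.2] using h3i.2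
      · exact ⟨h1', h2'.le⟩
    · -- hcb
      intro y hy
      refine ⟨Real.rpow_nonneg hL0.le A, ?_⟩
      have hprod : (∏ i : {i : Fin r // ¬i = i0}, y i ^ ((a (i : Fin r) : ℝ) - 1))
          = ∏ i : {i : Fin r // ¬i = i0}, (y i)⁻¹ := by
        refine Finset.prod_congr rfl fun i _ => ?_
        rw [hz i.1 i.2]
        norm_num [Real.rpow_neg_one]
      rw [hprod]
  · -- there is j ≠ i0 with a j ≥ 1
    push_neg at hz
    obtain ⟨j, hji0, haj0⟩ := hz
    have haj : 1 ≤ a j := Nat.one_le_iff_ne_zero.mpr haj0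
    have hajR : ((a j : ℝ)) ≠ 0 := by exact_mod_cast haj0
    have hi0j : ¬ i0 = j := fun h => hji0 h.symm
    set U : {i : Fin r // ¬i = j} → ℝ := fun i => if (i : Fin r) = i0 then L ^ A else B
      with hUdef
    have hU : ∀ i, 1 ≤ U i := by
      intro i
      by_cases h : (i : Fin r) = i0 <;> simp [hUdef, h, hLA1, hB1]
    set c : ({i : Fin r // ¬i = j} → ℝ) → ℝ :=
      fun y => (B / ∏ i : {i : Fin r // ¬i = j}, y i ^ (a (i : Fin r))) ^ ((a j : ℝ))⁻¹
      with hcdef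
    have key := Stmt13Aux.main_bound a hSm j U hU hB0.le c haj ?_ ?_
    · refine le_trans key ?_
      set i0' : {i : Fin r // ¬i = j} := ⟨i0, hi0j⟩ with hi0'def
      have hcard : Fintype.card {i : Fin r // ¬i = j} = r - 1 := by
        rw [Fintype.card_subtype_compl, Fintype.card_subtype_eq, Fintype.card_fin]
      have hsplit2 : (∏ i : {i : Fin r // ¬i = j}, ENNReal.ofReal (Real.log (U i)))
          = ENNReal.ofReal (Real.log (L ^ A)) * ENNReal.ofReal L ^ (r - 2) := by
        rw [← Finset.mul_prod_erase Finset.univ _ (Finset.mem_univ i0')]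
        congr 1
        · congr 1
          simp [hUdef, hi0'def]
        · have herase : ∀ i ∈ Finset.univ.erase i0',
              ENNReal.ofReal (Real.log (U i)) = ENNReal.ofReal L := by
            intro i hi
            have hne : ¬((i : Fin r) = i0) := fun h =>
              (Finset.mem_erase.mp hi).1 (Subtype.ext (by rw [h, hi0'def]))
            simp [hUdef, hne, hLdef]
          rw [Finset.prod_congr rfl herase, Finset.prod_const,
            Finset.card_erase_of_mem (Finset.mem_univ i0'), Finset.card_univ, hcard]
          congr 1
      rw [hsplit2, Real.log_rpow hL0, ← ENNReal.ofReal_pow hL0.le,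
        ← ENNReal.ofReal_mul (by positivity), ← ENNReal.ofReal_mul hB0.le]
      refine ENNReal.ofReal_le_ofReal ?_
      nlinarith [mul_nonneg (mul_nonneg hB0.le (pow_nonneg hL0.le (r-2))) hlogL0]
    · -- hmem
      intro t y hx
      simp only [hSdef, Set.mem_setOf_eq] at hx
      obtain ⟨h1, h2, h3, h4⟩ := hx
      have hyY : ∀ i, y i ∈ Set.Icc 1 (U i) := by
        intro i
        by_cases hi : (i : Fin r) = i0
        · have hieq : (⟨i0, hi0j⟩ : {i : Fin r // ¬i = j}) = i := Subtype.ext hi.symm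
          have hv1 : (1 : ℝ) ≤ y i := by
            rw [← hieq]
            simpa [hi0j] using h1
          have hv2 : y i ≤ L ^ A := by
            rw [← hieq]
            have := h2
            simp only [hi0j, dif_neg, not_false_iff] at this
            exact this.le
          simp only [hUdef, if_pos hi]
          exact ⟨hv1, hv2⟩
        · have h3i := h3 i.1 hi
          simp only [hUdef, if_neg hi]
          exact ⟨by simpa [i.2] using h3i.1, by simpa [i.2] using h3i.2⟩
      refine ⟨hyY, ?_, ?_⟩
      · simpa using (h3 j hji0).1
      · -- t ≤ c y
        have h1t : (1 : ℝ) ≤ t := by simpa using (h3 j hji0).1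
        have ht0 : (0 : ℝ) ≤ t := le_trans zero_le_one h1t
        have hW : (0 : ℝ) < ∏ i : {i : Fin r // ¬i = j}, y i ^ (a (i : Fin r)) :=
          Finset.prod_pos fun i _ => pow_pos (lt_of_lt_of_le one_pos (hyY i).1) _
        have hxpos : (0 : ℝ) < (fun i => if h : i = j then t else y ⟨i, h⟩) i0 ^ (a i0) := by
          refine pow_pos ?_ _
          have := h1
          exact lt_of_lt_of_le one_pos this
        have hxall : (∏ i, (fun i' => if h : i' = j then t else y ⟨i', h⟩) i ^ (a i)) ≤ B := by
          rw [← Finset.mul_prod_erase Finset.univ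
            (fun i => (fun i' => if h : i' = j then t else y ⟨i', h⟩) i ^ (a i))
            (Finset.mem_univ i0)]
          calc _ ≤ (fun i' => if h : i' = j then t else y ⟨i', h⟩) i0 ^ (a i0)
                * (B / (fun i' => if h : i' = j then t else y ⟨i', h⟩) i0 ^ (a i0)) :=
              mul_le_mul_of_nonneg_left h4 hxpos.le
            _ = B := by
              rw [mul_comm, div_mul_cancel₀ _ (ne_of_gt hxpos)]
        have hsplit : (∏ i, (fun i' => if h : i' = j then t else y ⟨i', h⟩) i ^ (a i))
            = t ^ (a j) * ∏ i : {i : Fin r // ¬i = j}, y i ^ (a (i : Fin r)) := by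
          rw [← Finset.mul_prod_erase Finset.univ _ (Finset.mem_univ j)]
          congr 1
          · simp
          · rw [Finset.prod_subtype (p := fun i => ¬i = j) (Finset.univ.erase j)
              (fun x => by simp)
              (fun i => (fun i' => if h : i' = j then t else y ⟨i', h⟩) i ^ (a i))]
            exact Finset.prod_congr rfl fun i _ => by simp [i.2]
        have htpow : t ^ (a j) ≤ B / ∏ i : {i : Fin r // ¬i = j}, y i ^ (a (i : Fin r)) := by
          rw [le_div_iff₀ hW]
          rw [hsplit] at hxall
          exact hxall
        calc t = (t ^ (a j : ℕ) : ℝ) ^ ((a j : ℝ))⁻¹ := by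
              rw [← Real.rpow_natCast t (a j), ← Real.rpow_mul ht0,
                mul_inv_cancel₀ hajR, Real.rpow_one]
          _ ≤ c y := Real.rpow_le_rpow (pow_nonneg ht0 _) htpow (inv_nonneg.mpr (by positivity))
    · -- hcb
      intro y hy
      have hyi : ∀ i, (0 : ℝ) < y i := fun i => lt_of_lt_of_le one_pos (hy i).1
      have hW : (0 : ℝ) < ∏ i : {i : Fin r // ¬i = j}, y i ^ (a (i : Fin r)) :=
        Finset.prod_pos fun i _ => pow_pos (hyi i) _
      have hBW : (0 : ℝ) ≤ B / ∏ i : {i : Fin r // ¬i = j}, y i ^ (a (i : Fin r)) :=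
        div_nonneg hB0.le hW.le
      refine ⟨Real.rpow_nonneg hBW _, ?_⟩
      have hc : c y ^ (a j) = B / ∏ i : {i : Fin r // ¬i = j}, y i ^ (a (i : Fin r)) := by
        rw [hcdef]
        simp only
        rw [← Real.rpow_natCast _ (a j), ← Real.rpow_mul hBW,
          inv_mul_cancel₀ hajR, Real.rpow_one]
      have hprod : (∏ i : {i : Fin r // ¬i = j}, y i ^ ((a (i : Fin r) : ℝ) - 1))
          = (∏ i : {i : Fin r // ¬i = j}, y i ^ (a (i : Fin r)))
            * ∏ i : {i : Fin r // ¬i = j}, (y i)⁻¹ := by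
        rw [← Finset.prod_mul_distrib]
        refine Finset.prod_congr rfl fun i _ => ?_
        rw [show ((a (i : Fin r) : ℝ) - 1) = (a (i : Fin r) : ℝ) - 1 from rfl,
          Real.rpow_sub (hyi i), Real.rpow_one, Real.rpow_natCast, div_eq_mul_inv]
      rw [hc, hprod]
      refine le_of_eq ?_
      field_simp
end
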